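/- arXiv:1502.05570 — 10 statements merged into one kernel-verified Lean document; each statement's English description precedes it below -/
import Mathlib

section
/- For every natural number n ≥ 0 and every real x, the identity ((n+2)/(3(n+1)·4^n)) · Σ_{i=0}^{n} (3n−2i+2)·4^i·C(2i,i)·C(2n−2i,n−i)·(x−1/2)^{2i} = ((n+2)/(3π)) · ∫_0^π (1 − 4x(1−x)·sin²(φ/2))^n · (1 + 2cos²(φ/2)) dφ holds, where C(m,k) denotes the binomial coefficient. -/
open Real intervalIntegral

noncomputable def Wint (i j : ℕ) : ℝ := ∫ x in (0:ℝ)..π, sin x ^ (2*i) * cos x ^ (2*j)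

lemma prod_aux (i : ℕ) :
    (∏ t ∈ Finset.range i, ((2*(t:ℝ)+1)/(2*t+2))) = (2*i).factorial / (4^i * (i.factorial:ℝ)^2) := by
  induction i with
  | zero => simp
  | succ k ih =>
    rw [Finset.prod_range_succ, ih, div_mul_div_comm,
      div_eq_div_iff (by positivity) (by positivity),
      show 2*(k+1) = (2*k+1)+1 by ring]
    simp only [Nat.factorial_succ]
    push_cast
    ring

lemma Wint_zero (i : ℕ) :
    Wint i 0 * (4^i * (i.factorial:ℝ)^2) = π * (2*i).factorial := by
  have h := integral_sin_pow_even (n := i)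
  rw [Wint]
  simp only [Nat.mul_zero, pow_zero, mul_one]
  rw [h, prod_aux i, mul_assoc, div_mul_cancel₀]
  positivity

lemma Wint_rec (i j : ℕ) : Wint i (j+1) = Wint i j - Wint (i+1) j := by
  have hptw : ∀ x : ℝ, sin x ^ (2*i) * cos x ^ (2*(j+1))
      = sin x ^ (2*i) * cos x ^ (2*j) - sin x ^ (2*(i+1)) * cos x ^ (2*j) := by
    intro x
    have h := sin_sq_add_cos_sq x
    rw [show 2*(j+1) = 2*j + 2 by ring, show 2*(i+1) = 2*i + 2 by ring, pow_add, pow_add]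
    linear_combination (sin x ^ (2*i) * cos x ^ (2*j)) * h
  unfold Wint
  rw [intervalIntegral.integral_congr (g := fun x => sin x ^ (2*i) * cos x ^ (2*j) - sin x ^ (2*(i+1)) * cos x ^ (2*j)) (fun x _ => hptw x)]
  rw [intervalIntegral.integral_sub] <;> first
    | rfl
    | exact (Continuous.intervalIntegrable (by fun_prop) _ _)

lemma Wint_val (j i : ℕ) :
    Wint i j * (4^(i+j) * (i.factorial:ℝ) * j.factorial * (i+j).factorial)
      = π * (2*i).factorial * (2*j).factorial := by
  induction j generalizing i with
  | zero => simpa [sq, mul_assoc, mul_comm, mul_left_comm] using Wint_zero i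
  | succ j ih =>
    have h1 := ih i
    have h2 := ih (i+1)
    rw [Wint_rec i j]
    rw [show i+(j+1) = (i+j)+1 by omega, show 2*(j+1) = (2*j+1)+1 by omega]
    rw [show i+1+j = (i+j)+1 by omega, show 2*(i+1) = (2*i+1)+1 by omega] at h2
    simp only [Nat.factorial_succ] at h1 h2 ⊢
    have hip : ((i:ℝ)+1) ≠ 0 := by positivity
    apply mul_left_cancel₀ hip
    push_cast at h1 h2 ⊢
    linear_combination (4*((j:ℝ)+1)*((i:ℝ)+(j:ℝ)+1)*((i:ℝ)+1)) * h1 - (((j:ℝ)+1)) * h2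

lemma half_angle (n : ℕ) (x : ℝ) :
    (∫ φ in (0:ℝ)..π, (1 - 4*x*(1-x)*sin (φ/2)^2)^n * (1 + 2*cos (φ/2)^2))
      = ∫ θ in (0:ℝ)..π, (cos θ^2 + (2*x-1)^2 * sin θ^2)^n * (1 + 2*cos θ^2) := by
  set G : ℝ → ℝ := fun θ => (cos θ^2 + (2*x-1)^2 * sin θ^2)^n * (1 + 2*cos θ^2) with hGdef
  have hcont : Continuous G := by fun_prop
  have h1 : (∫ φ in (0:ℝ)..π, (1 - 4*x*(1-x)*sin (φ/2)^2)^n * (1 + 2*cos (φ/2)^2))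
      = ∫ φ in (0:ℝ)..π, G (φ/2) := by
    apply intervalIntegral.integral_congr
    intro φ _
    have h := sin_sq_add_cos_sq (φ/2)
    simp only [hGdef]
    have : 1 - 4*x*(1-x)*sin (φ/2)^2 = cos (φ/2)^2 + (2*x-1)^2 * sin (φ/2)^2 := by
      linear_combination (-1 : ℝ) * h
    rw [this]
  have h2 : (∫ φ in (0:ℝ)..π, G (φ/2)) = 2 * ∫ θ in (0:ℝ)..(π/2), G θ := by
    have := intervalIntegral.integral_comp_div (a := 0) (b := π) (f := G) (c := (2:ℝ)) two_ne_zero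
    simpa [zero_div] using this
  have h3 : (∫ θ in (π/2:ℝ)..π, G θ) = ∫ θ in (0:ℝ)..(π/2), G θ := by
    have hs := intervalIntegral.integral_comp_sub_left (a := (0:ℝ)) (b := π/2) G π
    rw [show π - π/2 = π/2 by ring, sub_zero] at hs
    rw [← hs]
    apply intervalIntegral.integral_congr
    intro θ _
    simp only [hGdef, cos_pi_sub, sin_pi_sub]
    ring
  have h4 : (∫ θ in (0:ℝ)..π, G θ)
      = (∫ θ in (0:ℝ)..(π/2), G θ) + ∫ θ in (π/2:ℝ)..π, G θ :=
    (intervalIntegral.integral_add_adjacent_intervals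
      (hcont.intervalIntegrable _ _) (hcont.intervalIntegrable _ _)).symm
  rw [h1, h2, h4, h3]; ring

lemma expand_int (n : ℕ) (x : ℝ) :
    (∫ θ in (0:ℝ)..π, (cos θ^2 + (2*x-1)^2 * sin θ^2)^n * (1 + 2*cos θ^2))
      = ∑ i ∈ Finset.range (n+1),
          (2*x-1)^(2*i) * (n.choose i : ℝ) * (Wint i (n-i) + 2 * Wint i (n-i+1)) := by
  have hpt : ∀ θ : ℝ, (cos θ^2 + (2*x-1)^2 * sin θ^2)^n * (1 + 2*cos θ^2)
      = ∑ i ∈ Finset.range (n+1), (2*x-1)^(2*i) * (n.choose i : ℝ) *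
          (sin θ^(2*i) * cos θ^(2*(n-i)) + 2 * (sin θ^(2*i) * cos θ^(2*(n-i+1)))) := by
    intro θ
    rw [add_comm (cos θ^2), add_pow, Finset.sum_mul]
    apply Finset.sum_congr rfl
    intro i hi
    simp only [mul_pow, pow_mul]
    ring
  rw [intervalIntegral.integral_congr (fun θ _ => hpt θ)]
  rw [intervalIntegral.integral_finset_sum]
  · apply Finset.sum_congr rfl
    intro i _
    rw [intervalIntegral.integral_const_mul, intervalIntegral.integral_add,
      intervalIntegral.integral_const_mul]
    · rfl
    · exact Continuous.intervalIntegrable (by fun_prop) _ _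
    · exact Continuous.intervalIntegrable (by fun_prop) _ _
  · intro i _
    exact Continuous.intervalIntegrable (by fun_prop) _ _

open Real in
theorem stmt0 (n : ℕ) (x : ℝ) :
    ((n : ℝ) + 2) / (3 * ((n : ℝ) + 1) * 4 ^ n) *
      ∑ i ∈ Finset.range (n + 1),
        (3 * (n : ℝ) - 2 * (i : ℝ) + 2) * 4 ^ i * ((2 * i).choose i : ℝ) *
          ((2 * n - 2 * i).choose (n - i) : ℝ) * (x - 1 / 2) ^ (2 * i) =
    ((n : ℝ) + 2) / (3 * Real.pi) *
      ∫ φ in (0 : ℝ)..Real.pi,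
        (1 - 4 * x * (1 - x) * Real.sin (φ / 2) ^ 2) ^ n *
          (1 + 2 * Real.cos (φ / 2) ^ 2) := by
  rw [half_angle, expand_int, Finset.mul_sum, Finset.mul_sum]
  apply Finset.sum_congr rfl
  intro i hi
  have hin : i ≤ n := Nat.lt_succ_iff.mp (Finset.mem_range.mp hi)
  obtain ⟨j, rfl⟩ : ∃ j, n = i + j := ⟨n - i, by omega⟩
  rw [show i + j - i = j by omega, show 2*(i+j) - 2*i = 2*j by omega]
  have hxy : (2*x-1)^(2*i) = 4^i * (x - 1/2)^(2*i) := by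
    rw [pow_mul, pow_mul, ← mul_pow]
    congr 1
    ring
  rw [hxy]
  -- factorial positivity facts
  have fi : ((i.factorial : ℝ)) ≠ 0 := Nat.cast_ne_zero.mpr i.factorial_ne_zero
  have fj : ((j.factorial : ℝ)) ≠ 0 := Nat.cast_ne_zero.mpr j.factorial_ne_zero
  have fij : (((i+j).factorial : ℝ)) ≠ 0 := Nat.cast_ne_zero.mpr (i+j).factorial_ne_zero
  have f2i : (((2*i).factorial : ℝ)) ≠ 0 := Nat.cast_ne_zero.mpr (2*i).factorial_ne_zero
  have f2j : (((2*j).factorial : ℝ)) ≠ 0 := Nat.cast_ne_zero.mpr (2*j).factorial_ne_zero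
  -- Wint values
  have hA := Wint_val j i
  have hB := Wint_val (j+1) i
  rw [show i+(j+1) = (i+j)+1 by omega, show 2*(j+1) = (2*j+1)+1 by omega] at hB
  simp only [Nat.factorial_succ] at hB
  have pfi : (0:ℝ) < i.factorial := by exact_mod_cast i.factorial_pos
  have pfj : (0:ℝ) < j.factorial := by exact_mod_cast j.factorial_pos
  have pfij : (0:ℝ) < (i+j).factorial := by exact_mod_cast (i+j).factorial_pos
  have hA' : Wint i j = π * (2*i).factorial * (2*j).factorial
      / (4^(i+j) * (i.factorial:ℝ) * j.factorial * (i+j).factorial) := by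
    rw [eq_div_iff (by positivity)]
    exact hA
  have hB' : Wint i (j+1) = π * (2*i).factorial * ((2*(j:ℝ)+2) * ((2*(j:ℝ)+1) * (2*j).factorial))
      / (4^(i+j+1) * (i.factorial:ℝ) * (((j:ℝ)+1) * j.factorial) * (((i:ℝ)+(j:ℝ)+1) * (i+j).factorial)) := by
    rw [eq_div_iff (by positivity)]
    push_cast at hB ⊢
    linear_combination hB
  rw [hA', hB', Nat.cast_choose ℝ (show i ≤ 2*i by omega), Nat.cast_choose ℝ (show j ≤ 2*j by omega),
    Nat.cast_choose ℝ (show i ≤ i+j by omega), show 2*i - i = i by omega, show 2*j - j = j by omega,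
    show i+j-i = j by omega]
  have hpi : (0:ℝ) < π := pi_pos
  push_cast
  field_simp
  ring
end

section
/- Let n ≥ 0 be a natural number. Define b_{n,j}(x) := C(n,j)·x^j·(1−x)^{n−j} and, for j = 0,…,n, the normalized hat function Λ_{n,j} on [0,1] by Λ_{n,j}(t) = (n+2)²·(t − j/(n+2)) for t ∈ [j/(n+2), (j+1)/(n+2)], Λ_{n,j}(t) = (n+2)²·((j+2)/(n+2) − t) for t ∈ [(j+1)/(n+2), (j+2)/(n+2)], and Λ_{n,j}(t) = 0 otherwise. Then for every x ∈ [0,1], ∫_0^1 ( Σ_{j=0}^{n} b_{n,j}(x)·Λ_{n,j}(t) )² dt = ((n+2)/(3(n+1)·4^n)) · Σ_{i=0}^{n} (3n−2i+2)·4^i·C(2i,i)·C(2n−2i,n−i)·(x−1/2)^{2i}. -/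
/-- The normalized hat function (degree-1 B-spline) with knots
`j/(n+2)`, `(j+1)/(n+2)`, `(j+2)/(n+2)`, normalized to have integral 1. -/
noncomputable def hatLambda (n j : ℕ) (t : ℝ) : ℝ :=
  if (j : ℝ) / ((n : ℝ) + 2) ≤ t ∧ t ≤ ((j : ℝ) + 1) / ((n : ℝ) + 2) then
    ((n : ℝ) + 2) ^ 2 * (t - (j : ℝ) / ((n : ℝ) + 2))
  else if ((j : ℝ) + 1) / ((n : ℝ) + 2) ≤ t ∧ t ≤ ((j : ℝ) + 2) / ((n : ℝ) + 2) then
    ((n : ℝ) + 2) ^ 2 * (((j : ℝ) + 2) / ((n : ℝ) + 2) - t)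
  else 0


open Finset

/-- Bernstein basis term -/
noncomputable def dB (n j : ℕ) (x : ℝ) : ℝ := (n.choose j : ℝ) * x ^ j * (1 - x) ^ (n - j)

noncomputable def SA (n : ℕ) (x : ℝ) : ℝ := ∑ j ∈ range (n+1), (dB n j x)^2
noncomputable def SB (n : ℕ) (x : ℝ) : ℝ := ∑ j ∈ range n, dB n j x * dB n (j+1) x

noncomputable def Ecf (n i : ℕ) : ℝ :=
  if i ≤ n then ((2*i).choose i : ℝ) * ((2*(n-i)).choose (n-i) : ℝ) else 0

noncomputable def SP (n : ℕ) (x : ℝ) : ℝ :=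
  ∑ i ∈ range (n+1), 4^i * Ecf n i * (x - 1/2)^(2*i)
noncomputable def SQ (n : ℕ) (x : ℝ) : ℝ :=
  ∑ i ∈ range (n+1), ((n:ℝ) - 2*i) * 4^i * Ecf n i * (x - 1/2)^(2*i)

/-- central binomial ratio -/
lemma RB (m : ℕ) : ((m:ℝ)+1) * ((2*m+2).choose (m+1) : ℝ)
    = 2*(2*(m:ℝ)+1) * ((2*m).choose m : ℝ) := by
  have h := Nat.succ_mul_centralBinom_succ m
  unfold Nat.centralBinom at h
  have h2 : 2*(m+1) = 2*m+2 := by omega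
  rw [h2] at h
  exact_mod_cast congrArg (Nat.cast : ℕ → ℝ) h

lemma Ecf_of_gt {n i : ℕ} (h : n < i) : Ecf n i = 0 := if_neg (by omega)

lemma cS (n i : ℕ) : ((n:ℝ)+1) * Ecf (n+1) (i+1)
    = 2*(2*(n:ℝ)-2*(i:ℝ)-1) * Ecf n (i+1) + 2*(2*(i:ℝ)+1) * Ecf n i := by
  rcases lt_trichotomy i n with h | h | h
  · -- interior : i+1 ≤ n
    obtain ⟨m, rfl⟩ : ∃ m, n = i+1+m := ⟨n-i-1, by omega⟩
    unfold Ecf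
    rw [if_pos (by omega), if_pos (by omega), if_pos (by omega)]
    rw [show i+1+m+1-(i+1) = m+1 from by omega, show i+1+m-(i+1) = m from by omega,
        show i+1+m-i = m+1 from by omega]
    have h1 := RB i
    have h2 := RB m
    have hi0 : ((i:ℝ)+1) ≠ 0 := by positivity
    have hm0 : ((m:ℝ)+1) ≠ 0 := by positivity
    have hX : ((2*i+2).choose (i+1) : ℝ) = 2*(2*(i:ℝ)+1) * ((2*i).choose i : ℝ) / ((i:ℝ)+1) := by
      rw [eq_div_iff hi0]; linarith [h1]
    have hY : ((2*m+2).choose (m+1) : ℝ) = 2*(2*(m:ℝ)+1) * ((2*m).choose m : ℝ) / ((m:ℝ)+1) := by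
      rw [eq_div_iff hm0]; linarith [h2]
    rw [show 2*(i+1) = 2*i+2 from by omega, show 2*(m+1) = 2*m+2 from by omega]
    rw [hX, hY]
    push_cast
    field_simp
    ring
  · -- i = n
    subst h
    unfold Ecf
    rw [if_pos (le_refl _), if_neg (by omega), if_pos (le_refl _)]
    rw [show i+1-(i+1) = 0 from by omega, show i-i = 0 from by omega]
    have h1 := RB i
    rw [show 2*(i+1) = 2*i+2 from by omega]
    simp only [Nat.mul_zero, Nat.choose_self, Nat.cast_one, Nat.choose_zero_right]
    push_cast
    nlinarith [h1]
  · -- n < i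
    rw [Ecf_of_gt (by omega), Ecf_of_gt (by omega), Ecf_of_gt (by omega)]
    ring

lemma c0 (n : ℕ) : ((n:ℝ)+1) * Ecf (n+1) 0 = 2*(2*(n:ℝ)+1) * Ecf n 0 := by
  unfold Ecf
  rw [if_pos (by omega), if_pos (by omega)]
  simp only [Nat.sub_zero, Nat.mul_zero, Nat.choose_self, Nat.choose_zero_right, Nat.cast_one]
  have h1 := RB n
  rw [show 2*(n+1) = 2*n+2 from by omega]
  push_cast
  nlinarith [h1]

lemma eS (n i : ℕ) : ((n:ℝ)-2*(i:ℝ)-1) * Ecf (n+1) (i+1)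
    = (4*(n:ℝ)-4*(i:ℝ)-2) * Ecf n (i+1) - (4*(i:ℝ)+2) * Ecf n i := by
  rcases lt_trichotomy i n with h | h | h
  · obtain ⟨m, rfl⟩ : ∃ m, n = i+1+m := ⟨n-i-1, by omega⟩
    unfold Ecf
    rw [if_pos (by omega), if_pos (by omega), if_pos (by omega)]
    rw [show i+1+m+1-(i+1) = m+1 from by omega, show i+1+m-(i+1) = m from by omega,
        show i+1+m-i = m+1 from by omega]
    have hi0 : ((i:ℝ)+1) ≠ 0 := by positivity
    have hm0 : ((m:ℝ)+1) ≠ 0 := by positivity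
    have hX : ((2*i+2).choose (i+1) : ℝ) = 2*(2*(i:ℝ)+1) * ((2*i).choose i : ℝ) / ((i:ℝ)+1) := by
      rw [eq_div_iff hi0]; linarith [RB i]
    have hY : ((2*m+2).choose (m+1) : ℝ) = 2*(2*(m:ℝ)+1) * ((2*m).choose m : ℝ) / ((m:ℝ)+1) := by
      rw [eq_div_iff hm0]; linarith [RB m]
    rw [show 2*(i+1) = 2*i+2 from by omega, show 2*(m+1) = 2*m+2 from by omega]
    rw [hX, hY]
    push_cast
    field_simp
    ring
  · subst h
    unfold Ecf
    rw [if_pos (le_refl _), if_neg (by omega), if_pos (le_refl _)]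
    rw [show i+1-(i+1) = 0 from by omega, show i-i = 0 from by omega]
    have h1 := RB i
    rw [show 2*(i+1) = 2*i+2 from by omega]
    simp only [Nat.mul_zero, Nat.choose_self, Nat.cast_one, Nat.choose_zero_right]
    push_cast
    nlinarith [h1]
  · rw [Ecf_of_gt (by omega), Ecf_of_gt (by omega), Ecf_of_gt (by omega)]
    ring

lemma sum_shift (f : ℕ → ℝ) (n : ℕ) (h : f (n+1) = 0) :
    ∑ i ∈ range (n+1), f i = (∑ i ∈ range (n+1), f (i+1)) + f 0 := by
  have h2 := Finset.sum_range_succ' f (n+1)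
  rw [Finset.sum_range_succ, h, add_zero] at h2
  exact h2

lemma PL3 (n : ℕ) (x : ℝ) :
    ((n:ℝ)+1) * SP (n+1) x
      = 4*((n:ℝ)+1)*(x^2+(1-x)^2) * SP n x + 8*(x*(1-x)) * SQ n x := by
  have e1 : SP (n+1) x
      = (∑ i ∈ range (n+1), 4^(i+1) * Ecf (n+1) (i+1) * (x-1/2)^(2*(i+1)))
        + 4^0 * Ecf (n+1) 0 * (x-1/2)^(2*0) := by
    unfold SP; exact Finset.sum_range_succ' _ (n+1)
  have e5 : ((n:ℝ)+1) * SP (n+1) x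
      = (∑ i ∈ range (n+1), ((n:ℝ)+1) * (4^(i+1) * Ecf (n+1) (i+1) * (x-1/2)^(2*(i+1))))
        + ((n:ℝ)+1) * (4^0 * Ecf (n+1) 0 * (x-1/2)^(2*0)) := by
    rw [e1, mul_add, Finset.mul_sum]
  have e2 : (∑ i ∈ range (n+1), ((n:ℝ)+1) * (4^(i+1) * Ecf (n+1) (i+1) * (x-1/2)^(2*(i+1))))
      = ∑ i ∈ range (n+1), (2*(2*(n:ℝ)-2*(i:ℝ)-1) * (4^(i+1) * Ecf n (i+1) * (x-1/2)^(2*(i+1)))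
          + 2*(2*(i:ℝ)+1) * (4^(i+1) * Ecf n i * (x-1/2)^(2*(i+1)))) :=
    Finset.sum_congr rfl (fun i _ => by
      linear_combination ((4:ℝ)^(i+1) * (x-1/2)^(2*(i+1))) * cS n i)
  have e2' : (∑ i ∈ range (n+1), (2*(2*(n:ℝ)-2*(i:ℝ)-1) * (4^(i+1) * Ecf n (i+1) * (x-1/2)^(2*(i+1)))
          + 2*(2*(i:ℝ)+1) * (4^(i+1) * Ecf n i * (x-1/2)^(2*(i+1)))))
      = (∑ i ∈ range (n+1), 2*(2*(n:ℝ)-2*(i:ℝ)-1) * (4^(i+1) * Ecf n (i+1) * (x-1/2)^(2*(i+1))))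
        + ∑ i ∈ range (n+1), 2*(2*(i:ℝ)+1) * (4^(i+1) * Ecf n i * (x-1/2)^(2*(i+1))) :=
    Finset.sum_add_distrib
  have r1 : 4*((n:ℝ)+1)*(x^2+(1-x)^2) * SP n x + 8*(x*(1-x)) * SQ n x
      = (∑ i ∈ range (n+1), 2*(2*(n:ℝ)+1-2*(i:ℝ)) * (4^i * Ecf n i * (x-1/2)^(2*i)))
        + ∑ i ∈ range (n+1), 2*(2*(i:ℝ)+1) * (4^(i+1) * Ecf n i * (x-1/2)^(2*(i+1))) := by
    unfold SP SQ
    rw [Finset.mul_sum, Finset.mul_sum, ← Finset.sum_add_distrib, ← Finset.sum_add_distrib]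
    exact Finset.sum_congr rfl (fun i _ => by push_cast; ring)
  have e6 : (∑ i ∈ range (n+1), 2*(2*(n:ℝ)+1-2*(i:ℝ)) * (4^i * Ecf n i * (x-1/2)^(2*i)))
      = (∑ i ∈ range (n+1), 2*(2*(n:ℝ)-2*(i:ℝ)-1) * (4^(i+1) * Ecf n (i+1) * (x-1/2)^(2*(i+1))))
        + 2*(2*(n:ℝ)+1-2*((0:ℕ):ℝ)) * (4^0 * Ecf n 0 * (x-1/2)^(2*0)) := by
    rw [sum_shift (fun i => 2*(2*(n:ℝ)+1-2*(i:ℝ)) * (4^i * Ecf n i * (x-1/2)^(2*i))) n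
      (by simp [Ecf_of_gt (Nat.lt_succ_self n)])]
    congr 1
    exact Finset.sum_congr rfl (fun i _ => by push_cast; ring)
  have hc0 : ((n:ℝ)+1) * (4^0 * Ecf (n+1) 0 * (x-1/2)^(2*0))
      = 2*(2*(n:ℝ)+1-2*((0:ℕ):ℝ)) * (4^0 * Ecf n 0 * (x-1/2)^(2*0)) := by
    linear_combination c0 n
  linarith [e5, e2, e2', r1, e6, hc0]

lemma PL4 (n : ℕ) (x : ℝ) :
    SQ (n+1) x
      = 4*(x^2+(1-x)^2) * SQ n x + 8*((n:ℝ)+1)*(x*(1-x)) * SP n x := by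
  have e1 : SQ (n+1) x
      = (∑ i ∈ range (n+1),
          (((n+1:ℕ):ℝ) - 2*((i+1:ℕ):ℝ)) * 4^(i+1) * Ecf (n+1) (i+1) * (x-1/2)^(2*(i+1)))
        + (((n+1:ℕ):ℝ) - 2*((0:ℕ):ℝ)) * 4^0 * Ecf (n+1) 0 * (x-1/2)^(2*0) := by
    unfold SQ; exact Finset.sum_range_succ' _ (n+1)
  have e2 : (∑ i ∈ range (n+1),
          (((n+1:ℕ):ℝ) - 2*((i+1:ℕ):ℝ)) * 4^(i+1) * Ecf (n+1) (i+1) * (x-1/2)^(2*(i+1)))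
      = ∑ i ∈ range (n+1), (2*(2*(n:ℝ)-2*(i:ℝ)-1) * (4^(i+1) * Ecf n (i+1) * (x-1/2)^(2*(i+1)))
          + (-(4*(i:ℝ)+2)) * (4^(i+1) * Ecf n i * (x-1/2)^(2*(i+1)))) :=
    Finset.sum_congr rfl (fun i _ => by
      push_cast
      linear_combination ((4:ℝ)^(i+1) * (x-1/2)^(2*(i+1))) * eS n i)
  have e2' : (∑ i ∈ range (n+1), (2*(2*(n:ℝ)-2*(i:ℝ)-1) * (4^(i+1) * Ecf n (i+1) * (x-1/2)^(2*(i+1)))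
          + (-(4*(i:ℝ)+2)) * (4^(i+1) * Ecf n i * (x-1/2)^(2*(i+1)))))
      = (∑ i ∈ range (n+1), 2*(2*(n:ℝ)-2*(i:ℝ)-1) * (4^(i+1) * Ecf n (i+1) * (x-1/2)^(2*(i+1))))
        + ∑ i ∈ range (n+1), (-(4*(i:ℝ)+2)) * (4^(i+1) * Ecf n i * (x-1/2)^(2*(i+1))) :=
    Finset.sum_add_distrib
  have r1 : 4*(x^2+(1-x)^2) * SQ n x + 8*((n:ℝ)+1)*(x*(1-x)) * SP n x
      = (∑ i ∈ range (n+1), 2*(2*(n:ℝ)+1-2*(i:ℝ)) * (4^i * Ecf n i * (x-1/2)^(2*i)))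
        + ∑ i ∈ range (n+1), (-(4*(i:ℝ)+2)) * (4^(i+1) * Ecf n i * (x-1/2)^(2*(i+1))) := by
    unfold SP SQ
    rw [Finset.mul_sum, Finset.mul_sum, ← Finset.sum_add_distrib, ← Finset.sum_add_distrib]
    exact Finset.sum_congr rfl (fun i _ => by push_cast; ring)
  have e6 : (∑ i ∈ range (n+1), 2*(2*(n:ℝ)+1-2*(i:ℝ)) * (4^i * Ecf n i * (x-1/2)^(2*i)))
      = (∑ i ∈ range (n+1), 2*(2*(n:ℝ)-2*(i:ℝ)-1) * (4^(i+1) * Ecf n (i+1) * (x-1/2)^(2*(i+1))))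
        + 2*(2*(n:ℝ)+1-2*((0:ℕ):ℝ)) * (4^0 * Ecf n 0 * (x-1/2)^(2*0)) := by
    rw [sum_shift (fun i => 2*(2*(n:ℝ)+1-2*(i:ℝ)) * (4^i * Ecf n i * (x-1/2)^(2*i))) n
      (by simp [Ecf_of_gt (Nat.lt_succ_self n)])]
    congr 1
    exact Finset.sum_congr rfl (fun i _ => by push_cast; ring)
  have hc0 : (((n+1:ℕ):ℝ) - 2*((0:ℕ):ℝ)) * 4^0 * Ecf (n+1) 0 * (x-1/2)^(2*0)
      = 2*(2*(n:ℝ)+1-2*((0:ℕ):ℝ)) * (4^0 * Ecf n 0 * (x-1/2)^(2*0)) := by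
    push_cast
    linear_combination c0 n
  linarith [e1, e2, e2', r1, e6, hc0]

lemma chooseId (n j : ℕ) :
    ((n:ℝ)+2) * ((n+1).choose (j+1) : ℝ) * ((n+1).choose (j+2) : ℝ)
      = ((n:ℝ)+1) * ((n.choose j : ℝ) * (n.choose (j+1) : ℝ)
          + (n.choose (j+1) : ℝ) * (n.choose (j+2) : ℝ)
          + 2 * (n.choose (j+1) : ℝ)^2) := by
  have h1 : ((n:ℝ)+2) * ((n+1).choose (j+1) : ℝ) = ((n+2).choose (j+2) : ℝ) * ((j:ℝ)+2) := by
    have := Nat.add_one_mul_choose_eq (n+1) (j+1)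
    exact_mod_cast congrArg (Nat.cast : ℕ → ℝ) this
  have h2 : ((n:ℝ)+1) * (n.choose (j+1) : ℝ) = ((n+1).choose (j+2) : ℝ) * ((j:ℝ)+2) := by
    have := Nat.add_one_mul_choose_eq n (j+1)
    exact_mod_cast congrArg (Nat.cast : ℕ → ℝ) this
  have h3 : ((n+1).choose (j+1) : ℝ) = (n.choose j : ℝ) + (n.choose (j+1) : ℝ) := by
    exact_mod_cast congrArg (Nat.cast : ℕ → ℝ) (Nat.choose_succ_succ n j)
  have h4 : ((n+1).choose (j+2) : ℝ) = (n.choose (j+1) : ℝ) + (n.choose (j+2) : ℝ) := by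
    exact_mod_cast congrArg (Nat.cast : ℕ → ℝ) (Nat.choose_succ_succ n (j+1))
  have h5 : ((n+2).choose (j+2) : ℝ) = ((n+1).choose (j+1) : ℝ) + ((n+1).choose (j+2) : ℝ) := by
    exact_mod_cast congrArg (Nat.cast : ℕ → ℝ) (Nat.choose_succ_succ (n+1) (j+1))
  linear_combination ((n+1).choose (j+2) : ℝ) * h1 - ((n+2).choose (j+2) : ℝ) * h2
    + ((n:ℝ)+1) * (n.choose (j+1) : ℝ) * (h3 + h4 + h5)

lemma PT1 (n j : ℕ) (x : ℝ) (hj : j ≤ n) :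
    (dB (n+1) (j+1) x)^2
      = x^2*(dB n j x)^2 + 2*(x*(1-x))*(dB n j x * dB n (j+1) x)
        + (1-x)^2*(dB n (j+1) x)^2 := by
  rcases Nat.lt_or_ge j n with h | h
  · obtain ⟨m, rfl⟩ : ∃ m, n = j+1+m := ⟨n-j-1, by omega⟩
    unfold dB
    rw [show j+1+m+1-(j+1) = m+1 from by omega, show j+1+m-j = m+1 from by omega,
        show j+1+m-(j+1) = m from by omega]
    have h3 : (((j+1+m)+1).choose (j+1) : ℝ)
        = ((j+1+m).choose j : ℝ) + ((j+1+m).choose (j+1) : ℝ) := by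
      exact_mod_cast congrArg (Nat.cast : ℕ → ℝ) (Nat.choose_succ_succ (j+1+m) j)
    rw [h3]; ring
  · have hjn : j = n := le_antisymm hj h
    subst hjn
    unfold dB
    simp only [Nat.choose_succ_self, Nat.choose_self, Nat.sub_self, Nat.cast_zero,
      Nat.cast_one, pow_zero]
    ring

lemma PT2 (n j : ℕ) (x : ℝ) (hj : j + 1 ≤ n) :
    ((n:ℝ)+2) * (dB (n+1) (j+1) x * dB (n+1) (j+2) x)
      = ((n:ℝ)+1) * (x^2 * (dB n j x * dB n (j+1) x)
          + (1-x)^2 * (dB n (j+1) x * dB n (j+2) x)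
          + 2*(x*(1-x)) * (dB n (j+1) x)^2) := by
  rcases Nat.lt_or_ge (j+1) n with h | h
  · obtain ⟨m, rfl⟩ : ∃ m, n = j+2+m := ⟨n-j-2, by omega⟩
    unfold dB
    rw [show j+2+m+1-(j+1) = m+2 from by omega, show j+2+m+1-(j+2) = m+1 from by omega,
        show j+2+m-j = m+2 from by omega, show j+2+m-(j+1) = m+1 from by omega,
        show j+2+m-(j+2) = m from by omega]
    have hid := chooseId (j+2+m) j
    linear_combination (x^(2*j+3) * (1-x)^(2*m+3)) * hid
  · have hjn : j + 1 = n := le_antisymm hj h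
    obtain rfl : n = j+1 := hjn.symm
    unfold dB
    rw [show j+1+1-(j+1) = 1 from by omega, show j+1+1-(j+2) = 0 from by omega,
        show j+1-j = 1 from by omega, show j+1-(j+1) = 0 from by omega,
        show j+2 = (j+1)+1 from rfl, Nat.choose_succ_self]
    have c1 : ((j+1+1).choose (j+1) : ℝ) = (j:ℝ)+2 := by
      exact_mod_cast congrArg (Nat.cast : ℕ → ℝ) (Nat.choose_succ_self_right (j+1))
    have c2 : ((j+1).choose j : ℝ) = (j:ℝ)+1 := by
      exact_mod_cast congrArg (Nat.cast : ℕ → ℝ) (Nat.choose_succ_self_right j)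
    rw [c1, c2]
    simp only [Nat.choose_self, Nat.cast_one, Nat.cast_zero, pow_zero, pow_one]
    push_cast
    ring

lemma dB_top (n : ℕ) (x : ℝ) : dB n (n+1) x = 0 := by
  unfold dB; simp [Nat.choose_succ_self]

lemma sum_unshift (f g : ℕ → ℝ) (n : ℕ) (hfg : ∀ j, g j = f (j+1)) :
    (∑ j ∈ range n, g j) + f 0 = ∑ j ∈ range (n+1), f j := by
  have h3 : ∑ j ∈ range n, g j = ∑ j ∈ range n, f (j+1) :=
    Finset.sum_congr rfl (fun j _ => hfg j)
  rw [h3]; exact (Finset.sum_range_succ' f n).symm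

lemma PL1 (n : ℕ) (x : ℝ) :
    SA (n+1) x = (x^2+(1-x)^2) * SA n x + 2*(x*(1-x)) * SB n x := by
  have e1 : SA (n+1) x
      = (∑ j ∈ range (n+1), (dB (n+1) (j+1) x)^2) + (dB (n+1) 0 x)^2 := by
    unfold SA; exact Finset.sum_range_succ' _ (n+1)
  have e2 : (∑ j ∈ range (n+1), (dB (n+1) (j+1) x)^2)
      = ∑ j ∈ range (n+1), (x^2*(dB n j x)^2 + 2*(x*(1-x))*(dB n j x * dB n (j+1) x)
          + (1-x)^2*(dB n (j+1) x)^2) :=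
    Finset.sum_congr rfl (fun j hj => PT1 n j x (Finset.mem_range_succ_iff.mp hj))
  have e2' : ∑ j ∈ range (n+1), (x^2*(dB n j x)^2 + 2*(x*(1-x))*(dB n j x * dB n (j+1) x)
          + (1-x)^2*(dB n (j+1) x)^2)
      = ((∑ j ∈ range (n+1), x^2*(dB n j x)^2)
        + ∑ j ∈ range (n+1), 2*(x*(1-x))*(dB n j x * dB n (j+1) x))
        + ∑ j ∈ range (n+1), (1-x)^2*(dB n (j+1) x)^2 := by
    rw [Finset.sum_add_distrib, Finset.sum_add_distrib]
  have e3 : (∑ j ∈ range (n+1), x^2*(dB n j x)^2) = x^2 * SA n x := by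
    unfold SA; rw [Finset.mul_sum]
  have e4 : (∑ j ∈ range (n+1), 2*(x*(1-x))*(dB n j x * dB n (j+1) x))
      = 2*(x*(1-x)) * SB n x := by
    rw [Finset.sum_range_succ, dB_top n x]
    unfold SB; rw [Finset.mul_sum, mul_zero, mul_zero, add_zero]
  have e5 : (∑ j ∈ range (n+1), (1-x)^2*(dB n (j+1) x)^2) + (1-x)^2*(dB n 0 x)^2
      = ∑ j ∈ range (n+2), (1-x)^2*(dB n j x)^2 := by
    have h := sum_unshift (fun j => (1-x)^2*(dB n j x)^2)
      (fun j => (1-x)^2*(dB n (j+1) x)^2) (n+1) (fun j => rfl)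
    beta_reduce at h
    exact h
  have e5' : (∑ j ∈ range (n+2), (1-x)^2*(dB n j x)^2) = (1-x)^2 * SA n x := by
    rw [Finset.sum_range_succ, dB_top n x]
    unfold SA; rw [Finset.mul_sum]
    simp
  have e0 : (dB (n+1) 0 x)^2 = (1-x)^2*(dB n 0 x)^2 := by
    unfold dB
    simp only [Nat.choose_zero_right, Nat.sub_zero, Nat.cast_one]
    ring
  linarith [e1, e2, e2', e3, e4, e5, e5', e0]

lemma PL2 (n : ℕ) (x : ℝ) :
    ((n:ℝ)+2) * SB (n+1) x
      = ((n:ℝ)+1)*(x^2+(1-x)^2) * SB n x + 2*((n:ℝ)+1)*(x*(1-x)) * SA n x := by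
  have e1 : SB (n+1) x
      = (∑ j ∈ range n, dB (n+1) (j+1) x * dB (n+1) (j+2) x)
        + dB (n+1) 0 x * dB (n+1) 1 x := by
    unfold SB; exact Finset.sum_range_succ' _ n
  have e5 : ((n:ℝ)+2) * SB (n+1) x
      = (∑ j ∈ range n, ((n:ℝ)+2) * (dB (n+1) (j+1) x * dB (n+1) (j+2) x))
        + ((n:ℝ)+2) * (dB (n+1) 0 x * dB (n+1) 1 x) := by
    rw [e1, mul_add, Finset.mul_sum]
  have e2 : (∑ j ∈ range n, ((n:ℝ)+2) * (dB (n+1) (j+1) x * dB (n+1) (j+2) x))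
      = ∑ j ∈ range n, ((((n:ℝ)+1)*x^2)*(dB n j x * dB n (j+1) x)
          + ((((n:ℝ)+1)*(1-x)^2)*(dB n (j+1) x * dB n (j+2) x)
          + (2*((n:ℝ)+1)*(x*(1-x)))*(dB n (j+1) x)^2)) :=
    Finset.sum_congr rfl (fun j hj => by
      linear_combination PT2 n j x (Finset.mem_range.mp hj))
  have e2' : ∑ j ∈ range n, ((((n:ℝ)+1)*x^2)*(dB n j x * dB n (j+1) x)
          + ((((n:ℝ)+1)*(1-x)^2)*(dB n (j+1) x * dB n (j+2) x)
          + (2*((n:ℝ)+1)*(x*(1-x)))*(dB n (j+1) x)^2))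
      = (∑ j ∈ range n, (((n:ℝ)+1)*x^2)*(dB n j x * dB n (j+1) x))
        + ((∑ j ∈ range n, (((n:ℝ)+1)*(1-x)^2)*(dB n (j+1) x * dB n (j+2) x))
        + ∑ j ∈ range n, (2*((n:ℝ)+1)*(x*(1-x)))*(dB n (j+1) x)^2) := by
    rw [Finset.sum_add_distrib, Finset.sum_add_distrib]
  have e3 : (∑ j ∈ range n, (((n:ℝ)+1)*x^2)*(dB n j x * dB n (j+1) x))
      = (((n:ℝ)+1)*x^2) * SB n x := by
    unfold SB; rw [Finset.mul_sum]
  have e4 : (∑ j ∈ range n, (((n:ℝ)+1)*(1-x)^2)*(dB n (j+1) x * dB n (j+2) x))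
        + (((n:ℝ)+1)*(1-x)^2)*(dB n 0 x * dB n 1 x)
      = ∑ j ∈ range (n+1), (((n:ℝ)+1)*(1-x)^2)*(dB n j x * dB n (j+1) x) := by
    have h := sum_unshift (fun j => (((n:ℝ)+1)*(1-x)^2)*(dB n j x * dB n (j+1) x))
      (fun j => (((n:ℝ)+1)*(1-x)^2)*(dB n (j+1) x * dB n (j+2) x)) n (fun j => rfl)
    beta_reduce at h
    exact h
  have e4' : (∑ j ∈ range (n+1), (((n:ℝ)+1)*(1-x)^2)*(dB n j x * dB n (j+1) x))
      = (((n:ℝ)+1)*(1-x)^2) * SB n x := by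
    rw [Finset.sum_range_succ, dB_top n x]
    unfold SB; rw [Finset.mul_sum, mul_zero, mul_zero, add_zero]
  have e7 : (∑ j ∈ range n, (2*((n:ℝ)+1)*(x*(1-x)))*(dB n (j+1) x)^2)
        + (2*((n:ℝ)+1)*(x*(1-x)))*(dB n 0 x)^2
      = ∑ j ∈ range (n+1), (2*((n:ℝ)+1)*(x*(1-x)))*(dB n j x)^2 := by
    have h := sum_unshift (fun j => (2*((n:ℝ)+1)*(x*(1-x)))*(dB n j x)^2)
      (fun j => (2*((n:ℝ)+1)*(x*(1-x)))*(dB n (j+1) x)^2) n (fun j => rfl)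
    beta_reduce at h
    exact h
  have e7' : (∑ j ∈ range (n+1), (2*((n:ℝ)+1)*(x*(1-x)))*(dB n j x)^2)
      = (2*((n:ℝ)+1)*(x*(1-x))) * SA n x := by
    unfold SA; rw [Finset.mul_sum]
  have e0 : ((n:ℝ)+2) * (dB (n+1) 0 x * dB (n+1) 1 x)
      = (((n:ℝ)+1)*(1-x)^2)*(dB n 0 x * dB n 1 x)
        + (2*((n:ℝ)+1)*(x*(1-x)))*(dB n 0 x)^2 := by
    unfold dB
    simp only [Nat.choose_zero_right, Nat.sub_zero, Nat.cast_one, Nat.choose_one_right]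
    rw [show n+1-1 = n from by omega]
    rcases Nat.eq_zero_or_pos n with rfl | hn
    · norm_num; ring
    · obtain ⟨m, rfl⟩ : ∃ m, n = m+1 := ⟨n-1, by omega⟩
      rw [show m+1-1 = m from by omega]
      push_cast
      ring
  linarith [e5, e2, e2', e3, e4, e4', e7, e7', e0]

lemma G12 (n : ℕ) (x : ℝ) :
    (4:ℝ)^n * SA n x = SP n x ∧ ((n:ℝ)+1) * 4^n * SB n x = SQ n x := by
  induction n with
  | zero =>
    constructor
    · unfold SA SP dB Ecf
      norm_num
    · unfold SB SQ Ecf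
      norm_num
  | succ n ih =>
    obtain ⟨hA, hB⟩ := ih
    constructor
    · -- 4^(n+1) * SA (n+1) x = SP (n+1) x
      have hne : ((n:ℝ)+1) ≠ 0 := by positivity
      apply mul_left_cancel₀ hne
      have h1 := PL1 n x
      have h3 := PL3 n x
      push_cast
      linear_combination ((n:ℝ)+1) * 4^(n+1) * h1 + 4*((n:ℝ)+1)*(x^2+(1-x)^2) * hA
        + 8*(x*(1-x)) * hB - h3
    · -- ((n+1)+1) * 4^(n+1) * SB (n+1) x = SQ (n+1) x
      have h2 := PL2 n x
      have h4 := PL4 n x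
      push_cast
      linear_combination (4:ℝ)^(n+1) * h2 + 4*(x^2+(1-x)^2) * hB
        + 8*((n:ℝ)+1)*(x*(1-x)) * hA - h4

lemma KEY (n : ℕ) (x : ℝ) :
    ((n:ℝ)+1) * 4^n * (2 * SA n x + SB n x)
      = ∑ i ∈ range (n+1), (3*(n:ℝ) - 2*(i:ℝ) + 2) * 4^i * ((2*i).choose i : ℝ)
          * ((2*n-2*i).choose (n-i) : ℝ) * (x-1/2)^(2*i) := by
  obtain ⟨hA, hB⟩ := G12 n x
  have h : ((n:ℝ)+1) * 4^n * (2 * SA n x + SB n x)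
      = 2*((n:ℝ)+1) * SP n x + SQ n x := by
    linear_combination 2*((n:ℝ)+1)*hA + hB
  rw [h]
  unfold SP SQ
  rw [Finset.mul_sum, ← Finset.sum_add_distrib]
  exact Finset.sum_congr rfl (fun i hi => by
    have hin : i ≤ n := Finset.mem_range_succ_iff.mp hi
    unfold Ecf
    rw [if_pos hin, show 2*(n-i) = 2*n-2*i from by omega]
    ring)

lemma hat_piece (n j k : ℕ) {t : ℝ}
    (h1 : (k:ℝ)/((n:ℝ)+2) ≤ t) (h2 : t ≤ ((k:ℝ)+1)/((n:ℝ)+2)) :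
    hatLambda n j t
      = (if j = k then ((n:ℝ)+2)^2*(t - (k:ℝ)/((n:ℝ)+2)) else 0)
        + (if j+1 = k then ((n:ℝ)+2)^2*(((k:ℝ)+1)/((n:ℝ)+2) - t) else 0) := by
  have hd : (0:ℝ) < (n:ℝ)+2 := by positivity
  have K1 : (k:ℝ) ≤ t * ((n:ℝ)+2) := (div_le_iff₀ hd).mp h1
  have K2 : t * ((n:ℝ)+2) ≤ (k:ℝ)+1 := (le_div_iff₀ hd).mp h2
  unfold hatLambda
  rcases lt_trichotomy j k with hjk | hjk | hjk
  · -- j < k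
    rw [if_neg (by omega : ¬ j = k)]
    by_cases hq : j+1 = k
    · -- j + 1 = k
      rw [if_pos hq]
      have hqr : (j:ℝ)+1 = (k:ℝ) := by exact_mod_cast congrArg (Nat.cast : ℕ → ℝ) hq
      by_cases hc1 : t ≤ ((j:ℝ)+1)/((n:ℝ)+2)
      · have hteq : t = ((j:ℝ)+1)/((n:ℝ)+2) := by
          apply le_antisymm hc1
          rw [hqr]; exact h1
        rw [if_pos ⟨by rw [hteq]; gcongr; linarith, hc1⟩]
        rw [hteq, ← hqr]
        field_simp
        ring
      · rw [if_neg (fun hc => hc1 hc.2)]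
        rw [if_pos ⟨by rw [hqr]; exact h1, by rw [show (j:ℝ)+2 = ((k:ℝ)+1) by linarith]; exact h2⟩]
        rw [show (j:ℝ)+2 = ((k:ℝ)+1) by linarith]
        ring
    · -- j + 1 < k
      rw [if_neg hq]
      have hjk1 : j+1 < k := by omega
      have hjr : ((j:ℝ)+1) < (k:ℝ) := by exact_mod_cast hjk1
      rw [if_neg (by
        rintro ⟨-, hb⟩
        have : t * ((n:ℝ)+2) ≤ (j:ℝ)+1 := (le_div_iff₀ hd).mp hb
        linarith)]
      by_cases hc2 : ((j:ℝ)+1)/((n:ℝ)+2) ≤ t ∧ t ≤ ((j:ℝ)+2)/((n:ℝ)+2)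
      · have hb2 : t * ((n:ℝ)+2) ≤ (j:ℝ)+2 := (le_div_iff₀ hd).mp hc2.2
        have hk2 : (k:ℝ) ≤ (j:ℝ)+2 := by linarith
        have hk2n : k ≤ j+2 := by exact_mod_cast hk2
        have hkeq : k = j+2 := by omega
        have hteq : t * ((n:ℝ)+2) = (j:ℝ)+2 := by
          have : ((j:ℝ)+2) ≤ (k:ℝ) := by exact_mod_cast (by omega : j+2 ≤ k)
          linarith
        rw [if_pos hc2]
        have : t = ((j:ℝ)+2)/((n:ℝ)+2) := by
          rw [eq_div_iff hd.ne']; exact hteq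
        rw [this]
        field_simp
        ring
      · rw [if_neg hc2]; ring
  · -- j = k
    subst hjk
    rw [if_pos rfl, if_neg (by omega : ¬ j+1 = j), if_pos ⟨h1, h2⟩]
    ring
  · -- j > k
    rw [if_neg (by omega : ¬ j = k), if_neg (by omega : ¬ j+1 = k)]
    have hjr : (k:ℝ)+1 ≤ (j:ℝ) := by exact_mod_cast (by omega : k+1 ≤ j)
    by_cases hc1 : (j:ℝ)/((n:ℝ)+2) ≤ t ∧ t ≤ ((j:ℝ)+1)/((n:ℝ)+2)
    · have ha : (j:ℝ) ≤ t * ((n:ℝ)+2) := (div_le_iff₀ hd).mp hc1.1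
      have hteq : t = (j:ℝ)/((n:ℝ)+2) := by
        rw [eq_div_iff hd.ne']; linarith
      rw [if_pos hc1, hteq]
      field_simp
      ring
    · rw [if_neg hc1]
      rw [if_neg (by
        rintro ⟨ha, -⟩
        have : ((j:ℝ)+1) ≤ t * ((n:ℝ)+2) := (div_le_iff₀ hd).mp ha
        linarith)]
      ring

noncomputable def epf (n k : ℕ) (x : ℝ) : ℝ := if k = 0 then 0 else dB n (k-1) x

lemma S_eq (n k : ℕ) (x : ℝ) {t : ℝ}
    (h1 : (k:ℝ)/((n:ℝ)+2) ≤ t) (h2 : t ≤ ((k:ℝ)+1)/((n:ℝ)+2)) :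
    (∑ j ∈ range (n+1), (n.choose j : ℝ) * x ^ j * (1 - x) ^ (n - j) * hatLambda n j t)
      = dB n k x * (((n:ℝ)+2)^2*(t - (k:ℝ)/((n:ℝ)+2)))
        + epf n k x * (((n:ℝ)+2)^2*(((k:ℝ)+1)/((n:ℝ)+2) - t)) := by
  have e1 : ∀ j ∈ range (n+1),
      (n.choose j : ℝ) * x ^ j * (1 - x) ^ (n - j) * hatLambda n j t
      = (if j = k then dB n j x * (((n:ℝ)+2)^2*(t - (k:ℝ)/((n:ℝ)+2))) else 0)
        + (if j+1 = k then dB n j x * (((n:ℝ)+2)^2*(((k:ℝ)+1)/((n:ℝ)+2) - t)) else 0) := by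
    intro j _
    rw [hat_piece n j k h1 h2]
    unfold dB
    rw [mul_add]
    congr 1 <;> split_ifs <;> ring
  rw [Finset.sum_congr rfl e1, Finset.sum_add_distrib]
  congr 1
  · rw [Finset.sum_ite_eq' (range (n+1)) k
      (fun j => dB n j x * (((n:ℝ)+2)^2*(t - (k:ℝ)/((n:ℝ)+2))))]
    rcases Nat.lt_or_ge k (n+1) with h | h
    · rw [if_pos (Finset.mem_range.mpr h)]
    · rw [if_neg (by simp; omega)]
      have hk1 : k = n+1 ∨ n+1 < k := by omega
      rcases hk1 with rfl | hgt
      · rw [dB_top, zero_mul]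
      · have : dB n k x = 0 := by
          unfold dB
          rw [Nat.choose_eq_zero_of_lt (by omega)]
          simp
        rw [this, zero_mul]
  · rcases k with _ | k'
    · rw [Finset.sum_eq_zero (fun j _ => if_neg (by omega))]
      unfold epf; simp
    · have e2 : ∀ j ∈ range (n+1),
          (if j+1 = k'+1 then
            dB n j x * (((n:ℝ)+2)^2*((((k'+1:ℕ):ℝ)+1)/((n:ℝ)+2) - t)) else 0)
          = (if j = k' then
            dB n j x * (((n:ℝ)+2)^2*((((k'+1:ℕ):ℝ)+1)/((n:ℝ)+2) - t)) else 0) :=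
        fun j _ => by simp only [add_left_inj]
      rw [Finset.sum_congr rfl e2, Finset.sum_ite_eq' (range (n+1)) k'
        (fun j => dB n j x * (((n:ℝ)+2)^2*((((k'+1:ℕ):ℝ)+1)/((n:ℝ)+2) - t)))]
      rcases Nat.lt_or_ge k' (n+1) with h | h
      · rw [if_pos (Finset.mem_range.mpr h)]
        unfold epf
        rw [if_neg (by omega)]
        norm_num
      · rw [if_neg (by simpa using by omega : ¬ k' ∈ range (n+1))]
        unfold epf
        rw [if_neg (by omega)]
        have : dB n (k'+1-1) x = 0 := by
          unfold dB
          rw [Nat.choose_eq_zero_of_lt (by omega)]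
          simp
        rw [this, zero_mul]

lemma integral_quad (A B C a b : ℝ) :
    ∫ t in a..b, (A*t^2 + B*t + C) = A*(b^3-a^3)/3 + B*(b^2-a^2)/2 + C*(b-a) := by
  have hderiv : ∀ t ∈ Set.uIcc a b,
      HasDerivAt (fun u : ℝ => A*u^3/3 + (B*u^2/2 + C*u)) (A*t^2 + B*t + C) t := by
    intro t _
    have h1 := (((hasDerivAt_pow 3 t).const_mul A).div_const 3).add
      ((((hasDerivAt_pow 2 t).const_mul B).div_const 2).add ((hasDerivAt_id' t).const_mul C))
    convert h1 using 1
    push_cast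
    norm_num
    · rfl
    · rfl
    · rfl
    · norm_num
      ring
  rw [intervalIntegral.integral_eq_sub_of_hasDerivAt hderiv
    ((by fun_prop : Continuous fun t : ℝ => A*t^2 + B*t + C).intervalIntegrable a b)]
  ring

lemma piece (n k : ℕ) (x : ℝ) :
    IntervalIntegrable
      (fun t => (∑ j ∈ range (n+1),
        (n.choose j : ℝ) * x ^ j * (1 - x) ^ (n - j) * hatLambda n j t)^2)
      MeasureTheory.volume ((k:ℝ)/((n:ℝ)+2)) (((k:ℝ)+1)/((n:ℝ)+2))
    ∧ (∫ t in ((k:ℝ)/((n:ℝ)+2))..(((k:ℝ)+1)/((n:ℝ)+2)),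
        (∑ j ∈ range (n+1),
          (n.choose j : ℝ) * x ^ j * (1 - x) ^ (n - j) * hatLambda n j t)^2)
      = ((n:ℝ)+2)/3 * ((dB n k x)^2 + dB n k x * epf n k x + (epf n k x)^2) := by
  have hd : (0:ℝ) < (n:ℝ)+2 := by positivity
  have hle : (k:ℝ)/((n:ℝ)+2) ≤ ((k:ℝ)+1)/((n:ℝ)+2) := by
    gcongr
    linarith
  set G : ℝ → ℝ := fun t => (dB n k x * (((n:ℝ)+2)^2*(t - (k:ℝ)/((n:ℝ)+2)))
      + epf n k x * (((n:ℝ)+2)^2*(((k:ℝ)+1)/((n:ℝ)+2) - t)))^2 with hGdef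
  have hEq : Set.EqOn
      (fun t => (∑ j ∈ range (n+1),
        (n.choose j : ℝ) * x ^ j * (1 - x) ^ (n - j) * hatLambda n j t)^2) G
      (Set.Icc ((k:ℝ)/((n:ℝ)+2)) (((k:ℝ)+1)/((n:ℝ)+2))) := by
    intro t ht
    simp only [hGdef]
    rw [S_eq n k x ht.1 ht.2]
  have hGc : Continuous G := by
    rw [hGdef]; fun_prop
  have hGi := hGc.intervalIntegrable (μ := MeasureTheory.volume) ((k:ℝ)/((n:ℝ)+2)) (((k:ℝ)+1)/((n:ℝ)+2))
  constructor
  · rw [intervalIntegrable_iff_integrableOn_Ioc_of_le hle]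
    have h2 := hGi
    rw [intervalIntegrable_iff_integrableOn_Ioc_of_le hle] at h2
    exact h2.congr_fun (fun t ht => (hEq (Set.Ioc_subset_Icc_self ht)).symm) measurableSet_Ioc
  · rw [intervalIntegral.integral_congr (g := G) (by rw [Set.uIcc_of_le hle]; exact hEq)]
    have hq : Set.EqOn G (fun t =>
        ((dB n k x - epf n k x)*((n:ℝ)+2)^2)^2 * t^2
        + (2*((dB n k x - epf n k x)*((n:ℝ)+2)^2)
            * (((n:ℝ)+2)^2*(epf n k x*(((k:ℝ)+1)/((n:ℝ)+2)) - dB n k x*((k:ℝ)/((n:ℝ)+2))))) * t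
        + (((n:ℝ)+2)^2*(epf n k x*(((k:ℝ)+1)/((n:ℝ)+2)) - dB n k x*((k:ℝ)/((n:ℝ)+2))))^2)
        (Set.uIcc ((k:ℝ)/((n:ℝ)+2)) (((k:ℝ)+1)/((n:ℝ)+2))) := fun t _ => by
      simp only [hGdef]; ring
    rw [intervalIntegral.integral_congr hq, integral_quad]
    have hne : ((n:ℝ)+2) ≠ 0 := hd.ne'
    field_simp
    ring

theorem stmt1 (n : ℕ) (x : ℝ) (hx : x ∈ Set.Icc (0 : ℝ) 1) :
    (∫ t in (0 : ℝ)..1,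
        (∑ j ∈ Finset.range (n + 1),
          (n.choose j : ℝ) * x ^ j * (1 - x) ^ (n - j) * hatLambda n j t) ^ 2) =
    ((n : ℝ) + 2) / (3 * ((n : ℝ) + 1) * 4 ^ n) *
      ∑ i ∈ Finset.range (n + 1),
        (3 * (n : ℝ) - 2 * (i : ℝ) + 2) * 4 ^ i * ((2 * i).choose i : ℝ) *
          ((2 * n - 2 * i).choose (n - i) : ℝ) * (x - 1 / 2) ^ (2 * i) := by
  have hd : (0:ℝ) < (n:ℝ)+2 := by positivity
  have hint : ∀ k, k < n+2 → IntervalIntegrable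
      (fun t => (∑ j ∈ Finset.range (n+1),
        (n.choose j : ℝ) * x ^ j * (1-x) ^ (n-j) * hatLambda n j t)^2)
      MeasureTheory.volume ((fun k : ℕ => (k:ℝ)/((n:ℝ)+2)) k)
      ((fun k : ℕ => (k:ℝ)/((n:ℝ)+2)) (k+1)) := by
    intro k hk
    have h := (piece n k x).1
    have hcast : ((k+1:ℕ):ℝ) = (k:ℝ)+1 := by push_cast; ring
    show IntervalIntegrable _ _ ((k:ℝ)/((n:ℝ)+2)) (((k+1:ℕ):ℝ)/((n:ℝ)+2))
    rw [hcast]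
    exact h
  have hsplit := intervalIntegral.sum_integral_adjacent_intervals hint
  rw [show (((0:ℕ)):ℝ)/((n:ℝ)+2) = (0:ℝ) from by norm_num,
      show (((n+2:ℕ)):ℝ)/((n:ℝ)+2) = (1:ℝ) from by
        push_cast
        rw [div_self hd.ne']] at hsplit
  have hval : (∑ k ∈ Finset.range (n+2),
        ∫ t in (((k:ℕ)):ℝ)/((n:ℝ)+2)..(((k+1:ℕ)):ℝ)/((n:ℝ)+2),
          (∑ j ∈ Finset.range (n+1),
            (n.choose j : ℝ) * x ^ j * (1-x) ^ (n-j) * hatLambda n j t)^2)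
      = ∑ k ∈ Finset.range (n+2),
          ((n:ℝ)+2)/3 * ((dB n k x)^2 + dB n k x * epf n k x + (epf n k x)^2) :=
    Finset.sum_congr rfl (fun k hk => by
      have h := (piece n k x).2
      have hcast : ((k+1:ℕ):ℝ) = (k:ℝ)+1 := by push_cast; ring
      show (∫ t in ((k:ℝ)/((n:ℝ)+2))..(((k+1:ℕ):ℝ)/((n:ℝ)+2)),
        (∑ j ∈ Finset.range (n+1),
          (n.choose j : ℝ) * x ^ j * (1-x) ^ (n-j) * hatLambda n j t)^2) = _
      rw [hcast]
      exact h)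
  rw [← hsplit, hval, ← Finset.mul_sum]
  have t1 : (∑ k ∈ Finset.range (n+2), (dB n k x)^2) = SA n x := by
    rw [Finset.sum_range_succ, dB_top]
    unfold SA
    norm_num
  have t2 : (∑ k ∈ Finset.range (n+2), (epf n k x)^2) = SA n x := by
    rw [Finset.sum_range_succ']
    have h1 : ∀ k ∈ Finset.range (n+1), (epf n (k+1) x)^2 = (dB n k x)^2 :=
      fun k _ => by unfold epf; rw [if_neg (by omega)]; norm_num
    rw [Finset.sum_congr rfl h1]
    unfold SA epf
    norm_num
  have t3 : (∑ k ∈ Finset.range (n+2), dB n k x * epf n k x) = SB n x := by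
    rw [Finset.sum_range_succ']
    have h1 : ∀ k ∈ Finset.range (n+1), dB n (k+1) x * epf n (k+1) x
        = dB n k x * dB n (k+1) x :=
      fun k _ => by unfold epf; rw [if_neg (by omega)]; norm_num; ring
    rw [Finset.sum_congr rfl h1, Finset.sum_range_succ, dB_top]
    unfold SB epf
    norm_num
  have s123 : (∑ k ∈ Finset.range (n+2),
      ((dB n k x)^2 + dB n k x * epf n k x + (epf n k x)^2)) = 2*SA n x + SB n x := by
    rw [Finset.sum_add_distrib, Finset.sum_add_distrib]
    linarith [t1, t2, t3]
  rw [s123, ← KEY n x]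
  have h1 : ((n:ℝ)+1) ≠ 0 := by positivity
  have h2 : (4:ℝ)^n ≠ 0 := by positivity
  field_simp
end

section
/- Let n ≥ 0 be a natural number. Define b_{n,j}(x) := C(n,j)·x^j·(1−x)^{n−j} and, for j = 0,…,n, the normalized hat function Λ_{n,j} on [0,1] by Λ_{n,j}(t) = (n+2)²·(t − j/(n+2)) for t ∈ [j/(n+2), (j+1)/(n+2)], Λ_{n,j}(t) = (n+2)²·((j+2)/(n+2) − t) for t ∈ [(j+1)/(n+2), (j+2)/(n+2)], and Λ_{n,j}(t) = 0 otherwise. Define the operator Q f(x) := Σ_{j=0}^{n} b_{n,j}(x) · ∫_0^1 f(t)·Λ_{n,j}(t) dt. Then for every x ∈ [0,1], the variance Q e_2(x) − (Q e_1(x))², where e_i(t) = t^i, equals n/(n+2)² · x(1−x) + 1/(6(n+2)²). -/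
/-- The second Kantorovich modification `Q_{n+2}^{[2]}` of the Bernstein operator. -/
noncomputable def kantorovichQ (n : ℕ) (f : ℝ → ℝ) (x : ℝ) : ℝ :=
  ∑ j ∈ Finset.range (n + 1),
    (n.choose j : ℝ) * x ^ j * (1 - x) ^ (n - j) * ∫ t in (0 : ℝ)..1, f t * hatLambda n j t

lemma hat_eq (n j : ℕ) (t : ℝ) :
    hatLambda n j t = ((n:ℝ)+2)^2 *
      max 0 (min (t - (j:ℝ)/((n:ℝ)+2)) (((j:ℝ)+2)/((n:ℝ)+2) - t)) := by
  have hN : (0:ℝ) < (n:ℝ)+2 := by positivity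
  have h1N : (0:ℝ) < 1/((n:ℝ)+2) := by positivity
  have hb : ((j:ℝ)+1)/((n:ℝ)+2) = (j:ℝ)/((n:ℝ)+2) + 1/((n:ℝ)+2) := by ring
  have hc : ((j:ℝ)+2)/((n:ℝ)+2) = (j:ℝ)/((n:ℝ)+2) + 1/((n:ℝ)+2) + 1/((n:ℝ)+2) := by ring
  unfold hatLambda
  split_ifs with h1 h2
  · rw [min_eq_left (by linarith [h1.1, h1.2]), max_eq_right (by linarith [h1.1])]
  · rw [min_eq_right (by linarith [h2.1, h2.2]), max_eq_right (by linarith [h2.2])]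
  · push_neg at h1 h2
    rcases lt_or_ge t ((j:ℝ)/((n:ℝ)+2)) with h | h
    · rw [max_eq_left (le_trans (min_le_left _ _) (by linarith)), mul_zero]
    · have hbt := h1 h
      have hct := h2 hbt.le
      rw [max_eq_left (le_trans (min_le_right _ _) (by linarith)), mul_zero]

lemma hat_cont (n j : ℕ) : Continuous (hatLambda n j) := by
  have : hatLambda n j = fun t => ((n:ℝ)+2)^2 *
      max 0 (min (t - (j:ℝ)/((n:ℝ)+2)) (((j:ℝ)+2)/((n:ℝ)+2) - t)) := funext (hat_eq n j)
  rw [this]; fun_prop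

lemma hat_split (n j k : ℕ) (hj : j ≤ n) :
    ∫ t in (0:ℝ)..1, t^k * hatLambda n j t =
      (∫ t in (j:ℝ)/((n:ℝ)+2)..((j:ℝ)+1)/((n:ℝ)+2),
        t^k * (((n:ℝ)+2)^2 * (t - (j:ℝ)/((n:ℝ)+2))))
      + ∫ t in ((j:ℝ)+1)/((n:ℝ)+2)..((j:ℝ)+2)/((n:ℝ)+2),
        t^k * (((n:ℝ)+2)^2 * (((j:ℝ)+2)/((n:ℝ)+2) - t)) := by
  have hN : (0:ℝ) < (n:ℝ)+2 := by positivity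
  have h1N : (0:ℝ) < 1/((n:ℝ)+2) := by positivity
  set a := (j:ℝ)/((n:ℝ)+2) with ha
  set b := ((j:ℝ)+1)/((n:ℝ)+2) with hbd
  set c := ((j:ℝ)+2)/((n:ℝ)+2) with hcd
  have hb : b = a + 1/((n:ℝ)+2) := by rw [ha, hbd]; ring
  have hc : c = a + 1/((n:ℝ)+2) + 1/((n:ℝ)+2) := by rw [ha, hcd]; ring
  have h0a : (0:ℝ) ≤ a := by positivity
  have hab : a ≤ b := by linarith
  have hbc : b ≤ c := by linarith
  have hc1 : c ≤ 1 := by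
    rw [hcd, div_le_one hN]
    have : (j:ℝ) ≤ (n:ℝ) := by exact_mod_cast hj
    linarith
  have hint : ∀ p q : ℝ, IntervalIntegrable (fun t => t^k * hatLambda n j t)
      MeasureTheory.volume p q :=
    fun p q => ((continuous_pow k).mul (hat_cont n j)).intervalIntegrable p q
  rw [← intervalIntegral.integral_add_adjacent_intervals (hint 0 a) (hint a 1),
    ← intervalIntegral.integral_add_adjacent_intervals (hint a b) (hint b 1),
    ← intervalIntegral.integral_add_adjacent_intervals (hint b c) (hint c 1)]
  have z1 : (∫ t in (0:ℝ)..a, t^k * hatLambda n j t) = 0 := by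
    rw [intervalIntegral.integral_congr (g := fun _ => (0:ℝ)), intervalIntegral.integral_zero]
    intro t ht
    rw [Set.uIcc_of_le h0a] at ht
    have : hatLambda n j t = 0 := by
      rw [hat_eq, max_eq_left (le_trans (min_le_left _ _) (by linarith [ht.2])), mul_zero]
    simp [this]
  have z2 : (∫ t in c..(1:ℝ), t^k * hatLambda n j t) = 0 := by
    rw [intervalIntegral.integral_congr (g := fun _ => (0:ℝ)), intervalIntegral.integral_zero]
    intro t ht
    rw [Set.uIcc_of_le hc1] at ht
    have : hatLambda n j t = 0 := by
      rw [hat_eq, max_eq_left (le_trans (min_le_right _ _) (by linarith [ht.1])), mul_zero]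
    simp [this]
  have m1 : (∫ t in a..b, t^k * hatLambda n j t)
      = ∫ t in a..b, t^k * (((n:ℝ)+2)^2 * (t - a)) := by
    refine intervalIntegral.integral_congr fun t ht => ?_
    rw [Set.uIcc_of_le hab] at ht
    rw [hat_eq, min_eq_left (by linarith [ht.1, ht.2]), max_eq_right (by linarith [ht.1])]
  have m2 : (∫ t in b..c, t^k * hatLambda n j t)
      = ∫ t in b..c, t^k * (((n:ℝ)+2)^2 * (c - t)) := by
    refine intervalIntegral.integral_congr fun t ht => ?_
    rw [Set.uIcc_of_le hbc] at ht
    rw [hat_eq, min_eq_right (by linarith [ht.1, ht.2]), max_eq_right (by linarith [ht.2])]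
  rw [z1, z2, m1, m2]
  ring

lemma piece1 (a b N : ℝ) : ∫ t in a..b, t^1 * (N^2 * (t - a)) =
    N^2 * ((b^3 - a^3)/3) - N^2*a * ((b^2-a^2)/2) := by
  have h : ∀ t:ℝ, t^1 * (N^2 * (t - a)) = N^2 * t^2 - (N^2*a) * t^1 := fun t => by ring
  simp only [h]
  rw [intervalIntegral.integral_sub (f := fun t : ℝ => N^2 * t^2) (g := fun t : ℝ => (N^2*a) * t^1)
      ((continuous_const.mul (continuous_pow 2)).intervalIntegrable _ _)
      ((continuous_const.mul (continuous_pow 1)).intervalIntegrable _ _),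
    intervalIntegral.integral_const_mul, intervalIntegral.integral_const_mul,
    integral_pow, integral_pow]
  norm_num

lemma piece1' (b c N : ℝ) : ∫ t in b..c, t^1 * (N^2 * (c - t)) =
    N^2*c * ((c^2-b^2)/2) - N^2 * ((c^3 - b^3)/3) := by
  have h : ∀ t:ℝ, t^1 * (N^2 * (c - t)) = (N^2*c) * t^1 - N^2 * t^2 := fun t => by ring
  simp only [h]
  rw [intervalIntegral.integral_sub (f := fun t : ℝ => (N^2*c) * t^1) (g := fun t : ℝ => N^2 * t^2)
      ((continuous_const.mul (continuous_pow 1)).intervalIntegrable _ _)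
      ((continuous_const.mul (continuous_pow 2)).intervalIntegrable _ _),
    intervalIntegral.integral_const_mul, intervalIntegral.integral_const_mul,
    integral_pow, integral_pow]
  norm_num

lemma piece2 (a b N : ℝ) : ∫ t in a..b, t^2 * (N^2 * (t - a)) =
    N^2 * ((b^4 - a^4)/4) - N^2*a * ((b^3-a^3)/3) := by
  have h : ∀ t:ℝ, t^2 * (N^2 * (t - a)) = N^2 * t^3 - (N^2*a) * t^2 := fun t => by ring
  simp only [h]
  rw [intervalIntegral.integral_sub (f := fun t : ℝ => N^2 * t^3) (g := fun t : ℝ => (N^2*a) * t^2)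
      ((continuous_const.mul (continuous_pow 3)).intervalIntegrable _ _)
      ((continuous_const.mul (continuous_pow 2)).intervalIntegrable _ _),
    intervalIntegral.integral_const_mul, intervalIntegral.integral_const_mul,
    integral_pow, integral_pow]
  norm_num

lemma piece2' (b c N : ℝ) : ∫ t in b..c, t^2 * (N^2 * (c - t)) =
    N^2*c * ((c^3-b^3)/3) - N^2 * ((c^4 - b^4)/4) := by
  have h : ∀ t:ℝ, t^2 * (N^2 * (c - t)) = (N^2*c) * t^2 - N^2 * t^3 := fun t => by ring
  simp only [h]
  rw [intervalIntegral.integral_sub (f := fun t : ℝ => (N^2*c) * t^2) (g := fun t : ℝ => N^2 * t^3)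
      ((continuous_const.mul (continuous_pow 2)).intervalIntegrable _ _)
      ((continuous_const.mul (continuous_pow 3)).intervalIntegrable _ _),
    intervalIntegral.integral_const_mul, intervalIntegral.integral_const_mul,
    integral_pow, integral_pow]
  norm_num

lemma hat_int1 (n j : ℕ) (hj : j ≤ n) :
    ∫ t in (0:ℝ)..1, t^1 * hatLambda n j t = ((j:ℝ)+1)/((n:ℝ)+2) := by
  have hN : ((n:ℝ)+2) ≠ 0 := by positivity
  rw [hat_split n j 1 hj, piece1, piece1']
  field_simp
  ring

lemma hat_int2 (n j : ℕ) (hj : j ≤ n) :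
    ∫ t in (0:ℝ)..1, t^2 * hatLambda n j t = (((j:ℝ)+1)^2 + 1/6)/((n:ℝ)+2)^2 := by
  have hN : ((n:ℝ)+2) ≠ 0 := by positivity
  rw [hat_split n j 2 hj, piece2, piece2']
  field_simp
  ring

open Polynomial in
lemma bern_sum0 (n : ℕ) (x : ℝ) :
    ∑ j ∈ Finset.range (n+1), (n.choose j : ℝ) * x ^ j * (1-x) ^ (n-j) = 1 := by
  have h := congrArg (Polynomial.eval x) (bernsteinPolynomial.sum ℝ n)
  simpa [Polynomial.eval_finset_sum, bernsteinPolynomial] using h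

open Polynomial in
lemma bern_sum1 (n : ℕ) (x : ℝ) :
    ∑ j ∈ Finset.range (n+1), (j:ℝ) * ((n.choose j : ℝ) * x ^ j * (1-x) ^ (n-j)) = n * x := by
  have h := congrArg (Polynomial.eval x) (bernsteinPolynomial.sum_smul ℝ n)
  simpa [Polynomial.eval_finset_sum, bernsteinPolynomial, nsmul_eq_mul, mul_assoc] using h

open Polynomial in
lemma bern_sum2 (n : ℕ) (x : ℝ) :
    ∑ j ∈ Finset.range (n+1), ((j:ℝ)^2 - j) * ((n.choose j : ℝ) * x ^ j * (1-x) ^ (n-j))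
      = ((n:ℝ)^2 - n) * x^2 := by
  have h := congrArg (Polynomial.eval x) (bernsteinPolynomial.sum_mul_smul ℝ n)
  simp only [Polynomial.eval_finset_sum, bernsteinPolynomial, eval_mul, eval_pow, eval_natCast,
    eval_sub, eval_one, eval_X, nsmul_eq_mul, eval_smul, smul_eq_mul] at h
  have cast : ∀ m : ℕ, ((m * (m-1) : ℕ) : ℝ) = (m:ℝ)^2 - m := by
    rintro (_|m) <;> push_cast <;> ring
  rw [show ((n:ℝ)^2 - n) * x^2 = ((n*(n-1):ℕ):ℝ) * x^2 by rw [cast], ← h]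
  exact Finset.sum_congr rfl fun j _ => by rw [cast]

theorem stmt2 (n : ℕ) (x : ℝ) (hx : x ∈ Set.Icc (0 : ℝ) 1) :
    kantorovichQ n (fun t => t ^ 2) x - (kantorovichQ n (fun t => t ^ 1) x) ^ 2 =
      (n : ℝ) / ((n : ℝ) + 2) ^ 2 * (x * (1 - x)) + 1 / (6 * ((n : ℝ) + 2) ^ 2) := by
  have hN : ((n:ℝ)+2) ≠ 0 := by positivity
  have hQ1 : kantorovichQ n (fun t => t ^ 1) x = ((n:ℝ)*x + 1)/((n:ℝ)+2) := by
    unfold kantorovichQ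
    calc ∑ j ∈ Finset.range (n+1), (n.choose j : ℝ) * x ^ j * (1-x) ^ (n-j)
          * ∫ t in (0:ℝ)..1, t^1 * hatLambda n j t
        = ∑ j ∈ Finset.range (n+1),
            ((1/((n:ℝ)+2)) * ((j:ℝ) * ((n.choose j : ℝ) * x ^ j * (1-x) ^ (n-j)))
              + (1/((n:ℝ)+2)) * ((n.choose j : ℝ) * x ^ j * (1-x) ^ (n-j))) := by
          refine Finset.sum_congr rfl fun j hj => ?_
          rw [hat_int1 n j (Nat.lt_succ_iff.mp (Finset.mem_range.mp hj))]
          field_simp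
      _ = ((n:ℝ)*x + 1)/((n:ℝ)+2) := by
          rw [Finset.sum_add_distrib, ← Finset.mul_sum, ← Finset.mul_sum,
            bern_sum0, bern_sum1]
          field_simp
  have hQ2 : kantorovichQ n (fun t => t ^ 2) x
      = (((n:ℝ)^2 - n)*x^2 + 3*(n:ℝ)*x + 7/6)/((n:ℝ)+2)^2 := by
    unfold kantorovichQ
    calc ∑ j ∈ Finset.range (n+1), (n.choose j : ℝ) * x ^ j * (1-x) ^ (n-j)
          * ∫ t in (0:ℝ)..1, t^2 * hatLambda n j t
        = ∑ j ∈ Finset.range (n+1),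
            ((1/((n:ℝ)+2)^2) * (((j:ℝ)^2 - j) * ((n.choose j : ℝ) * x ^ j * (1-x) ^ (n-j)))
              + (3/((n:ℝ)+2)^2) * ((j:ℝ) * ((n.choose j : ℝ) * x ^ j * (1-x) ^ (n-j)))
              + (7/(6*((n:ℝ)+2)^2)) * ((n.choose j : ℝ) * x ^ j * (1-x) ^ (n-j))) := by
          refine Finset.sum_congr rfl fun j hj => ?_
          rw [hat_int2 n j (Nat.lt_succ_iff.mp (Finset.mem_range.mp hj))]
          field_simp
          ring
      _ = (((n:ℝ)^2 - n)*x^2 + 3*(n:ℝ)*x + 7/6)/((n:ℝ)+2)^2 := by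
          rw [Finset.sum_add_distrib, Finset.sum_add_distrib, ← Finset.mul_sum,
            ← Finset.mul_sum, ← Finset.mul_sum, bern_sum0, bern_sum1, bern_sum2]
          field_simp
  rw [hQ1, hQ2]
  field_simp
  ring
end

section
/- For every natural number n ≥ 0 and every real x, F_n(x) = (1/π) · ∫_0^π (1 − 4x(1−x)·sin²(φ/2))^n dφ, where F_n(x) := Σ_{k=0}^{n} ( C(n,k)·x^k·(1−x)^{n−k} )². -/
set_option maxHeartbeats 1000000

open Finset intervalIntegral Real

/-- `F n x` is the sum of squares of the Bernstein basis polynomials of degree `n`. -/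
noncomputable def bernsteinF (n : ℕ) (x : ℝ) : ℝ :=
  ∑ k ∈ Finset.range (n + 1), ((n.choose k : ℝ) * x ^ k * (1 - x) ^ (n - k)) ^ 2

/-- Bernstein coefficient. -/
noncomputable def bc (n k : ℕ) (x : ℝ) : ℝ := (n.choose k : ℝ) * x ^ k * (1 - x) ^ (n - k)

lemma integral_cos_mul' (m : ℝ) (hm : m ≠ 0) :
    ∫ φ in (0:ℝ)..Real.pi, Real.cos (m * φ) = Real.sin (m * Real.pi) / m := by
  rw [intervalIntegral.integral_comp_mul_left Real.cos hm]
  simp [integral_cos, div_eq_inv_mul]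

lemma orth (j k : ℕ) :
    (∫ φ in (0:ℝ)..Real.pi,
      (Real.cos (j * φ) * Real.cos (k * φ) + Real.sin (j * φ) * Real.sin (k * φ))) =
      if j = k then Real.pi else 0 := by
  have hpt : ∀ φ : ℝ,
      Real.cos (j * φ) * Real.cos (k * φ) + Real.sin (j * φ) * Real.sin (k * φ)
        = Real.cos (((j : ℝ) - k) * φ) := by
    intro φ
    rw [sub_mul, Real.cos_sub]
  simp_rw [hpt]
  by_cases h : j = k
  · subst h
    simp
  · have hm : ((j : ℝ) - k) ≠ 0 := by
      intro hc
      exact h (Nat.cast_injective (by linarith [sub_eq_zero.mp hc] : (j:ℝ) = (k:ℝ)))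
    rw [integral_cos_mul' _ hm, if_neg h]
    have hs : Real.sin (((j:ℝ) - k) * Real.pi) = 0 := by
      have h2 := Real.sin_int_mul_pi ((j : ℤ) - k)
      push_cast at h2
      exact h2
    rw [hs, zero_div]

lemma zpow_expand (n : ℕ) (x φ : ℝ) :
    ((x : ℂ) * Complex.exp (φ * Complex.I) + (1 - x)) ^ n =
      ∑ k ∈ range (n + 1), ((bc n k x : ℝ) : ℂ) *
        Complex.exp ((((k : ℝ) * φ : ℝ) : ℂ) * Complex.I) := by
  rw [add_pow]
  refine Finset.sum_congr rfl fun k hk => ?_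
  rw [mul_pow, ← Complex.exp_nat_mul,
    show ((k : ℂ) * ((φ : ℂ) * Complex.I)) = ((((k : ℝ) * φ : ℝ) : ℂ)) * Complex.I by
      push_cast; ring]
  rw [bc]
  push_cast
  ring

lemma expand (n : ℕ) (x φ : ℝ) :
    (1 - 4 * x * (1 - x) * Real.sin (φ / 2) ^ 2) ^ n =
      ∑ j ∈ range (n + 1), ∑ k ∈ range (n + 1),
        bc n j x * bc n k x *
        (Real.cos (j * φ) * Real.cos (k * φ) + Real.sin (j * φ) * Real.sin (k * φ)) := by
  set z : ℂ := (x : ℂ) * Complex.exp (φ * Complex.I) + (1 - x) with hz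
  have h1 : Complex.normSq z = 1 - 4 * x * (1 - x) * Real.sin (φ / 2) ^ 2 := by
    have hre : z.re = x * Real.cos φ + (1 - x) := by
      simp [hz, Complex.exp_ofReal_mul_I_re]
    have him : z.im = x * Real.sin φ := by
      simp [hz, Complex.exp_ofReal_mul_I_im]
    rw [Complex.normSq_apply, hre, him]
    have hcos : Real.cos φ = 1 - 2 * Real.sin (φ / 2) ^ 2 := by
      have h2 := Real.cos_two_mul (φ / 2)
      rw [show 2 * (φ / 2) = φ by ring] at h2
      nlinarith [Real.sin_sq_add_cos_sq (φ / 2)]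
    linear_combination (x^2) * Real.sin_sq_add_cos_sq φ + (2*x*(1-x)) * hcos
  have hre : (z ^ n).re = ∑ k ∈ range (n + 1), bc n k x * Real.cos (k * φ) := by
    rw [hz, zpow_expand, Complex.re_sum]
    refine Finset.sum_congr rfl fun k hk => ?_
    rw [Complex.re_ofReal_mul, Complex.exp_ofReal_mul_I_re]
  have him : (z ^ n).im = ∑ k ∈ range (n + 1), bc n k x * Real.sin (k * φ) := by
    rw [hz, zpow_expand, Complex.im_sum]
    refine Finset.sum_congr rfl fun k hk => ?_
    rw [Complex.im_ofReal_mul, Complex.exp_ofReal_mul_I_im]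
  have h2 : (1 - 4 * x * (1 - x) * Real.sin (φ / 2) ^ 2) ^ n
      = (z ^ n).re ^ 2 + (z ^ n).im ^ 2 := by
    rw [← h1, ← map_pow Complex.normSq z n, Complex.normSq_apply]
    ring
  rw [h2, hre, him, sq, sq, Finset.sum_mul_sum, Finset.sum_mul_sum,
    ← Finset.sum_add_distrib]
  refine Finset.sum_congr rfl fun j hj => ?_
  rw [← Finset.sum_add_distrib]
  refine Finset.sum_congr rfl fun k hk => ?_
  ring

theorem stmt3 (n : ℕ) (x : ℝ) :
    bernsteinF n x =
      1 / Real.pi *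
        ∫ φ in (0 : ℝ)..Real.pi, (1 - 4 * x * (1 - x) * Real.sin (φ / 2) ^ 2) ^ n := by
  have hC : ∀ (j k : ℕ), Continuous
      (fun φ : ℝ => bc n j x * bc n k x *
        (Real.cos (j * φ) * Real.cos (k * φ) + Real.sin (j * φ) * Real.sin (k * φ))) := by
    intro j k
    exact continuous_const.mul
      (((Real.continuous_cos.comp (continuous_const.mul continuous_id)).mul
        (Real.continuous_cos.comp (continuous_const.mul continuous_id))).add
       ((Real.continuous_sin.comp (continuous_const.mul continuous_id)).mul
        (Real.continuous_sin.comp (continuous_const.mul continuous_id))))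
  have step1 : (∫ φ in (0 : ℝ)..Real.pi, (1 - 4 * x * (1 - x) * Real.sin (φ / 2) ^ 2) ^ n)
      = ∑ j ∈ range (n + 1), ∑ k ∈ range (n + 1),
          bc n j x * bc n k x * (if j = k then Real.pi else 0) := by
    rw [intervalIntegral.integral_congr
        (g := fun φ => ∑ j ∈ range (n + 1), ∑ k ∈ range (n + 1),
          bc n j x * bc n k x *
          (Real.cos (j * φ) * Real.cos (k * φ) + Real.sin (j * φ) * Real.sin (k * φ)))
        (fun φ _ => expand n x φ),
      intervalIntegral.integral_finset_sum
        (f := fun j φ => ∑ k ∈ range (n + 1), bc n j x * bc n k x *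
          (Real.cos (j * φ) * Real.cos (k * φ) + Real.sin (j * φ) * Real.sin (k * φ)))
        (fun j _ => ((continuous_finset_sum _ fun k _ => hC j k).intervalIntegrable 0 Real.pi))]
    refine Finset.sum_congr rfl fun j _ => ?_
    rw [intervalIntegral.integral_finset_sum
        (f := fun k φ => bc n j x * bc n k x *
          (Real.cos (j * φ) * Real.cos (k * φ) + Real.sin (j * φ) * Real.sin (k * φ)))
        (fun k _ => (hC j k).intervalIntegrable 0 Real.pi)]
    refine Finset.sum_congr rfl fun k _ => ?_
    rw [intervalIntegral.integral_const_mul, orth]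
  have step2 : (∑ j ∈ range (n + 1), ∑ k ∈ range (n + 1),
      bc n j x * bc n k x * (if j = k then Real.pi else 0)) = Real.pi * bernsteinF n x := by
    rw [bernsteinF, Finset.mul_sum]
    refine Finset.sum_congr rfl fun j hj => ?_
    rw [Finset.sum_eq_single j]
    · rw [if_pos rfl, bc]; ring
    · intro k _ hne
      rw [if_neg (Ne.symm hne), mul_zero]
    · intro h; exact absurd hj h
  rw [step1, step2]
  field_simp
end

section
/- For every real q and every x ∈ (0, 1/2), the identity (1−x)^{−2q} · Σ_{k=0}^{∞} ( ((q)_k)² / (k!)² ) · ( x/(x−1) )^{2k} = (1/π) · ∫_0^π (1 − 4x(1−x)·sin²(φ/2))^{−q} dφ holds, where (q)_k = q(q+1)⋯(q+k−1) is the ascending Pochhammer symbol; in particular the series on the left converges for x ∈ (0,1/2). -/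
open Complex MeasureTheory

noncomputable section

namespace Stmt4Aux

lemma nat_aux (M k : ℕ) : (k+1)^M * (M+k) ≤ (k+1) * (k+2)^M := by
  induction M with
  | zero => simpa using Nat.le_succ k
  | succ M ih =>
      have h1 : (k+1)^M * (M+k+1) ≤ (k+2)^(M+1) := by
        have h2 : (k+1)^M ≤ (k+2)^M := Nat.pow_le_pow_left (by omega) M
        calc (k+1)^M * (M+k+1) = (k+1)^M*(M+k) + (k+1)^M := by ring
        _ ≤ (k+1)*(k+2)^M + (k+2)^M := Nat.add_le_add ih h2
        _ = (k+2)^(M+1) := by ring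
      calc (k+1)^(M+1) * (M+1+k) = (k+1) * ((k+1)^M * (M+k+1)) := by ring
      _ ≤ (k+1) * (k+2)^(M+1) := Nat.mul_le_mul_left _ h1

lemma poch_bound (q : ℝ) (M : ℕ) (hq : |q| ≤ M) (k : ℕ) :
    |(ascPochhammer ℝ k).eval q| ≤ k.factorial * (k+1)^M := by
  induction k with
  | zero => simp
  | succ k ih =>
      rw [ascPochhammer_succ_eval, abs_mul]
      have h1 : |q + (k:ℝ)| ≤ (M:ℝ) + k := by
        calc |q + (k:ℝ)| ≤ |q| + |(k:ℝ)| := abs_add_le _ _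
        _ ≤ (M:ℝ) + k := by rw [_root_.abs_of_nonneg (by positivity : (0:ℝ) ≤ (k:ℝ))]; linarith
      have h2 : (0:ℝ) ≤ (M:ℝ) + k := by positivity
      calc |(ascPochhammer ℝ k).eval q| * |q + (k:ℝ)|
          ≤ ((k.factorial : ℝ) * (k+1)^M) * ((M:ℝ)+k) := by
            apply mul_le_mul ih h1 (abs_nonneg _) (by positivity)
        _ = (k.factorial : ℝ) * ((k+1)^M * ((M:ℝ)+k)) := by ring
        _ ≤ (k.factorial : ℝ) * ((k+1) * (k+2)^M) := by
            apply mul_le_mul_of_nonneg_left _ (by positivity)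
            have := nat_aux M k
            have := (Nat.cast_le (α := ℝ)).2 this
            push_cast at this ⊢
            convert this using 2 <;> ring
        _ = ((k+1).factorial : ℝ) * (((k+1:ℕ):ℝ)+1)^M := by
            rw [Nat.factorial_succ]; push_cast; ring


lemma summable_pow_mul (M : ℕ) {ρ : ℝ} (h0 : 0 ≤ ρ) (h1 : ρ < 1) :
    Summable (fun k : ℕ => ((k:ℝ)+1)^M * ρ^k) := by
  rcases h0.eq_or_lt with h|h
  · apply summable_of_ne_finset_zero (s := {0})
    intro k hk
    simp only [Finset.mem_singleton] at hk
    rw [← h, zero_pow hk, mul_zero]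
  · have hs := summable_pow_mul_geometric_of_norm_lt_one (R := ℝ) M
      (r := ρ) (by rwa [Real.norm_eq_abs, _root_.abs_of_nonneg h0])
    have h2 : Summable (fun n : ℕ => (((n+1:ℕ)):ℝ)^M * ρ^(n+1)) :=
      (summable_nat_add_iff 1).2 hs
    have h3 := h2.mul_left ρ⁻¹
    apply h3.congr
    intro n
    push_cast
    field_simp
    ring

lemma summable_pow_mul' (M : ℕ) {ρ : ℝ} (h0 : 0 < ρ) (h1 : ρ < 1) :
    Summable (fun k : ℕ => ((k:ℝ)+1)^M * ρ^(k-1)) := by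
  rw [← summable_nat_add_iff 1]
  apply Summable.of_nonneg_of_le (fun n => by positivity)
    _ ((summable_pow_mul M h0.le h1).mul_left (2^M))
  intro n
  simp only [Nat.add_sub_cancel]
  push_cast
  have hb : ((n:ℝ)+1+1)^M ≤ 2^M * ((n:ℝ)+1)^M := by
    rw [← mul_pow]
    apply pow_le_pow_left₀ (by positivity)
    linarith
  calc ((n:ℝ)+1+1)^M * ρ^n ≤ (2^M * ((n:ℝ)+1)^M) * ρ^n := by
        apply mul_le_mul_of_nonneg_right hb (by positivity)
    _ = 2^M * (((n:ℝ)+1)^M * ρ^n) := by ring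

lemma summable_cc (q : ℝ) {ρ : ℝ} (h0 : 0 ≤ ρ) (h1 : ρ < 1) :
    Summable (fun k : ℕ => |(ascPochhammer ℝ k).eval q| / k.factorial * ρ^k) := by
  obtain ⟨M, hM⟩ := exists_nat_ge |q|
  apply Summable.of_nonneg_of_le (fun k => by positivity) _ (summable_pow_mul M h0 h1)
  intro k
  apply mul_le_mul_of_nonneg_right _ (by positivity)
  rw [div_le_iff₀ (by positivity)]
  calc |(ascPochhammer ℝ k).eval q| ≤ k.factorial * (k+1)^M := poch_bound q M hM k
    _ = ((k:ℝ)+1)^M * k.factorial := by ring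

lemma summable_cc_deriv (q : ℝ) {ρ : ℝ} (h0 : 0 ≤ ρ) (h1 : ρ < 1) :
    Summable (fun k : ℕ =>
      |(ascPochhammer ℝ k).eval q| / k.factorial * ((k:ℝ) * ρ^(k-1))) := by
  obtain ⟨M, hM⟩ := exists_nat_ge |q|
  set ρ' : ℝ := (1+ρ)/2 with hρ'
  have hρ0 : 0 < ρ' := by rw [hρ']; linarith
  have hρ1 : ρ' < 1 := by rw [hρ']; linarith
  have hρle : ρ ≤ ρ' := by rw [hρ']; linarith
  apply Summable.of_nonneg_of_le (fun k => by positivity) _ (summable_pow_mul' (M+1) hρ0 hρ1)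
  intro k
  have hcc : |(ascPochhammer ℝ k).eval q| / k.factorial ≤ ((k:ℝ)+1)^M := by
    rw [div_le_iff₀ (by positivity)]
    calc |(ascPochhammer ℝ k).eval q| ≤ k.factorial * (k+1)^M := poch_bound q M hM k
      _ = ((k:ℝ)+1)^M * k.factorial := by ring
  calc |(ascPochhammer ℝ k).eval q| / k.factorial * ((k:ℝ) * ρ^(k-1))
      ≤ ((k:ℝ)+1)^M * (((k:ℝ)+1) * ρ'^(k-1)) := by
        apply mul_le_mul hcc _ (by positivity) (by positivity)
        apply mul_le_mul (by linarith) (pow_le_pow_left₀ h0 hρle _) (by positivity) (by positivity)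
    _ = ((k:ℝ)+1)^(M+1) * ρ'^(k-1) := by ring


def cc (q : ℝ) (k : ℕ) : ℂ := (((ascPochhammer ℝ k).eval q : ℝ) : ℂ) / (k.factorial : ℂ)

lemma norm_cc (q : ℝ) (k : ℕ) : ‖cc q k‖ = |(ascPochhammer ℝ k).eval q| / k.factorial := by
  rw [cc, norm_div]
  simp [Complex.norm_real]

lemma cc_rec (q : ℝ) (k : ℕ) : ((k:ℂ)+1) * cc q (k+1) = ((q:ℂ)+k) * cc q k := by
  have h1 : ((k.factorial : ℕ) : ℂ) ≠ 0 := Nat.cast_ne_zero.2 k.factorial_ne_zero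
  have h2 : ((k:ℂ)+1) ≠ 0 := by
    have : ((k+1:ℕ):ℂ) ≠ 0 := Nat.cast_ne_zero.2 k.succ_ne_zero
    push_cast at this
    exact this
  rw [cc, cc, ascPochhammer_succ_eval, Nat.factorial_succ]
  push_cast
  field_simp

lemma summable_cc_pow (q : ℝ) {z : ℂ} (hz : ‖z‖ < 1) :
    Summable (fun k : ℕ => cc q k * z ^ k) := by
  apply Summable.of_norm
  have := summable_cc q (norm_nonneg z) hz
  apply this.congr
  intro k
  rw [norm_mul, norm_cc, norm_pow]

lemma summable_cc_pow_deriv (q : ℝ) {z : ℂ} (hz : ‖z‖ < 1) :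
    Summable (fun k : ℕ => cc q k * ((k:ℂ) * z ^ (k-1))) := by
  apply Summable.of_norm
  have := summable_cc_deriv q (norm_nonneg z) hz
  apply this.congr
  intro k
  rw [norm_mul, norm_cc, norm_mul, norm_pow]
  norm_num

def Fc (q : ℝ) (z : ℂ) : ℂ := ∑' k : ℕ, cc q k * z ^ k

def Fc' (q : ℝ) (z : ℂ) : ℂ := ∑' k : ℕ, cc q k * ((k:ℂ) * z ^ (k-1))

set_option maxHeartbeats 800000 in
lemma Fc_hasDeriv (q : ℝ) {r : ℝ} (hr0 : 0 < r) (hr1 : r < 1) {z : ℂ}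
    (hz : z ∈ Metric.ball (0:ℂ) r) : HasDerivAt (Fc q) (Fc' q z) z := by
  have hmem : ∀ y : ℂ, y ∈ Metric.ball (0:ℂ) r → ‖y‖ < r := by
    intro y hy
    simpa [Complex.dist_eq] using hy
  have h0s : (0:ℂ) ∈ Metric.ball (0:ℂ) r := by
    simp [Metric.mem_ball, hr0]
  refine hasDerivAt_tsum_of_isPreconnected
    (u := fun k : ℕ => |(ascPochhammer ℝ k).eval q| / k.factorial * ((k:ℝ) * r^(k-1)))
    (F := ℂ) (g := fun k y => cc q k * y ^ k)
    (g' := fun k y => cc q k * ((k:ℂ) * y ^ (k-1)))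
    (summable_cc_deriv q hr0.le hr1) Metric.isOpen_ball
    ((convex_ball (0:ℂ) r).isPreconnected) ?_ ?_ h0s ?_ hz
  · intro k y hy
    have := (hasDerivAt_pow k y).const_mul (cc q k)
    simpa [mul_comm, mul_assoc, mul_left_comm] using this
  · intro k y hy
    rw [norm_mul, norm_cc, norm_mul, norm_pow, Complex.norm_natCast]
    apply mul_le_mul_of_nonneg_left _ (by positivity)
    apply mul_le_mul_of_nonneg_left _ (Nat.cast_nonneg k)
    exact pow_le_pow_left₀ (norm_nonneg y) (hmem y hy).le _
  · exact summable_cc_pow q (by simpa using hr1)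

lemma Fc_ode (q : ℝ) {z : ℂ} (hz1 : ‖z‖ < 1) :
    (1 - z) * Fc' q z = (q:ℂ) * Fc q z := by
  have hS1 : Summable (fun k : ℕ => cc q k * ((k:ℂ) * z ^ (k-1))) :=
    summable_cc_pow_deriv q hz1
  have hS0 : Summable (fun k : ℕ => cc q k * z ^ k) := summable_cc_pow q hz1
  have e1 : Fc' q z = ∑' k : ℕ, ((q:ℂ) + k) * cc q k * z ^ k := by
    have h2 : ∀ k : ℕ, cc q (k+1) * (((k+1:ℕ):ℂ) * z ^ (k+1-1)) = ((q:ℂ)+k) * cc q k * z ^ k := by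
      intro k
      have h := cc_rec q k
      simp only [Nat.add_sub_cancel]
      push_cast
      calc cc q (k+1) * (((k:ℂ)+1) * z ^ k) = (((k:ℂ)+1) * cc q (k+1)) * z ^ k := by ring
        _ = ((q:ℂ)+k) * cc q k * z ^ k := by rw [h]
    unfold Fc'
    rw [Summable.tsum_eq_zero_add hS1]
    rw [show cc q 0 * (((0:ℕ):ℂ) * z ^ (0-1)) = 0 by simp, zero_add]
    exact tsum_congr h2
  have hS1' : Summable (fun k : ℕ => ((q:ℂ) + k) * cc q k * z ^ k) := by
    have := (summable_nat_add_iff 1).2 hS1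
    apply this.congr
    intro k
    have h := cc_rec q k
    simp only [Nat.add_sub_cancel]
    push_cast
    calc cc q (k+1) * (((k:ℂ)+1) * z ^ k) = (((k:ℂ)+1) * cc q (k+1)) * z ^ k := by ring
      _ = ((q:ℂ)+k) * cc q k * z ^ k := by rw [h]
  have hSq : Summable (fun k : ℕ => (q:ℂ) * (cc q k * z ^ k)) := hS0.mul_left _
  have e2 : (q:ℂ) * Fc q z = ∑' k : ℕ, (q:ℂ) * (cc q k * z ^ k) := by
    rw [Fc, tsum_mul_left]
  have hSk : Summable (fun k : ℕ => (k:ℂ) * cc q k * z ^ k) := by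
    have := hS1'.sub hSq
    apply this.congr
    intro k; ring
  have e3 : Fc' q z - (q:ℂ) * Fc q z = ∑' k : ℕ, (k:ℂ) * cc q k * z ^ k := by
    rw [e1, e2, ← Summable.tsum_sub hS1' hSq]
    congr 1; funext k; ring
  have e4 : ∑' k : ℕ, (k:ℂ) * cc q k * z ^ k = z * Fc' q z := by
    rw [Summable.tsum_eq_zero_add hSk]
    simp only [Nat.cast_zero, zero_mul, zero_add]
    rw [e1, ← tsum_mul_left]
    congr 1
    funext k
    have h := cc_rec q k
    push_cast
    calc ((k:ℂ)+1) * cc q (k+1) * z ^ (k+1) = (((k:ℂ)+1) * cc q (k+1)) * z ^ (k+1) := by ring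
      _ = ((q:ℂ)+k) * cc q k * z ^ (k+1) := by rw [h]
      _ = z * (((q:ℂ)+k) * cc q k * z ^ k) := by ring
  have h5 : Fc' q z - (q:ℂ) * Fc q z = z * Fc' q z := by rw [e3, e4]
  linear_combination h5

set_option maxHeartbeats 800000 in
theorem binom (q : ℝ) {w : ℂ} (hw : ‖w‖ < 1) :
    HasSum (fun k : ℕ => cc q k * w ^ k) ((1 - w) ^ (-(q:ℂ))) := by
  classical
  set r : ℝ := (1 + ‖w‖) / 2 with hr
  have hw0 : 0 ≤ ‖w‖ := norm_nonneg w
  have hr0 : 0 < r := by rw [hr]; linarith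
  have hr1 : r < 1 := by rw [hr]; linarith
  have hwr : ‖w‖ < r := by rw [hr]; linarith
  have hmem : ∀ z : ℂ, z ∈ Metric.ball (0:ℂ) r → ‖z‖ < r := by
    intro z hz
    simpa [Complex.dist_eq] using hz
  have hmem1 : ∀ z : ℂ, z ∈ Metric.ball (0:ℂ) r → ‖z‖ < 1 :=
    fun z hz => lt_trans (hmem z hz) hr1
  have hws : w ∈ Metric.ball (0:ℂ) r := by
    simp only [Metric.mem_ball, Complex.dist_eq, sub_zero]
    exact hwr
  have h0s : (0:ℂ) ∈ Metric.ball (0:ℂ) r := by simp [Metric.mem_ball, hr0]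
  have hzne : ∀ z ∈ Metric.ball (0:ℂ) r, (1:ℂ) - z ≠ 0 := by
    intro z hz h
    have hz1 : z = 1 := by linear_combination -h
    rw [hz1] at hz
    have := hmem1 1 hz
    simp at this
  have hslit : ∀ z ∈ Metric.ball (0:ℂ) r, (1:ℂ) - z ∈ Complex.slitPlane := by
    intro z hz
    rw [Complex.mem_slitPlane_iff]
    left
    have h1 : z.re ≤ ‖z‖ := Complex.re_le_norm z
    have := hmem1 z hz
    simp only [Complex.sub_re, Complex.one_re]
    linarith
  have hΦderiv : ∀ z ∈ Metric.ball (0:ℂ) r,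
      HasDerivAt (fun z => Fc q z * (1 - z) ^ (q:ℂ)) 0 z := by
    intro z hz
    have hd1 : HasDerivAt (Fc q) (Fc' q z) z := Fc_hasDeriv q hr0 hr1 hz
    have hd2 : HasDerivAt (fun z : ℂ => (1 - z) ^ (q:ℂ))
        ((q:ℂ) * (1 - z) ^ ((q:ℂ) - 1) * (-1)) z :=
      HasDerivAt.cpow_const ((hasDerivAt_id z).const_sub 1) (hslit z hz)
    have h := hd1.mul hd2
    refine h.congr_deriv ?_
    symm
    have hpow : (1 - z) ^ (q:ℂ) = (1 - z) ^ ((q:ℂ)-1) * (1 - z) := by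
      rw [show ((q:ℂ)) = ((q:ℂ)-1) + 1 by ring]
      rw [Complex.cpow_add _ _ (hzne z hz), Complex.cpow_one]
      ring_nf
    rw [hpow]
    have := Fc_ode q (hmem1 z hz)
    linear_combination -((1-z) ^ ((q:ℂ)-1)) * this
  have hconst : Fc q w * (1 - w) ^ (q:ℂ) = Fc q 0 * (1 - 0) ^ (q:ℂ) := by
    apply Convex.is_const_of_fderivWithin_eq_zero (𝕜 := ℂ) (convex_ball (0:ℂ) r)
      (fun z hz => ((hΦderiv z hz).differentiableAt).differentiableWithinAt) _ hws h0s
    intro z hz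
    have h1 : HasFDerivAt (fun z => Fc q z * (1 - z) ^ (q:ℂ)) (0 : ℂ →L[ℂ] ℂ) z := by
      have hh := (hΦderiv z hz).hasFDerivAt
      have h0 : ContinuousLinearMap.toSpanSingleton ℂ (0:ℂ) = 0 := by
        ext x; simp
      rwa [h0] at hh
    rw [fderivWithin_eq_fderiv (Metric.isOpen_ball.uniqueDiffWithinAt hz) h1.differentiableAt]
    exact h1.fderiv
  have hF0 : Fc q 0 = 1 := by
    rw [Fc]
    rw [tsum_eq_single 0]
    · simp [cc]
    · intro k hk
      simp [zero_pow hk]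
  have hkey : Fc q w * (1 - w) ^ (q:ℂ) = 1 := by
    rw [hconst, hF0]
    simp
  have hpne : (1 - w) ^ (q:ℂ) ≠ 0 := by
    intro h
    rcases (Complex.cpow_eq_zero_iff _ _).1 h with ⟨h1, _⟩
    exact hzne w hws h1
  have hFw : Fc q w = (1 - w) ^ (-(q:ℂ)) := by
    rw [Complex.cpow_neg]
    field_simp
    linear_combination hkey
  have hsum := (summable_cc_pow q hw).hasSum
  rwa [show ∑' k : ℕ, cc q k * w ^ k = (1 - w) ^ (-(q:ℂ)) from hFw] at hsum


def gam (q t : ℝ) (k : ℕ) : ℝ := (ascPochhammer ℝ k).eval q / k.factorial * (-t)^k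

def wf (t φ : ℝ) : ℂ := ((-t : ℝ) : ℂ) * Complex.exp ((φ:ℂ) * Complex.I)

def Gd (q t : ℝ) (p : ℕ × ℕ) (φ : ℝ) : ℝ :=
  gam q t p.1 * gam q t p.2 * Real.cos ((p.1:ℝ)*φ - (p.2:ℝ)*φ)

lemma abs_wf (t φ : ℝ) (ht0 : 0 ≤ t) : ‖wf t φ‖ = t := by
  rw [wf, norm_mul, Complex.norm_real, Real.norm_eq_abs, Complex.norm_exp]
  have h : ((φ:ℂ) * Complex.I).re = 0 := by simp
  rw [h, Real.exp_zero, mul_one, abs_neg, _root_.abs_of_nonneg ht0]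

lemma cc_wf_pow (q t φ : ℝ) (k : ℕ) :
    cc q k * wf t φ ^ k
      = ((gam q t k : ℝ) : ℂ) * Complex.exp ((((k:ℝ) * φ : ℝ) : ℂ) * Complex.I) := by
  rw [wf, mul_pow, ← Complex.exp_nat_mul, cc, gam]
  push_cast
  rw [show (k:ℂ) * ((φ:ℂ) * Complex.I) = ((k:ℂ)*(φ:ℂ)) * Complex.I by ring]
  ring

lemma term_aux (a b u v : ℝ) :
    (((a:ℝ):ℂ) * Complex.exp ((u:ℂ) * Complex.I)) * (((b:ℝ):ℂ) * Complex.exp ((v:ℂ) * Complex.I))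
      = (((a*b : ℝ):ℂ)) * Complex.exp ((((u+v):ℝ):ℂ) * Complex.I) := by
  rw [show ((((u+v):ℝ):ℂ)) * Complex.I = (u:ℂ)*Complex.I + (v:ℂ)*Complex.I by push_cast; ring,
     Complex.exp_add]
  push_cast
  ring

lemma norm_cc_wf (q t φ : ℝ) (ht0 : 0 ≤ t) (k : ℕ) :
    ‖cc q k * wf t φ ^ k‖ = |(ascPochhammer ℝ k).eval q| / k.factorial * t^k := by
  rw [norm_mul, norm_cc, norm_pow, abs_wf t φ ht0]

set_option maxHeartbeats 1000000 in
lemma key1 (q t : ℝ) (ht0 : 0 < t) (ht1 : t < 1) (φ : ℝ) :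
    HasSum (fun p : ℕ × ℕ => Gd q t p φ) ((1 + 2*t*Real.cos φ + t^2) ^ (-q)) := by
  have habs1 : ‖wf t φ‖ < 1 := by rw [abs_wf t φ ht0.le]; exact ht1
  have habs2 : ‖wf t (-φ)‖ < 1 := by rw [abs_wf t (-φ) ht0.le]; exact ht1
  have hA := binom q habs1
  have hB := binom q habs2
  have hXre : (1 - wf t φ).re = 1 + t * Real.cos φ := by
    rw [wf]
    simp only [Complex.sub_re, Complex.one_re, Complex.re_ofReal_mul,
      Complex.exp_ofReal_mul_I_re]
    ring
  have hXim : (1 - wf t φ).im = t * Real.sin φ := by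
    rw [wf]
    simp only [Complex.sub_im, Complex.one_im, Complex.im_ofReal_mul,
      Complex.exp_ofReal_mul_I_im]
    ring
  have hcos := Real.neg_one_le_cos φ
  have hXrepos : 0 < (1 - wf t φ).re := by rw [hXre]; nlinarith
  have hXne : (1 - wf t φ) ≠ 0 := by
    intro h
    rw [h] at hXrepos
    simp at hXrepos
  have hXarg : (1 - wf t φ).arg ≠ Real.pi := by
    intro h
    rcases Complex.arg_eq_pi_iff.1 h with ⟨h1, _⟩
    linarith
  have hYconj : 1 - wf t (-φ) = (starRingEnd ℂ) (1 - wf t φ) := by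
    rw [wf, wf, map_sub, map_one, map_mul, Complex.conj_ofReal, ← Complex.exp_conj]
    congr 2
    rw [map_mul, Complex.conj_ofReal, Complex.conj_I]
    push_cast
    ring
  have hBA : (1 - wf t (-φ)) ^ (-(q:ℂ)) = (starRingEnd ℂ) ((1 - wf t φ) ^ (-(q:ℂ))) := by
    rw [hYconj, Complex.conj_cpow _ _ hXarg]
    congr 2
    rw [map_neg, Complex.conj_ofReal]
  have hn1 : Summable (fun k : ℕ => ‖cc q k * wf t φ ^ k‖) :=
    (summable_cc q ht0.le ht1).congr (fun k => (norm_cc_wf q t φ ht0.le k).symm)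
  have hn2 : Summable (fun k : ℕ => ‖cc q k * wf t (-φ) ^ k‖) :=
    (summable_cc q ht0.le ht1).congr (fun k => (norm_cc_wf q t (-φ) ht0.le k).symm)
  have hmulsum : Summable (fun p : ℕ × ℕ => (cc q p.1 * wf t φ ^ p.1) * (cc q p.2 * wf t (-φ) ^ p.2)) :=
    summable_mul_of_summable_norm (f := fun k : ℕ => cc q k * wf t φ ^ k)
      (g := fun k : ℕ => cc q k * wf t (-φ) ^ k) hn1 hn2
  have hprod := hA.mul hB hmulsum
  have hre := Complex.hasSum_re hprod
  have habspos : 0 < ‖1 - wf t φ‖ := norm_pos_iff.2 hXne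
  have hval : (((1 - wf t φ) ^ (-(q:ℂ))) * ((1 - wf t (-φ)) ^ (-(q:ℂ)))).re
      = (1 + 2*t*Real.cos φ + t^2) ^ (-q) := by
    rw [hBA, Complex.mul_conj, Complex.ofReal_re, Complex.normSq_eq_norm_sq,
       Complex.norm_cpow_of_ne_zero hXne]
    simp only [Complex.neg_re, Complex.ofReal_re, Complex.neg_im, Complex.ofReal_im,
      neg_zero, zero_mul, mul_zero, Real.exp_zero, div_one]
    have hns : Complex.normSq (1 - wf t φ) = 1 + 2*t*Real.cos φ + t^2 := by
      rw [Complex.normSq_apply, hXre, hXim]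
      have h := Real.sin_sq_add_cos_sq φ
      nlinarith [h]
    have e1 : (‖1 - wf t φ‖ ^ (-q))^(2:ℕ)
        = ‖1 - wf t φ‖ ^ ((-q) * (2:ℕ)) := by
      rw [← Real.rpow_natCast (‖1 - wf t φ‖ ^ (-q)) 2,
        ← Real.rpow_mul habspos.le]
    rw [e1, show (-q) * ((2:ℕ):ℝ) = ((2:ℕ):ℝ) * (-q) by ring,
      Real.rpow_mul habspos.le, Real.rpow_natCast, Complex.sq_norm, hns]
  have hterm : ∀ p : ℕ × ℕ,
      ((cc q p.1 * wf t φ ^ p.1) * (cc q p.2 * wf t (-φ) ^ p.2)).re = Gd q t p φ := by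
    intro p
    rw [cc_wf_pow, cc_wf_pow, term_aux, Complex.re_ofReal_mul, Complex.exp_ofReal_mul_I_re]
    rw [Gd, show (p.1:ℝ)*φ + (p.2:ℝ)*(-φ) = (p.1:ℝ)*φ - (p.2:ℝ)*φ by ring]
  rw [← hval]
  have heq : (fun p : ℕ × ℕ => ((cc q p.1 * wf t φ ^ p.1) * (cc q p.2 * wf t (-φ) ^ p.2)).re)
      = fun p => Gd q t p φ := funext hterm
  rw [← heq]
  exact hre
  

end Stmt4Aux

end

open Stmt4Aux

theorem stmt4 (q x : ℝ) (hx : x ∈ Set.Ioo (0 : ℝ) (1 / 2)) :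
    ∃ S : ℝ,
      HasSum
        (fun k : ℕ =>
          ((ascPochhammer ℝ k).eval q) ^ 2 / ((k.factorial : ℝ)) ^ 2 *
            (x / (x - 1)) ^ (2 * k)) S ∧
      (1 - x) ^ (-(2 * q)) * S =
        1 / Real.pi *
          ∫ φ in (0 : ℝ)..Real.pi,
            (1 - 4 * x * (1 - x) * Real.sin (φ / 2) ^ 2) ^ (-q) := by
  obtain ⟨hx0, hx2⟩ := hx
  have h1x : (0:ℝ) < 1 - x := by linarith
  set t : ℝ := x / (1-x) with htdef
  have ht0 : 0 < t := div_pos hx0 h1x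
  have ht1 : t < 1 := by rw [htdef, div_lt_one h1x]; linarith
  have hxt : x / (x - 1) = -t := by
    rw [htdef]
    rw [show x - 1 = -(1-x) by ring, div_neg]
  -- the statement's summand equals (gam q t k)^2
  have hfun : (fun k : ℕ => ((ascPochhammer ℝ k).eval q)^2 / ((k.factorial:ℝ))^2
        * (x/(x-1))^(2*k)) = fun k => (gam q t k)^2 := by
    funext k
    rw [hxt, gam, mul_pow, div_pow, ← pow_mul, Nat.mul_comm k 2]
  -- summability of gam^2
  obtain ⟨M, hM⟩ := exists_nat_ge |q|
  have hcc : ∀ k : ℕ, |(ascPochhammer ℝ k).eval q| / k.factorial ≤ ((k:ℝ)+1)^M := by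
    intro k
    rw [div_le_iff₀ (by positivity)]
    calc |(ascPochhammer ℝ k).eval q| ≤ k.factorial * (k+1)^M := poch_bound q M hM k
      _ = ((k:ℝ)+1)^M * k.factorial := by ring
  have habsgam : ∀ k : ℕ, |gam q t k|
      = |(ascPochhammer ℝ k).eval q| / k.factorial * t^k := by
    intro k
    rw [gam, abs_mul, abs_div, _root_.abs_pow, abs_neg, Nat.abs_cast, _root_.abs_of_pos ht0]
  have hsumabs : Summable (fun k : ℕ => |gam q t k|) :=
    (summable_cc q ht0.le ht1).congr (fun k => (habsgam k).symm)
  have hsumsq : Summable (fun k : ℕ => (gam q t k)^2) := by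
    have ht20 : (0:ℝ) ≤ t^2 := sq_nonneg t
    have ht21 : t^2 < 1 := by nlinarith
    apply Summable.of_nonneg_of_le (fun k => sq_nonneg _) _ (summable_pow_mul (2*M) ht20 ht21)
    intro k
    have h2 : |gam q t k| ≤ ((k:ℝ)+1)^M * t^k := by
      rw [habsgam k]
      exact mul_le_mul_of_nonneg_right (hcc k) (by positivity)
    calc (gam q t k)^2 = |gam q t k|^2 := (_root_.sq_abs _).symm
      _ ≤ (((k:ℝ)+1)^M * t^k)^2 := by
          apply pow_le_pow_left₀ (abs_nonneg _) h2
      _ = ((k:ℝ)+1)^(2*M) * (t^2)^k := by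
          rw [mul_pow, ← pow_mul, ← pow_mul, Nat.mul_comm M 2, Nat.mul_comm k 2, pow_mul t 2 k]
  -- pointwise identity for the integrand
  have hRpos : ∀ φ : ℝ, (0:ℝ) < 1 + 2*t*Real.cos φ + t^2 := by
    intro φ
    nlinarith [Real.neg_one_le_cos φ, sq_nonneg (1-t)]
  have hpointwise : ∀ φ : ℝ, (1 - 4*x*(1-x)*Real.sin (φ/2)^2) ^ (-q)
      = (1-x)^(-(2*q)) * ∑' p : ℕ×ℕ, Gd q t p φ := by
    intro φ
    rw [(key1 q t ht0 ht1 φ).tsum_eq]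
    have hsin : Real.sin (φ/2)^2 = 1/2 - Real.cos φ / 2 := by
      rw [Real.sin_sq, Real.cos_sq, show 2*(φ/2) = φ by ring]
      ring
    have hbase : 1 - 4*x*(1-x)*Real.sin (φ/2)^2 = (1-x)^2 * (1 + 2*t*Real.cos φ + t^2) := by
      rw [hsin, htdef]
      field_simp
      ring
    rw [hbase, Real.mul_rpow (sq_nonneg _) (hRpos φ).le]
    congr 1
    rw [← Real.rpow_natCast (1-x) 2, ← Real.rpow_mul h1x.le,
      show ((2:ℕ):ℝ) * (-q) = -(2*q) by push_cast; ring]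
  -- integrability and sum of integrals
  have hcont : ∀ p : ℕ×ℕ, Continuous (fun φ : ℝ => Gd q t p φ) := by
    intro p
    unfold Gd
    fun_prop
  have hint : ∀ p : ℕ×ℕ, Integrable (fun φ : ℝ => Gd q t p φ)
      (volume.restrict (Set.Ioc (0:ℝ) Real.pi)) := fun p => (hcont p).integrableOn_Ioc
  have hbound : ∀ p : ℕ×ℕ, (∫ φ in Set.Ioc (0:ℝ) Real.pi, ‖Gd q t p φ‖)
      ≤ |gam q t p.1| * |gam q t p.2| * Real.pi := by
    intro p
    have h1 : (fun φ => ‖Gd q t p φ‖) ≤ fun _ => |gam q t p.1| * |gam q t p.2| := by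
      intro φ
      dsimp only
      rw [Real.norm_eq_abs]
      simp only [Gd]
      rw [abs_mul, abs_mul]
      calc |gam q t p.1| * |gam q t p.2| * |Real.cos ((p.1:ℝ)*φ - (p.2:ℝ)*φ)|
          ≤ |gam q t p.1| * |gam q t p.2| * 1 := by
            apply mul_le_mul_of_nonneg_left (Real.abs_cos_le_one _) (by positivity)
        _ = |gam q t p.1| * |gam q t p.2| := by ring
    calc (∫ φ in Set.Ioc (0:ℝ) Real.pi, ‖Gd q t p φ‖)
        ≤ ∫ _ in Set.Ioc (0:ℝ) Real.pi, |gam q t p.1| * |gam q t p.2| :=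
          integral_mono (hint p).norm (integrable_const _) h1
      _ = |gam q t p.1| * |gam q t p.2| * Real.pi := by
          rw [integral_const]
          simp [Real.volume_Ioc, ENNReal.toReal_ofReal Real.pi_nonneg, max_eq_left Real.pi_nonneg]
          ring
  have hsumint : Summable (fun p : ℕ×ℕ => ∫ φ in Set.Ioc (0:ℝ) Real.pi, ‖Gd q t p φ‖) := by
    apply Summable.of_nonneg_of_le
      (fun p => integral_nonneg (fun φ => norm_nonneg _)) hbound
    have h2 : Summable (fun p : ℕ×ℕ => |gam q t p.1| * |gam q t p.2|) := by
      apply summable_mul_of_summable_norm (f := fun k : ℕ => |gam q t k|)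
        (g := fun k : ℕ => |gam q t k|) <;>
      · simpa [Real.norm_eq_abs, _root_.abs_abs] using hsumabs
    exact h2.mul_right Real.pi
  have hswap : (∫ φ in Set.Ioc (0:ℝ) Real.pi, ∑' p : ℕ×ℕ, Gd q t p φ)
      = ∑' p : ℕ×ℕ, ∫ φ in Set.Ioc (0:ℝ) Real.pi, Gd q t p φ :=
    (integral_tsum_of_summable_integral_norm hint hsumint).symm
  -- individual integrals
  have hIval : ∀ p : ℕ×ℕ, (∫ φ in Set.Ioc (0:ℝ) Real.pi, Gd q t p φ)
      = if p.1 = p.2 then gam q t p.1 * gam q t p.2 * Real.pi else 0 := by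
    intro p
    rw [← intervalIntegral.integral_of_le Real.pi_nonneg]
    rcases eq_or_ne p.1 p.2 with h|h
    · rw [if_pos h]
      have heq : Set.EqOn (fun φ : ℝ => Gd q t p φ)
          (fun _ => gam q t p.1 * gam q t p.2) (Set.uIcc 0 Real.pi) := by
        intro φ _
        simp only [Gd]
        rw [h, show (p.2:ℝ)*φ - (p.2:ℝ)*φ = 0 by ring, Real.cos_zero, mul_one]
      rw [intervalIntegral.integral_congr heq, intervalIntegral.integral_const]
      simp
      ring
    · rw [if_neg h]
      have hc : ((p.1:ℝ) - (p.2:ℝ)) ≠ 0 := by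
        rw [sub_ne_zero]
        exact_mod_cast h
      have heq : Set.EqOn (fun φ : ℝ => Gd q t p φ)
          (fun φ => gam q t p.1 * gam q t p.2 * Real.cos (((p.1:ℝ) - (p.2:ℝ)) * φ))
          (Set.uIcc 0 Real.pi) := by
        intro φ _
        simp only [Gd]
        rw [show (p.1:ℝ)*φ - (p.2:ℝ)*φ = ((p.1:ℝ) - (p.2:ℝ))*φ by ring]
      rw [intervalIntegral.integral_congr heq, intervalIntegral.integral_const_mul,
        intervalIntegral.integral_comp_mul_left (fun y => Real.cos y) hc, integral_cos]
      have hs : Real.sin (((p.1:ℝ) - (p.2:ℝ)) * Real.pi) = 0 := by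
        have h2 := Real.sin_int_mul_pi ((p.1:ℤ) - (p.2:ℤ))
        push_cast at h2
        exact h2
      rw [mul_zero, Real.sin_zero, hs]
      simp
  -- diagonal sum
  have hdiag : (∑' p : ℕ×ℕ, if p.1 = p.2 then gam q t p.1 * gam q t p.2 * Real.pi else 0)
      = (∑' k : ℕ, (gam q t k)^2) * Real.pi := by
    have hinj : Function.Injective (fun k : ℕ => ((k, k) : ℕ×ℕ)) := by
      intro a b hab
      simpa using congrArg Prod.fst hab
    have hsupp : Function.support (fun p : ℕ×ℕ =>
        if p.1 = p.2 then gam q t p.1 * gam q t p.2 * Real.pi else 0)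
        ⊆ Set.range (fun k : ℕ => ((k, k) : ℕ×ℕ)) := by
      intro p hp
      by_cases h : p.1 = p.2
      · exact ⟨p.1, by rw [Prod.ext_iff]; exact ⟨rfl, h⟩⟩
      · exact absurd (by simp [h]) hp
    rw [← Function.Injective.tsum_eq hinj hsupp, ← tsum_mul_right]
    congr 1
    funext k
    simp [sq]
  -- assemble
  refine ⟨∑' k : ℕ, (gam q t k)^2, ?_, ?_⟩
  · rw [hfun]
    exact hsumsq.hasSum
  · have hInt1 : (∫ φ in (0:ℝ)..Real.pi, (1 - 4*x*(1-x)*Real.sin (φ/2)^2) ^ (-q))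
        = (1-x)^(-(2*q)) * ((∑' k : ℕ, (gam q t k)^2) * Real.pi) := by
      rw [intervalIntegral.integral_congr (fun φ _ => hpointwise φ),
        intervalIntegral.integral_const_mul,
        intervalIntegral.integral_of_le Real.pi_nonneg, hswap]
      congr 1
      rw [← hdiag]
      congr 1
      funext p
      exact hIval p
    rw [hInt1]
    have hπ : Real.pi ≠ 0 := Real.pi_ne_zero
    field_simp
end

section
/- For every natural number n ≥ 0 and every real x with x ≠ 1/2 and x ≠ 1, the identity (1−x)^{2n} · Σ_{k=0}^{n} ( ((−n)_k)² / (k!)² ) · ( x/(x−1) )^{2k} = (1−2x)^{n} · Σ_{k=0}^{n} ( (−n)_k·(1+n)_k / (k!)² ) · ( x²/(2x−1) )^{k} holds, where (a)_k = a(a+1)⋯(a+k−1) is the ascending Pochhammer symbol. -/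
open Finset

private lemma vand (n j : ℕ) :
    ∑ k ∈ range (j + 1), n.choose k * j.choose k = (n + j).choose j := by
  rw [Nat.add_choose_eq, Finset.Nat.sum_antidiagonal_eq_sum_range_succ_mk]
  refine Finset.sum_congr rfl fun k hk => ?_
  have hkj : k ≤ j := Nat.lt_succ_iff.mp (Finset.mem_range.mp hk)
  rw [Nat.choose_symm hkj]

private lemma vand' (n j : ℕ) :
    ∑ k ∈ range (j + 1), n.choose k * j.choose k = (n + j).choose j := vand n j

private lemma core (n j : ℕ) (hj : j ≤ n) :
    ∑ k ∈ range (j + 1), n.choose k * n.choose k * (n - k).choose (j - k)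
      = n.choose j * (n + j).choose j := by
  have : ∀ k ∈ range (j + 1),
      n.choose k * n.choose k * (n - k).choose (j - k)
        = n.choose j * (n.choose k * j.choose k) := by
    intro k hk
    have hkj : k ≤ j := Nat.lt_succ_iff.mp (Finset.mem_range.mp hk)
    have := Nat.choose_mul (n := n) (k := j) (s := k) hkj
    calc n.choose k * n.choose k * (n - k).choose (j - k)
        = n.choose k * (n.choose k * (n - k).choose (j - k)) := by ring
      _ = n.choose k * (n.choose j * j.choose k) := by rw [← this]
      _ = n.choose j * (n.choose k * j.choose k) := by ring
  rw [Finset.sum_congr rfl this, ← Finset.mul_sum, vand]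

private lemma swap_tri (n : ℕ) (f : ℕ → ℕ → ℝ) :
    ∑ k ∈ range (n + 1), ∑ i ∈ range (n - k + 1), f k (k + i)
      = ∑ j ∈ range (n + 1), ∑ k ∈ range (j + 1), f k j := by
  rw [Finset.sum_sigma', Finset.sum_sigma']
  refine Finset.sum_nbij' (fun p => ⟨p.1 + p.2, p.1⟩) (fun p => ⟨p.2, p.1 - p.2⟩)
    ?_ ?_ ?_ ?_ ?_
  · rintro ⟨k, i⟩ h
    simp only [Finset.mem_sigma, Finset.mem_range] at h ⊢
    omega
  · rintro ⟨j, k⟩ h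
    simp only [Finset.mem_sigma, Finset.mem_range] at h ⊢
    omega
  · rintro ⟨k, i⟩ h
    simp only [Finset.mem_sigma, Finset.mem_range] at h
    simp only [Sigma.mk.inj_iff, heq_eq_eq]
    refine ⟨trivial, by omega⟩
  · rintro ⟨j, k⟩ h
    simp only [Finset.mem_sigma, Finset.mem_range] at h
    simp only [Sigma.mk.inj_iff, heq_eq_eq]
    constructor
    · omega
    · simp
  · rintro ⟨k, i⟩ h
    rfl

private lemma poly_id (n : ℕ) (y w : ℝ) :
    ∑ k ∈ range (n + 1), (n.choose k : ℝ) ^ 2 * y ^ k * (y + w) ^ (n - k)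
      = ∑ j ∈ range (n + 1), (n.choose j : ℝ) * ((n + j).choose j : ℝ) * y ^ j * w ^ (n - j) := by
  have expand : ∀ k ∈ range (n + 1),
      (n.choose k : ℝ) ^ 2 * y ^ k * (y + w) ^ (n - k)
        = ∑ i ∈ range (n - k + 1),
            (n.choose k : ℝ) ^ 2 * ((n - k).choose i : ℝ) * y ^ (k + i) * w ^ (n - k - i) := by
    intro k hk
    rw [add_pow, Finset.mul_sum]
    refine Finset.sum_congr rfl fun i hi => ?_
    rw [pow_add]
    ring
  rw [Finset.sum_congr rfl expand]
  have := swap_tri n (fun k j =>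
    (n.choose k : ℝ) ^ 2 * ((n - k).choose (j - k) : ℝ) * y ^ j * w ^ (n - j))
  simp only [Nat.add_sub_cancel_left] at this
  have heq : ∀ k ∈ range (n + 1), ∑ i ∈ range (n - k + 1),
      (n.choose k : ℝ) ^ 2 * ((n - k).choose i : ℝ) * y ^ (k + i) * w ^ (n - k - i)
      = ∑ i ∈ range (n - k + 1),
      (n.choose k : ℝ) ^ 2 * ((n - k).choose i : ℝ) * y ^ (k + i) * w ^ (n - (k + i)) := by
    intro k hk
    refine Finset.sum_congr rfl fun i hi => ?_
    rw [Nat.sub_sub]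
  rw [Finset.sum_congr rfl heq, this]
  refine Finset.sum_congr rfl fun j hj => ?_
  have hjn : j ≤ n := Nat.lt_succ_iff.mp (Finset.mem_range.mp hj)
  have hc := core n j hjn
  calc ∑ k ∈ range (j + 1),
        (n.choose k : ℝ) ^ 2 * ((n - k).choose (j - k) : ℝ) * y ^ j * w ^ (n - j)
      = (∑ k ∈ range (j + 1),
          ((n.choose k * n.choose k * (n - k).choose (j - k) : ℕ) : ℝ)) * (y ^ j * w ^ (n - j)) := by
        rw [Finset.sum_mul]
        refine Finset.sum_congr rfl fun k hk => ?_
        push_cast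
        ring
    _ = (n.choose j : ℝ) * ((n + j).choose j : ℝ) * y ^ j * w ^ (n - j) := by
        rw [← Nat.cast_sum, hc]
        push_cast
        ring

theorem stmt5 (n : ℕ) (x : ℝ) (hx2 : x ≠ 1 / 2) (hx1 : x ≠ 1) :
    (1 - x) ^ (2 * n) *
        ∑ k ∈ Finset.range (n + 1),
          ((ascPochhammer ℝ k).eval (-(n : ℝ))) ^ 2 / ((k.factorial : ℝ)) ^ 2 *
            (x / (x - 1)) ^ (2 * k) =
      (1 - 2 * x) ^ n *
        ∑ k ∈ Finset.range (n + 1),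
          ((ascPochhammer ℝ k).eval (-(n : ℝ)) * (ascPochhammer ℝ k).eval (1 + (n : ℝ))) /
              ((k.factorial : ℝ)) ^ 2 *
            (x ^ 2 / (2 * x - 1)) ^ k := by
  have hx1' : x - 1 ≠ 0 := sub_ne_zero.mpr hx1
  have hx2' : 2 * x - 1 ≠ 0 := by
    intro h; apply hx2; linarith [sub_eq_zero.mp h]
  have hasc_neg : ∀ k : ℕ, (ascPochhammer ℝ k).eval (-(n : ℝ))
      = (-1) ^ k * (k.factorial : ℝ) * (n.choose k : ℝ) := by
    intro k
    rw [ascPochhammer_eval_neg_eq_descPochhammer, descPochhammer_eval_eq_descFactorial,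
      Nat.descFactorial_eq_factorial_mul_choose]
    push_cast
    ring
  have hasc_pos : ∀ k : ℕ, (ascPochhammer ℝ k).eval (1 + (n : ℝ))
      = (k.factorial : ℝ) * ((n + k).choose k : ℝ) := by
    intro k
    have : (1 + (n : ℝ)) = ((n + 1 : ℕ) : ℝ) := by push_cast; ring
    rw [this, ← ascPochhammer_eval_cast, ascPochhammer_nat_eq_ascFactorial,
      Nat.ascFactorial_eq_factorial_mul_choose]
    push_cast
    ring
  have hfac : ∀ k : ℕ, ((k.factorial : ℝ)) ≠ 0 := fun k => Nat.cast_ne_zero.mpr k.factorial_ne_zero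
  -- LHS simplification
  have hL : (1 - x) ^ (2 * n) *
        ∑ k ∈ Finset.range (n + 1),
          ((ascPochhammer ℝ k).eval (-(n : ℝ))) ^ 2 / ((k.factorial : ℝ)) ^ 2 *
            (x / (x - 1)) ^ (2 * k)
      = ∑ k ∈ range (n + 1),
          (n.choose k : ℝ) ^ 2 * (x ^ 2) ^ k * ((x ^ 2) + (1 - 2 * x)) ^ (n - k) := by
    rw [Finset.mul_sum]
    refine Finset.sum_congr rfl fun k hk => ?_
    have hkn : k ≤ n := Nat.lt_succ_iff.mp (Finset.mem_range.mp hk)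
    rw [hasc_neg k]
    have e0 : (x ^ 2) + (1 - 2 * x) = (x - 1) ^ 2 := by ring
    have e1 : (1 - x) ^ (2 * n) = (x - 1) ^ (2 * k) * ((x - 1) ^ 2) ^ (n - k) := by
      have : (1 - x) ^ (2 * n) = ((x - 1) ^ 2) ^ n := by
        rw [← pow_mul]
        have : ((1 : ℝ) - x) ^ 2 = (x - 1) ^ 2 := by ring
        rw [pow_mul, this, ← pow_mul, mul_comm 2 n, pow_mul]
      rw [this, ← pow_mul, ← pow_mul, ← pow_add]
      congr 1
      omega
    rw [e0, e1, div_pow, mul_pow, mul_pow, ← pow_mul, ← pow_mul, ← pow_mul]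
    have hxk : (x - 1) ^ (2 * k) ≠ 0 := pow_ne_zero _ hx1'
    field_simp
    ring_nf
    simp [pow_mul', neg_one_sq]
  -- RHS simplification
  have hR : (1 - 2 * x) ^ n *
        ∑ k ∈ Finset.range (n + 1),
          ((ascPochhammer ℝ k).eval (-(n : ℝ)) * (ascPochhammer ℝ k).eval (1 + (n : ℝ))) /
              ((k.factorial : ℝ)) ^ 2 *
            (x ^ 2 / (2 * x - 1)) ^ k
      = ∑ k ∈ range (n + 1),
          (n.choose k : ℝ) * ((n + k).choose k : ℝ) * (x ^ 2) ^ k * (1 - 2 * x) ^ (n - k) := by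
    rw [Finset.mul_sum]
    refine Finset.sum_congr rfl fun k hk => ?_
    have hkn : k ≤ n := Nat.lt_succ_iff.mp (Finset.mem_range.mp hk)
    rw [hasc_neg k, hasc_pos k]
    have e1 : (1 - 2 * x) ^ n = (1 - 2 * x) ^ k * (1 - 2 * x) ^ (n - k) := by
      rw [← pow_add]; congr 1; omega
    have e2 : ((-1 : ℝ)) ^ k * (1 - 2 * x) ^ k = (2 * x - 1) ^ k := by
      rw [← mul_pow]; congr 1; ring
    rw [e1, div_pow]
    have hxk : (2 * x - 1) ^ k ≠ 0 := pow_ne_zero _ hx2'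
    field_simp
    rw [← e2]
    ring
  rw [hL, hR]
  exact poly_id n (x ^ 2) (1 - 2 * x)
end

section
/- For every natural number n ≥ 1 and every real x ∈ [0, 1/2), the series G_n(−x) := Σ_{k=0}^{∞} ( C(n+k−1,k)·(−x)^k·(1−x)^{−n−k} )² converges and equals (1−2x)^{1−2n} · F_{n−1}(x), where F_{n−1}(x) := Σ_{k=0}^{n−1} ( C(n−1,k)·x^k·(1−x)^{n−1−k} )². -/
open Finset

/-- Inner sum: `∑ r, C(N,r)² C(r,t) = C(N,t) C(2N−t, N)` for `t ≤ N`. -/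
lemma stmt6_inner_sum (N t : ℕ) (ht : t ≤ N) :
    ∑ r ∈ range (N + 1), N.choose r ^ 2 * r.choose t
      = N.choose t * (2 * N - t).choose N := by
  have h1 : ∑ r ∈ range (N + 1), N.choose r ^ 2 * r.choose t
      = ∑ r ∈ Finset.Ico t (N + 1), N.choose r ^ 2 * r.choose t := by
    rw [range_eq_Ico]
    refine (Finset.sum_subset (Finset.Ico_subset_Ico (Nat.zero_le t) le_rfl)
      (fun r hr hrn => ?_)).symm
    have : r < t := by
      simp only [Finset.mem_Ico] at hr hrn; omega
    simp [Nat.choose_eq_zero_of_lt this]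
  rw [h1, Finset.sum_Ico_eq_sum_range]
  have h2 : ∀ u ∈ range (N + 1 - t),
      N.choose (t + u) ^ 2 * (t + u).choose t
        = N.choose t * (N.choose (t + u) * (N - t).choose u) := by
    intro u hu
    have hu' : u ≤ N - t := by simp only [mem_range] at hu; omega
    have htr : N.choose (t + u) * (t + u).choose t
        = N.choose t * (N - t).choose (t + u - t) :=
      Nat.choose_mul (by omega)
    rw [pow_two]
    rw [mul_assoc, htr]
    rw [show t + u - t = u by omega]
    ring
  rw [Finset.sum_congr rfl h2, ← Finset.mul_sum]
  congr 1
  have hv := Nat.add_choose_eq (N - t) N (N - t)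
  rw [Finset.Nat.sum_antidiagonal_eq_sum_range_succ
    (fun a b => (N - t).choose a * N.choose b)] at hv
  have hrange : N + 1 - t = (N - t) + 1 := by omega
  rw [hrange]
  have h3 : ∀ u ∈ range ((N - t) + 1),
      N.choose (t + u) * (N - t).choose u = (N - t).choose u * N.choose (N - t - u) := by
    intro u hu
    have hu' : u ≤ N - t := by simp only [mem_range] at hu; omega
    rw [show N - t - u = N - (t + u) by omega, Nat.choose_symm (by omega)]
    ring
  rw [Finset.sum_congr rfl h3, ← hv, show N - t + N = 2 * N - t by omega,
    show N - t = 2 * N - t - N by omega, Nat.choose_symm (by omega)]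

/-- Li Shanlan's identity. -/
lemma stmt6_key (N m : ℕ) :
    ∑ r ∈ range (N + 1), N.choose r ^ 2 * (N + m + r).choose (2 * N)
      = ((N + m).choose N) ^ 2 := by
  have expand : ∀ r, (N + m + r).choose (2 * N)
      = ∑ t ∈ range (2 * N + 1), r.choose t * (N + m).choose (2 * N - t) := by
    intro r
    have h := Nat.add_choose_eq r (N + m) (2 * N)
    rw [Finset.Nat.sum_antidiagonal_eq_sum_range_succ
      (fun a b => r.choose a * (N + m).choose b)] at h
    rw [show N + m + r = r + (N + m) by ring, h]
  simp_rw [expand, Finset.mul_sum]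
  rw [Finset.sum_comm]
  have step : ∀ t ∈ range (2 * N + 1),
      ∑ r ∈ range (N + 1), N.choose r ^ 2 * (r.choose t * (N + m).choose (2 * N - t))
        = (N + m).choose N * (N.choose t * m.choose (N - t)) := by
    intro t ht
    by_cases htN : t ≤ N
    · have h4 : ∑ r ∈ range (N + 1), N.choose r ^ 2 * (r.choose t * (N + m).choose (2 * N - t))
          = (∑ r ∈ range (N + 1), N.choose r ^ 2 * r.choose t) * (N + m).choose (2 * N - t) := by
        rw [Finset.sum_mul]
        exact Finset.sum_congr rfl (fun r _ => by ring)
      rw [h4, stmt6_inner_sum N t htN]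
      by_cases h2 : 2 * N - t ≤ N + m
      · have := Nat.choose_mul (n := N + m) (k := 2 * N - t) (s := N) (by omega)
        rw [show N + m - N = m by omega, show 2 * N - t - N = N - t by omega] at this
        calc N.choose t * (2 * N - t).choose N * (N + m).choose (2 * N - t)
            = N.choose t * ((N + m).choose (2 * N - t) * (2 * N - t).choose N) := by ring
          _ = N.choose t * ((N + m).choose N * m.choose (N - t)) := by rw [this]
          _ = (N + m).choose N * (N.choose t * m.choose (N - t)) := by ring
      · have hz1 : (N + m).choose (2 * N - t) = 0 := Nat.choose_eq_zero_of_lt (by omega)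
        have hz2 : m.choose (N - t) = 0 := Nat.choose_eq_zero_of_lt (by omega)
        rw [hz1, hz2]; ring
    · have hz : ∀ r ∈ range (N + 1),
          N.choose r ^ 2 * (r.choose t * (N + m).choose (2 * N - t)) = 0 := by
        intro r hr
        simp only [mem_range] at hr
        rw [Nat.choose_eq_zero_of_lt (show r < t by omega)]; ring
      rw [Finset.sum_eq_zero hz, Nat.choose_eq_zero_of_lt (show N < t by omega)]; ring
  rw [Finset.sum_congr rfl step, ← Finset.mul_sum]
  have hsub : ∑ t ∈ range (2 * N + 1), N.choose t * m.choose (N - t)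
      = ∑ t ∈ range (N + 1), N.choose t * m.choose (N - t) := by
    refine (Finset.sum_subset (by intro t ht; simp only [mem_range] at *; omega)
      (fun t ht hnt => ?_)).symm
    simp only [mem_range] at ht hnt
    rw [Nat.choose_eq_zero_of_lt (show N < t by omega)]; ring
  have hv := Nat.add_choose_eq N m N
  rw [Finset.Nat.sum_antidiagonal_eq_sum_range_succ
    (fun a b => N.choose a * m.choose b)] at hv
  rw [hsub, ← hv, pow_two]

/-- key identity reflected form -/
lemma stmt6_key' (N m : ℕ) :
    ∑ k ∈ range (N + 1),
        (if k ≤ m then N.choose k ^ 2 * ((m - k) + 2 * N).choose (2 * N) else 0)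
      = ((N + m).choose N) ^ 2 := by
  rw [← stmt6_key N m,
    ← Finset.sum_range_reflect (fun r => N.choose r ^ 2 * (N + m + r).choose (2 * N)) (N + 1)]
  refine Finset.sum_congr rfl (fun k hk => ?_)
  simp only [mem_range] at hk
  have hkN : k ≤ N := by omega
  simp only [Nat.add_sub_cancel]
  by_cases hkm : k ≤ m
  · rw [if_pos hkm, Nat.choose_symm hkN,
      show N + m + (N - k) = (m - k) + 2 * N by omega]
  · rw [if_neg hkm, Nat.choose_eq_zero_of_lt (show N + m + (N - k) < 2 * N by omega), mul_zero]

theorem stmt6 (n : ℕ) (hn : 1 ≤ n) (x : ℝ) (hx : x ∈ Set.Ico (0 : ℝ) (1 / 2)) :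
    HasSum
      (fun k : ℕ =>
        (((n + k - 1).choose k : ℝ) * (-x) ^ k * (1 - x) ^ (-(n : ℤ) - (k : ℤ))) ^ 2)
      ((1 - 2 * x) ^ ((1 : ℤ) - 2 * (n : ℤ)) * bernsteinF (n - 1) x) := by
  obtain ⟨hx0, hx2⟩ := hx
  obtain ⟨N, rfl⟩ : ∃ N, n = N + 1 := ⟨n - 1, by omega⟩
  have h1x : (0:ℝ) < 1 - x := by linarith
  have h12x : (0:ℝ) < 1 - 2 * x := by linarith
  have hne : (1:ℝ) - x ≠ 0 := ne_of_gt h1x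
  have hne2 : (1:ℝ) - 2 * x ≠ 0 := ne_of_gt h12x
  set y : ℝ := (x / (1 - x)) ^ 2 with hy
  have hy0 : 0 ≤ y := sq_nonneg _
  have hy1 : y < 1 := by
    have hlt : x / (1 - x) < 1 := (div_lt_one h1x).mpr (by linarith)
    have hge : 0 ≤ x / (1 - x) := div_nonneg hx0 h1x.le
    nlinarith
  have hy1' : (0:ℝ) < 1 - y := by linarith
  have hyne : (1:ℝ) - y ≠ 0 := ne_of_gt hy1'
  have hyk : ∀ k : ℕ, y ^ k = (x ^ 2) ^ k / ((1 - x) ^ k) ^ 2 := by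
    intro k
    rw [hy, ← pow_right_comm, div_pow, div_pow, pow_right_comm x]
  -- Step A: negative binomial series
  have hA : HasSum (fun j : ℕ => ((j + 2 * N).choose (2 * N) : ℝ) * y ^ j)
      (1 / (1 - y) ^ (2 * N + 1)) := by
    exact hasSum_choose_mul_geometric_of_norm_lt_one (2 * N)
      (by rw [Real.norm_eq_abs, abs_of_nonneg hy0]; exact hy1)
  -- Step B: shifted series
  have hB : ∀ k : ℕ, HasSum
      (fun m : ℕ => if k ≤ m then ((N.choose k : ℝ) ^ 2 * y ^ k) *
        ((((m - k) + 2 * N).choose (2 * N) : ℝ) * y ^ (m - k)) else 0)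
      (((N.choose k : ℝ) ^ 2 * y ^ k) * (1 / (1 - y) ^ (2 * N + 1))) := by
    intro k
    have inj : Function.Injective (fun j : ℕ => j + k) := fun a b h => by simpa using h
    rw [← Function.Injective.hasSum_iff inj ?_]
    · refine (hA.mul_left ((N.choose k : ℝ) ^ 2 * y ^ k)).congr_fun fun j => ?_
      simp only [Function.comp]
      rw [if_pos (Nat.le_add_left k j), Nat.add_sub_cancel]
    · intro m hm
      have hnk : ¬ k ≤ m := fun h => hm ⟨m - k, by simp; omega⟩
      rw [if_neg hnk]
  -- Step C: sum over k
  have hC : HasSum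
      (fun m : ℕ => ∑ k ∈ Finset.range (N + 1),
        if k ≤ m then ((N.choose k : ℝ) ^ 2 * y ^ k) *
          ((((m - k) + 2 * N).choose (2 * N) : ℝ) * y ^ (m - k)) else 0)
      (∑ k ∈ Finset.range (N + 1),
        ((N.choose k : ℝ) ^ 2 * y ^ k) * (1 / (1 - y) ^ (2 * N + 1))) :=
    hasSum_sum (fun k _ => hB k)
  set A : ℝ := ∑ k ∈ Finset.range (N + 1), (N.choose k : ℝ) ^ 2 * y ^ k with hAdef
  -- Step D: identify the coefficients
  have hD : ∀ m : ℕ, ∑ k ∈ Finset.range (N + 1),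
      (if k ≤ m then ((N.choose k : ℝ) ^ 2 * y ^ k) *
        ((((m - k) + 2 * N).choose (2 * N) : ℝ) * y ^ (m - k)) else 0)
      = (((N + m).choose N : ℝ)) ^ 2 * y ^ m := by
    intro m
    have hterm : ∀ k ∈ Finset.range (N + 1),
        (if k ≤ m then ((N.choose k : ℝ) ^ 2 * y ^ k) *
          ((((m - k) + 2 * N).choose (2 * N) : ℝ) * y ^ (m - k)) else 0)
        = ((if k ≤ m then N.choose k ^ 2 * ((m - k) + 2 * N).choose (2 * N) else 0 : ℕ) : ℝ)
            * y ^ m := by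
      intro k _
      by_cases hkm : k ≤ m
      · rw [if_pos hkm, if_pos hkm,
          show y ^ m = y ^ k * y ^ (m - k) by rw [← pow_add]; congr 1; omega]
        push_cast
        ring
      · rw [if_neg hkm, if_neg hkm]
        simp
    rw [Finset.sum_congr rfl hterm, ← Finset.sum_mul, ← Nat.cast_sum, stmt6_key' N m]
    push_cast
    ring
  have hE : HasSum (fun m : ℕ => (((N + m).choose N : ℝ)) ^ 2 * y ^ m)
      (A * (1 / (1 - y) ^ (2 * N + 1))) := by
    have hsum : ∑ k ∈ Finset.range (N + 1),
        ((N.choose k : ℝ) ^ 2 * y ^ k) * (1 / (1 - y) ^ (2 * N + 1))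
        = A * (1 / (1 - y) ^ (2 * N + 1)) := (Finset.sum_mul _ _ _).symm
    rw [← hsum]
    exact hC.congr_fun fun m => (hD m).symm
  have hF := hE.mul_left (((1 - x) ^ (2 * (N + 1)))⁻¹)
  have hfun : ∀ k : ℕ,
      (((N + 1 + k - 1).choose k : ℝ) * (-x) ^ k * (1 - x) ^ (-((N + 1 : ℕ) : ℤ) - (k : ℤ))) ^ 2
      = ((1 - x) ^ (2 * (N + 1)))⁻¹ * ((((N + k).choose N : ℝ)) ^ 2 * y ^ k) := by
    intro k
    have e1 : N + 1 + k - 1 = N + k := by omega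
    have e2 : (N + k).choose k = (N + k).choose N := by
      rw [← Nat.choose_symm (Nat.le_add_left k N), Nat.add_sub_cancel]
    rw [e1, e2,
      show (-((N + 1 : ℕ) : ℤ) - (k : ℤ)) = -(((N + 1 + k : ℕ)) : ℤ) by push_cast; ring,
      zpow_neg, zpow_natCast]
    have e3 : ((-x) ^ k) ^ 2 = (x ^ 2) ^ k := by
      rw [← pow_mul, mul_comm k 2, pow_mul, neg_sq]
    have hx1 : ((1 - x) : ℝ) ^ (2 * (N + 1)) = ((1 - x) ^ (N + 1)) ^ 2 := by
      rw [← pow_mul, mul_comm]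
    have hx2' : ((1 - x) : ℝ) ^ (N + 1 + k) = (1 - x) ^ (N + 1) * (1 - x) ^ k :=
      pow_add _ _ _
    have ha : ((1 - x) : ℝ) ^ (N + 1) ≠ 0 := pow_ne_zero _ hne
    have hbne : ((1 - x) : ℝ) ^ k ≠ 0 := pow_ne_zero _ hne
    rw [mul_pow, mul_pow, e3, hyk k, hx1, hx2']
    field_simp
    try ring
    try exact Or.inl trivial
  have hb : bernsteinF N x = (1 - x) ^ (2 * N) * A := by
    rw [bernsteinF, hAdef, Finset.mul_sum]
    refine Finset.sum_congr rfl fun k hk => ?_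
    have hkN : k ≤ N := by
      simp only [Finset.mem_range] at hk; omega
    have hbne : ((1 - x) : ℝ) ^ k ≠ 0 := pow_ne_zero _ hne
    rw [hyk k,
      show (1 - x : ℝ) ^ (2 * N) = ((1 - x) ^ (N - k)) ^ 2 * ((1 - x) ^ k) ^ 2 by
        rw [← pow_mul, ← pow_mul, ← pow_add]; congr 1; omega]
    field_simp
    ring
  have htarget : (1 - 2 * x) ^ ((1 : ℤ) - 2 * ((N + 1 : ℕ) : ℤ)) * bernsteinF (N + 1 - 1) x
      = ((1 - x) ^ (2 * (N + 1)))⁻¹ * (A * (1 / (1 - y) ^ (2 * N + 1))) := by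
    have h1y : (1 : ℝ) - y = (1 - 2 * x) / ((1 - x) ^ 2) := by
      rw [hy]
      field_simp
      ring
    rw [show N + 1 - 1 = N by omega, hb,
      show ((1 : ℤ) - 2 * ((N + 1 : ℕ) : ℤ)) = -(((2 * N + 1 : ℕ)) : ℤ) by push_cast; ring,
      zpow_neg, zpow_natCast, h1y, div_pow, pow_right_comm]
    have hu : ((1 - 2 * x) : ℝ) ^ (2 * N + 1) ≠ 0 := pow_ne_zero _ hne2
    have hv' : ((1 - x) : ℝ) ^ (2 * N + 1) ≠ 0 := pow_ne_zero _ hne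
    field_simp
    ring
  rw [htarget]
  exact hF.congr_fun hfun
end

section
/- For every natural number n ≥ 0 and every real x ∈ (−1, 1) with x ≠ 0 (so that 1/(1−x) is defined and the series converges), the series J_n(x) := Σ_{k=0}^{∞} ( C(n+k,k)·x^k·(1−x)^{n+1} )² converges and equals ( (1−x)/(1+x) )^{2n+1} · F_n( 1/(1−x) ), where F_n(y) := Σ_{k=0}^{n} ( C(n,k)·y^k·(1−y)^{n−k} )². -/
open Finset

lemma aux1 (n k m : ℕ) :
    (n + k).choose n * k.choose m = (n + k).choose (n + m) * (n + m).choose n := by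
  rcases le_or_gt m k with h | h
  · have h2 := Nat.choose_mul (n := n + k) (show n ≤ n + m by omega)
    rw [Nat.add_sub_cancel_left, Nat.add_sub_cancel_left] at h2
    exact h2.symm
  · rw [Nat.choose_eq_zero_of_lt h, Nat.choose_eq_zero_of_lt (show n + k < n + m by omega)]
    simp

lemma innerChooseSum (n a : ℕ) :
    ∑ j ∈ range (n + 1), n.choose j ^ 2 * j.choose a
      = n.choose a * (2 * n - a).choose (n - a) := by
  rcases le_or_gt a n with ha | ha
  · have h0 : ∑ j ∈ range (n + 1), n.choose j ^ 2 * j.choose a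
        = ∑ j ∈ Ico a (n + 1), n.choose j ^ 2 * j.choose a := by
      rw [range_eq_Ico, ← Finset.sum_Ico_consecutive _ (Nat.zero_le a) (by omega)]
      have : ∑ j ∈ Ico 0 a, n.choose j ^ 2 * j.choose a = 0 := by
        apply Finset.sum_eq_zero
        intro j hj
        simp only [mem_Ico] at hj
        rw [Nat.choose_eq_zero_of_lt hj.2, Nat.mul_zero]
      omega
    rw [h0, Finset.sum_Ico_eq_sum_range]
    have h1 : ∀ l ∈ range (n + 1 - a), n.choose (a + l) ^ 2 * (a + l).choose a
        = n.choose a * (n.choose (a + l) * (n - a).choose l) := by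
      intro l hl
      simp only [mem_range] at hl
      have h2 := Nat.choose_mul (n := n) (show a ≤ a + l by omega)
      rw [Nat.add_sub_cancel_left] at h2
      rw [pow_two, Nat.mul_assoc, h2]
      ring
    rw [Finset.sum_congr rfl h1, ← Finset.mul_sum]
    congr 1
    have h3 : (2 * n - a).choose (n - a) = ((n - a) + n).choose (n - a) := by
      congr 1; omega
    rw [h3, Nat.add_choose_eq, Nat.sum_antidiagonal_eq_sum_range_succ
      (fun p q => (n - a).choose p * n.choose q)]
    have h4 : n + 1 - a = n - a + 1 := by omega
    rw [h4]
    apply Finset.sum_congr rfl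
    intro l hl
    simp only [mem_range] at hl
    rw [Nat.choose_symm_of_eq_add (show n = (n - a - l) + (a + l) by omega)]
    ring
  · have h0 : ∑ j ∈ range (n + 1), n.choose j ^ 2 * j.choose a = 0 := by
      apply Finset.sum_eq_zero
      intro j hj
      simp only [mem_range] at hj
      rw [Nat.choose_eq_zero_of_lt (show j < a by omega)]
      simp
    rw [h0, Nat.choose_eq_zero_of_lt ha, Nat.zero_mul]

lemma key' (n k : ℕ) :
    ((n + k).choose n) ^ 2
      = ∑ j ∈ range (n + 1), (n.choose j) ^ 2 * (n + k + j).choose (2 * n) := by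
  -- RHS to middle
  have hR : ∀ j ∈ range (n + 1), (n.choose j) ^ 2 * (n + k + j).choose (2 * n)
      = ∑ a ∈ range (2 * n + 1), n.choose j ^ 2 * (j.choose a * (n + k).choose (2 * n - a)) := by
    intro j hj
    rw [show n + k + j = j + (n + k) by omega, Nat.add_choose_eq,
      Nat.sum_antidiagonal_eq_sum_range_succ (fun p q => j.choose p * (n + k).choose q),
      Finset.mul_sum]
  rw [Finset.sum_congr rfl hR, Finset.sum_comm]
  have hM : ∀ a ∈ range (2 * n + 1),
      (∑ j ∈ range (n + 1), n.choose j ^ 2 * (j.choose a * (n + k).choose (2 * n - a)))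
      = (n.choose a * (2 * n - a).choose (n - a)) * (n + k).choose (2 * n - a) := by
    intro a _
    rw [← innerChooseSum, Finset.sum_mul]
    apply Finset.sum_congr rfl
    intro j _
    ring
  rw [Finset.sum_congr rfl hM]
  -- kill a > n terms
  rw [← Finset.sum_subset (Finset.range_subset_range.2 (show n + 1 ≤ 2 * n + 1 by omega))
    (by
      intro a _ ha
      simp only [mem_range] at ha
      rw [Nat.choose_eq_zero_of_lt (by omega), Nat.zero_mul, Nat.zero_mul])]
  -- LHS
  rw [pow_two]
  nth_rewrite 2 [Nat.add_choose_eq]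
  rw [Nat.sum_antidiagonal_eq_sum_range_succ (fun p q => n.choose p * k.choose q),
    Finset.mul_sum]
  apply Finset.sum_congr rfl
  intro a ha
  simp only [mem_range] at ha
  have h1 : (n + k).choose n * (n.choose a * k.choose (n - a))
      = n.choose a * ((n + k).choose n * k.choose (n - a)) := by ring
  rw [h1, aux1 n k (n - a), show n + (n - a) = 2 * n - a by omega,
    Nat.choose_symm_of_eq_add (show 2 * n - a = n + (n - a) by omega)]
  ring

theorem stmt8 (n : ℕ) (x : ℝ) (hx : x ∈ Set.Ioo (-1 : ℝ) 1) (hx0 : x ≠ 0) :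
    HasSum
      (fun k : ℕ => (((n + k).choose k : ℝ) * x ^ k * (1 - x) ^ (n + 1)) ^ 2)
      (((1 - x) / (1 + x)) ^ (2 * n + 1) * bernsteinF n (1 / (1 - x))) := by
  obtain ⟨hx1, hx2⟩ := hx
  have h1x : (0 : ℝ) < 1 - x := by linarith
  have h1p : (0 : ℝ) < 1 + x := by linarith
  set t : ℝ := x ^ 2 with ht
  have ht1 : ‖t‖ < 1 := by
    rw [Real.norm_eq_abs, abs_of_nonneg (sq_nonneg x)]
    nlinarith
  have base : HasSum (fun m : ℕ => ((m + 2 * n).choose (2 * n) : ℝ) * t ^ m)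
      (1 / (1 - t) ^ (2 * n + 1)) := hasSum_choose_mul_geometric_of_norm_lt_one _ ht1
  have step2 : ∀ j ∈ Finset.range (n + 1),
      HasSum (fun k : ℕ => (((n + k + j).choose (2 * n) : ℝ)) * t ^ k)
        (t ^ (n - j) * (1 / (1 - t) ^ (2 * n + 1)) + 0) := by
    intro j hj
    simp only [Finset.mem_range] at hj
    have hshift : HasSum
        (fun m : ℕ => (((n + (m + (n - j)) + j).choose (2 * n) : ℝ)) * t ^ (m + (n - j)))
        (t ^ (n - j) * (1 / (1 - t) ^ (2 * n + 1))) := by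
      have heq : (fun m : ℕ => (((n + (m + (n - j)) + j).choose (2 * n) : ℝ)) * t ^ (m + (n - j)))
          = fun m : ℕ => t ^ (n - j) * (((m + 2 * n).choose (2 * n) : ℝ) * t ^ m) := by
        funext m
        rw [show n + (m + (n - j)) + j = m + 2 * n by omega, pow_add]
        ring
      rw [heq]
      exact base.mul_left _
    have h2 := (hasSum_nat_add_iff
      (f := fun k : ℕ => (((n + k + j).choose (2 * n) : ℝ)) * t ^ k) (n - j)).mp hshift
    have hzero : ∑ i ∈ Finset.range (n - j), (((n + i + j).choose (2 * n) : ℝ)) * t ^ i = 0 := by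
      apply Finset.sum_eq_zero
      intro i hi
      simp only [Finset.mem_range] at hi
      rw [Nat.choose_eq_zero_of_lt (by omega), Nat.cast_zero, zero_mul]
    rwa [hzero] at h2
  have step3 : HasSum
      (fun k : ℕ => ∑ j ∈ Finset.range (n + 1),
        ((1 - x) ^ (2 * n + 2) * (n.choose j : ℝ) ^ 2) * (((n + k + j).choose (2 * n) : ℝ) * t ^ k))
      (∑ j ∈ Finset.range (n + 1),
        ((1 - x) ^ (2 * n + 2) * (n.choose j : ℝ) ^ 2)
          * (t ^ (n - j) * (1 / (1 - t) ^ (2 * n + 1)) + 0)) :=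
    hasSum_sum (fun j hj => (step2 j hj).mul_left _)
  have hfun : ∀ k : ℕ, (((n + k).choose k : ℝ) * x ^ k * (1 - x) ^ (n + 1)) ^ 2
      = ∑ j ∈ Finset.range (n + 1),
        ((1 - x) ^ (2 * n + 2) * (n.choose j : ℝ) ^ 2)
          * (((n + k + j).choose (2 * n) : ℝ) * t ^ k) := by
    intro k
    have hk := key' n k
    have hkR := congrArg (fun m : ℕ => (m : ℝ)) hk
    push_cast at hkR
    rw [mul_pow, mul_pow, ← Nat.choose_symm_add, hkR, Finset.sum_mul, Finset.sum_mul]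
    apply Finset.sum_congr rfl
    intro j _
    rw [show ((1 - x) ^ (n + 1)) ^ 2 = (1 - x) ^ (2 * n + 2) by
        rw [← pow_mul]; ring_nf,
      show (x ^ k) ^ 2 = t ^ k by rw [ht, ← pow_mul, ← pow_mul, Nat.mul_comm]]
    ring
  rw [show (fun k : ℕ => (((n + k).choose k : ℝ) * x ^ k * (1 - x) ^ (n + 1)) ^ 2)
      = fun k : ℕ => ∑ j ∈ Finset.range (n + 1),
        ((1 - x) ^ (2 * n + 2) * (n.choose j : ℝ) ^ 2)
          * (((n + k + j).choose (2 * n) : ℝ) * t ^ k) from funext hfun]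
  convert step3 using 1
  rw [bernsteinF, Finset.mul_sum]
  apply Finset.sum_congr rfl
  intro j hj
  simp only [Finset.mem_range] at hj
  obtain ⟨b, hb⟩ : ∃ b, n = j + b := ⟨n - j, by omega⟩
  subst hb
  have hne1 : (1 : ℝ) - x ≠ 0 := ne_of_gt h1x
  have hne2 : (1 : ℝ) + x ≠ 0 := ne_of_gt h1p
  rw [show j + b - j = b by omega, add_zero,
    show 1 - t = (1 - x) * (1 + x) by rw [ht]; ring, ht, mul_pow, mul_pow, mul_pow, div_pow,
    show ((x ^ 2 : ℝ)) ^ b = x ^ (2 * b) by rw [← pow_mul],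
    show (((1 : ℝ) - 1 / (1 - x)) ^ b) ^ 2 = x ^ (2 * b) / (1 - x) ^ (2 * b) by
      rw [show (1 : ℝ) - 1 / (1 - x) = -x / (1 - x) by field_simp; ring, div_pow, div_pow,
        ← pow_mul, ← pow_mul, Nat.mul_comm b 2, Even.neg_pow (even_two_mul b)],
    show (((1 : ℝ) / (1 - x)) ^ j) ^ 2 = 1 / (1 - x) ^ (2 * j) by
      rw [div_pow, one_pow, div_pow, one_pow, ← pow_mul, Nat.mul_comm]]
  field_simp
  ring
end

section
/- For every natural number n ≥ 0 and every real x, F_n(x) = 4^{−n} · Σ_{j=0}^{n} 4^j · C(2j,j) · C(2n−2j,n−j) · (x−1/2)^{2j}, where F_n(x) := Σ_{k=0}^{n} ( C(n,k)·x^k·(1−x)^{n−k} )². -/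
open Finset

private lemma sum_shift1 (m : ℕ) (θ : ℕ → ℝ) :
    ∑ k ∈ range (m+1), (if k = 0 then 0 else θ k) = ∑ k ∈ range m, θ (k+1) := by
  rw [Finset.sum_range_succ']; simp

private lemma sum_shift2 (m : ℕ) (θ : ℕ → ℝ) :
    ∑ k ∈ range (m+2), (if k < 2 then 0 else θ k) = ∑ k ∈ range m, θ (k+2) := by
  rw [Finset.sum_range_succ', Finset.sum_range_succ']
  rw [if_pos (by omega : (0:ℕ) < 2), if_pos (by omega : (0+1:ℕ) < 2)]
  simp only [add_zero, zero_add]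
  apply Finset.sum_congr rfl
  intro k _
  rw [if_neg (by omega)]

private lemma cb_rec (m : ℕ) :
    ((m:ℝ)+1) * (Nat.centralBinom (m+1) : ℝ) = 2*(2*(m:ℝ)+1) * (Nat.centralBinom m : ℝ) := by
  exact_mod_cast congrArg (Nat.cast : ℕ → ℝ) (Nat.succ_mul_centralBinom_succ m)

private lemma core_choose (M j : ℕ) :
    (M:ℝ) * (M.choose (j+1) : ℝ)^2 =
      (M.choose j : ℝ) * (M.choose (j+1) : ℝ) + (M.choose (j+1) : ℝ) * (M.choose (j+2) : ℝ)
        + ((M:ℝ)+2) * ((M.choose j : ℝ) * (M.choose (j+2) : ℝ)) := by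
  rcases lt_or_ge j M with h | h
  · obtain ⟨s, rfl⟩ : ∃ s, M = j + 1 + s := ⟨M - (j+1), by omega⟩
    have h1 : ((j+1+s).choose (j+1) : ℝ) * (j+1) = ((j+1+s).choose j : ℝ) * (s+1) := by
      have h0 := Nat.choose_succ_right_eq (j+1+s) j
      have h' : (j+1+s) - j = s+1 := by omega
      rw [h'] at h0; exact_mod_cast h0
    have h2 : ((j+1+s).choose (j+2) : ℝ) * (j+2) = ((j+1+s).choose (j+1) : ℝ) * s := by
      have h0 := Nat.choose_succ_right_eq (j+1+s) (j+1)
      have h' : (j+1+s) - (j+1) = s := by omega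
      rw [h'] at h0; exact_mod_cast h0
    have hs : ((s:ℝ)+1) ≠ 0 := by positivity
    have hj : ((j:ℝ)+2) ≠ 0 := by positivity
    have hp : ((j+1+s).choose j : ℝ) = ((j+1+s).choose (j+1) : ℝ) * ((j:ℝ)+1) / ((s:ℝ)+1) := by
      field_simp; linarith [h1]
    have hr : ((j+1+s).choose (j+2) : ℝ) = ((j+1+s).choose (j+1) : ℝ) * (s:ℝ) / ((j:ℝ)+2) := by
      field_simp; linarith [h2]
    rw [hp, hr]; push_cast; field_simp; ring
  · have e1 : M.choose (j+1) = 0 := Nat.choose_eq_zero_of_lt (by omega)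
    have e2 : M.choose (j+2) = 0 := Nat.choose_eq_zero_of_lt (by omega)
    simp [e1, e2]

private lemma Lcoef (M j : ℕ) :
    ((M:ℝ)+2) * (((M+2).choose (j+2) : ℝ))^2 =
      (2*(M:ℝ)+3) * ((((M+1).choose (j+1) : ℝ))^2 + (((M+1).choose (j+2) : ℝ))^2)
        - ((M:ℝ)+1) * (((M.choose j : ℝ))^2 - 2*((M.choose (j+1) : ℝ))^2 + ((M.choose (j+2) : ℝ))^2) := by
  have p1 : (M+2).choose (j+2) = (M+1).choose (j+1) + (M+1).choose (j+2) := Nat.choose_succ_succ _ _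
  have p2 : (M+1).choose (j+1) = M.choose j + M.choose (j+1) := Nat.choose_succ_succ _ _
  have p3 : (M+1).choose (j+2) = M.choose (j+1) + M.choose (j+2) := Nat.choose_succ_succ _ _
  rw [p1, p2, p3]; push_cast
  linear_combination (-2 : ℝ) * core_choose M j

private lemma Dcoef (i m : ℕ) :
    ((i:ℝ)+(m:ℝ)+2) * (Nat.centralBinom (i+1) : ℝ) * (Nat.centralBinom (m+1) : ℝ) =
      2*(2*(i:ℝ)+2*(m:ℝ)+3) * ((Nat.centralBinom (i+1):ℝ) * (Nat.centralBinom m:ℝ)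
          + (Nat.centralBinom i:ℝ) * (Nat.centralBinom (m+1):ℝ))
        - 16*((i:ℝ)+(m:ℝ)+1) * ((Nat.centralBinom i:ℝ) * (Nat.centralBinom m:ℝ)) := by
  have h1 := cb_rec i
  have h2 := cb_rec m
  have hi : ((i:ℝ)+1) ≠ 0 := by positivity
  have hm : ((m:ℝ)+1) ≠ 0 := by positivity
  have e1 : (Nat.centralBinom (i+1) : ℝ) = 2*(2*(i:ℝ)+1) * (Nat.centralBinom i : ℝ) / ((i:ℝ)+1) := by
    field_simp; linarith [h1]
  have e2 : (Nat.centralBinom (m+1) : ℝ) = 2*(2*(m:ℝ)+1) * (Nat.centralBinom m : ℝ) / ((m:ℝ)+1) := by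
    field_simp; linarith [h2]
  rw [e1, e2]; field_simp; ring

noncomputable def Gsum (n : ℕ) (A B : ℝ) : ℝ :=
  ∑ k ∈ range (n+1), (n.choose k : ℝ)^2 * A^k * B^(n-k)

noncomputable def Dsum (n : ℕ) (t : ℝ) : ℝ :=
  ∑ j ∈ range (n+1),
    4^j * (Nat.centralBinom j : ℝ) * (Nat.centralBinom (n-j) : ℝ) * t^(2*j)

private lemma Grec (n : ℕ) (A B : ℝ) :
    ((n:ℝ)+2) * Gsum (n+2) A B =
      (2*(n:ℝ)+3) * (A+B) * Gsum (n+1) A B - ((n:ℝ)+1) * (A-B)^2 * Gsum n A B := by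
  have hA : A * Gsum (n+1) A B
      = ∑ k ∈ range (n+3), (if k = 0 then 0 else (((n+1).choose (k-1) : ℝ))^2 * A^k * B^(n+2-k)) := by
    rw [sum_shift1, Gsum, Finset.mul_sum]
    apply Finset.sum_congr rfl
    intro k hk
    have h2 : n+2-(k+1) = n+1-k := by omega
    simp only [Nat.add_sub_cancel, h2]
    ring
  have hB : B * Gsum (n+1) A B
      = ∑ k ∈ range (n+3), (((n+1).choose k : ℝ))^2 * A^k * B^(n+2-k) := by
    rw [Gsum, Finset.mul_sum]
    conv_rhs => rw [Finset.sum_range_succ]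
    have h0 : (n+1).choose (n+2) = 0 := Nat.choose_eq_zero_of_lt (by omega)
    rw [h0]
    simp only [Nat.cast_zero, ne_eq, OfNat.ofNat_ne_zero, not_false_eq_true, zero_pow, zero_mul, add_zero]
    apply Finset.sum_congr rfl
    intro k hk
    have h3 : k ≤ n+1 := by simp at hk; omega
    have h4 : n+2-k = (n+1-k)+1 := by omega
    rw [h4, pow_succ]; ring
  have hAA : A^2 * Gsum n A B
      = ∑ k ∈ range (n+3), (if k < 2 then 0 else ((n.choose (k-2) : ℝ))^2 * A^k * B^(n+2-k)) := by
    rw [sum_shift2, Gsum, Finset.mul_sum]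
    apply Finset.sum_congr rfl
    intro k hk
    have h2 : n+2-(k+2) = n-k := by omega
    have h2' : (k+2)-2 = k := by omega
    simp only [h2, h2']
    ring
  have hAB : A*B * Gsum n A B
      = ∑ k ∈ range (n+3), (if k = 0 then 0 else ((n.choose (k-1) : ℝ))^2 * A^k * B^(n+2-k)) := by
    rw [sum_shift1]
    conv_rhs => rw [Finset.sum_range_succ]
    have h0 : n.choose (n+2-1) = 0 := Nat.choose_eq_zero_of_lt (by omega)
    rw [h0]
    simp only [Nat.cast_zero, ne_eq, OfNat.ofNat_ne_zero, not_false_eq_true, zero_pow, zero_mul, add_zero]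
    rw [Gsum, Finset.mul_sum]
    apply Finset.sum_congr rfl
    intro k hk
    have h3 : k ≤ n := by simp at hk; omega
    have h2 : n+2-(k+1) = (n-k)+1 := by omega
    simp only [Nat.add_sub_cancel, h2]
    rw [pow_succ]; ring
  have hBB : B^2 * Gsum n A B
      = ∑ k ∈ range (n+3), ((n.choose k : ℝ))^2 * A^k * B^(n+2-k) := by
    rw [Gsum, Finset.mul_sum]
    conv_rhs => rw [Finset.sum_range_succ, Finset.sum_range_succ]
    have h0 : n.choose (n+1) = 0 := Nat.choose_eq_zero_of_lt (by omega)
    have h0' : n.choose (n+2) = 0 := Nat.choose_eq_zero_of_lt (by omega)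
    rw [h0, h0']
    simp only [Nat.cast_zero, ne_eq, OfNat.ofNat_ne_zero, not_false_eq_true, zero_pow, zero_mul, add_zero]
    apply Finset.sum_congr rfl
    intro k hk
    have h3 : k ≤ n := by simp at hk; omega
    have h2 : n+2-k = (n-k)+2 := by omega
    rw [h2, pow_add]; ring
  have hR : (2*(n:ℝ)+3) * (A+B) * Gsum (n+1) A B - ((n:ℝ)+1) * (A-B)^2 * Gsum n A B
      = ∑ k ∈ range (n+3),
          ((2*(n:ℝ)+3) * ((if k = 0 then 0 else (((n+1).choose (k-1) : ℝ))^2 * A^k * B^(n+2-k))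
              + (((n+1).choose k : ℝ))^2 * A^k * B^(n+2-k))
            - ((n:ℝ)+1) * ((if k < 2 then 0 else ((n.choose (k-2) : ℝ))^2 * A^k * B^(n+2-k))
              - 2 * (if k = 0 then 0 else ((n.choose (k-1) : ℝ))^2 * A^k * B^(n+2-k))
              + ((n.choose k : ℝ))^2 * A^k * B^(n+2-k))) := by
    rw [Finset.sum_sub_distrib, ← Finset.mul_sum, ← Finset.mul_sum,
        Finset.sum_add_distrib, Finset.sum_add_distrib, Finset.sum_sub_distrib,
        ← Finset.mul_sum, ← hA, ← hB, ← hAA, ← hAB, ← hBB]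
    ring
  rw [hR, Gsum, Finset.mul_sum]
  apply Finset.sum_congr rfl
  intro k _
  match k with
  | 0 =>
    simp only [if_pos rfl, if_pos (by omega : (0:ℕ) < 2)]
    simp [Nat.choose_zero_right]
    ring
  | 1 =>
    rw [if_neg (by omega), if_pos (by omega : (1:ℕ) < 2), if_neg (by omega)]
    simp only [Nat.choose_one_right, Nat.choose_zero_right, Nat.sub_self]
    push_cast
    ring
  | (j+2) =>
    rw [if_neg (by omega), if_neg (by omega), if_neg (by omega)]
    have e1 : (j+2)-1 = j+1 := by omega
    have e2 : (j+2)-2 = j := by omega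
    rw [e1, e2]
    linear_combination (A^(j+2) * B^(n+2-(j+2))) * Lcoef n j

private lemma Drec (n : ℕ) (t : ℝ) :
    ((n:ℝ)+2) * Dsum (n+2) t =
      (2*(n:ℝ)+3) * (2 + 8*t^2) * Dsum (n+1) t
        - 64*((n:ℝ)+1) * t^2 * Dsum n t := by
  have E0 : Dsum (n+2) t
      = (Nat.centralBinom (n+2) : ℝ)
        + (∑ j ∈ range (n+1),
            4^(j+1) * (Nat.centralBinom (j+1) : ℝ) * (Nat.centralBinom (n-j+1) : ℝ) * t^(2*j+2))
        + 4^(n+2) * (Nat.centralBinom (n+2) : ℝ) * t^(2*n+4) := by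
    rw [Dsum, Finset.sum_range_succ', Finset.sum_range_succ]
    have h2 : n+2-(n+1+1) = 0 := by omega
    rw [h2]
    have h3 : ∀ j ∈ range (n+1),
        4^(j+1) * (Nat.centralBinom (j+1) : ℝ) * (Nat.centralBinom (n+2-(j+1)) : ℝ) * t^(2*(j+1))
          = 4^(j+1) * (Nat.centralBinom (j+1) : ℝ) * (Nat.centralBinom (n-j+1) : ℝ) * t^(2*j+2) := by
      intro j hj
      have h4 : n+2-(j+1) = n-j+1 := by simp at hj; omega
      rw [h4]; ring_nf
    rw [Finset.sum_congr rfl h3]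
    simp only [Nat.sub_zero, Nat.mul_zero, pow_zero, Nat.centralBinom_zero, Nat.cast_one, mul_one, one_mul]
    ring
  have E4 : Dsum (n+1) t
      = (Nat.centralBinom (n+1) : ℝ)
        + ∑ j ∈ range (n+1),
            4^(j+1) * (Nat.centralBinom (j+1) : ℝ) * (Nat.centralBinom (n-j) : ℝ) * t^(2*j+2) := by
    rw [Dsum, Finset.sum_range_succ']
    have h3 : ∀ j ∈ range (n+1),
        4^(j+1) * (Nat.centralBinom (j+1) : ℝ) * (Nat.centralBinom (n+1-(j+1)) : ℝ) * t^(2*(j+1))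
          = 4^(j+1) * (Nat.centralBinom (j+1) : ℝ) * (Nat.centralBinom (n-j) : ℝ) * t^(2*j+2) := by
      intro j hj
      have h4 : n+1-(j+1) = n-j := by omega
      rw [h4]; ring_nf
    rw [Finset.sum_congr rfl h3]
    simp only [Nat.sub_zero, Nat.mul_zero, pow_zero, Nat.centralBinom_zero, Nat.cast_one, mul_one, one_mul]
    ring
  have E2 : t^2 * Dsum (n+1) t
      = (∑ j ∈ range (n+1),
          4^j * (Nat.centralBinom j : ℝ) * (Nat.centralBinom (n-j+1) : ℝ) * t^(2*j+2))
        + 4^(n+1) * (Nat.centralBinom (n+1) : ℝ) * t^(2*n+4) := by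
    rw [Dsum, Finset.mul_sum]
    conv_lhs => rw [Finset.sum_range_succ]
    have h2 : n+1-(n+1) = 0 := by omega
    rw [h2]
    simp only [Nat.centralBinom_zero, Nat.cast_one, mul_one]
    have h3 : ∀ j ∈ range (n+1),
        t^2 * (4^j * (Nat.centralBinom j : ℝ) * (Nat.centralBinom (n+1-j) : ℝ) * t^(2*j))
          = 4^j * (Nat.centralBinom j : ℝ) * (Nat.centralBinom (n-j+1) : ℝ) * t^(2*j+2) := by
      intro j hj
      have h4 : n+1-j = n-j+1 := by simp at hj; omega
      rw [h4]; ring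
    rw [Finset.sum_congr rfl h3]
    ring
  have E3 : t^2 * Dsum n t
      = ∑ j ∈ range (n+1),
          4^j * (Nat.centralBinom j : ℝ) * (Nat.centralBinom (n-j) : ℝ) * t^(2*j+2) := by
    rw [Dsum, Finset.mul_sum]
    apply Finset.sum_congr rfl
    intro j _
    ring
  have key : ((n:ℝ)+2) * ∑ j ∈ range (n+1),
        4^(j+1) * (Nat.centralBinom (j+1) : ℝ) * (Nat.centralBinom (n-j+1) : ℝ) * t^(2*j+2)
      = (2*(n:ℝ)+3) * 2 * (∑ j ∈ range (n+1),
            4^(j+1) * (Nat.centralBinom (j+1) : ℝ) * (Nat.centralBinom (n-j) : ℝ) * t^(2*j+2))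
        + (2*(n:ℝ)+3) * 8 * (∑ j ∈ range (n+1),
            4^j * (Nat.centralBinom j : ℝ) * (Nat.centralBinom (n-j+1) : ℝ) * t^(2*j+2))
        - 64*((n:ℝ)+1) * ∑ j ∈ range (n+1),
            4^j * (Nat.centralBinom j : ℝ) * (Nat.centralBinom (n-j) : ℝ) * t^(2*j+2) := by
    rw [Finset.mul_sum, Finset.mul_sum, Finset.mul_sum, Finset.mul_sum,
        ← Finset.sum_add_distrib, ← Finset.sum_sub_distrib]
    apply Finset.sum_congr rfl
    intro j hj
    have hj' : j ≤ n := by simp at hj; omega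
    have hd := Dcoef j (n-j)
    have hc : ((n-j : ℕ) : ℝ) = (n:ℝ) - (j:ℝ) := by rw [Nat.cast_sub hj']
    rw [hc] at hd
    linear_combination (4^j * 4 * t^(2*j+2)) * hd
  have hb1 := cb_rec (n+1)
  push_cast at hb1
  have expand : (2*(n:ℝ)+3) * (2 + 8*t^2) * Dsum (n+1) t - 64*((n:ℝ)+1) * t^2 * Dsum n t
      = (2*(n:ℝ)+3) * 2 * Dsum (n+1) t + (2*(n:ℝ)+3) * 8 * (t^2 * Dsum (n+1) t)
        - 64*((n:ℝ)+1) * (t^2 * Dsum n t) := by ring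
  rw [E0, expand, E2, E3, E4]
  linear_combination key + (1 + 4^(n+2) * t^(2*n+4)) * hb1

private lemma bern_eq (n : ℕ) (x : ℝ) : bernsteinF n x = Gsum n (x^2) ((1-x)^2) := by
  rw [bernsteinF, Gsum]
  apply Finset.sum_congr rfl
  intro k _
  rw [mul_pow, mul_pow, ← pow_right_comm x, ← pow_right_comm (1-x)]

private lemma key_lemma (n : ℕ) (x : ℝ) :
    (4:ℝ)^n * bernsteinF n x = Dsum n (x - 1/2) := by
  induction n using Nat.twoStepInduction with
  | zero => simp [bernsteinF, Dsum]
  | one =>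
    have hc1 : Nat.centralBinom 1 = 2 := by decide
    simp [bernsteinF, Dsum, Finset.sum_range_succ, hc1]
    ring
  | more n ih1 ih2 =>
    have hn2 : ((n:ℝ)+2) ≠ 0 := by positivity
    apply mul_left_cancel₀ hn2
    have e1 := Grec n (x^2) ((1-x)^2)
    rw [← bern_eq, ← bern_eq, ← bern_eq] at e1
    have e2 := Drec n (x - 1/2)
    push_cast at *
    linear_combination ((4:ℝ)^(n+2)) * e1 - e2
      + ((2*(n:ℝ)+3)*(2+8*(x-1/2)^2)) * ih2
      - (64*((n:ℝ)+1)*(x-1/2)^2) * ih1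

theorem stmt10 (n : ℕ) (x : ℝ) :
    bernsteinF n x =
      ((4 : ℝ) ^ n)⁻¹ *
        ∑ j ∈ Finset.range (n + 1),
          4 ^ j * ((2 * j).choose j : ℝ) * ((2 * n - 2 * j).choose (n - j) : ℝ) *
            (x - 1 / 2) ^ (2 * j) := by
  have h4 : ((4:ℝ)^n) ≠ 0 := by positivity
  have hd : (∑ j ∈ Finset.range (n + 1),
        4 ^ j * ((2 * j).choose j : ℝ) * ((2 * n - 2 * j).choose (n - j) : ℝ) *
          (x - 1 / 2) ^ (2 * j)) = Dsum n (x - 1/2) := by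
    rw [Dsum]
    apply Finset.sum_congr rfl
    intro j hj
    have e2 : 2*n-2*j = 2*(n-j) := by omega
    rw [e2]
    rfl
  rw [hd, ← key_lemma n x, inv_mul_cancel_left₀ h4]
end

section
/- For every natural number n ≥ 1 and every real x, the derivative of F_n satisfies F_n′(x) = 4·(2x−1)·4^{−n} · Σ_{j=0}^{n−1} 4^j · (j+1) · C(2j+2,j+1) · C(2n−2j−2,n−j−1) · (x−1/2)^{2j}, where F_n(x) := Σ_{k=0}^{n} ( C(n,k)·x^k·(1−x)^{n−k} )². -/
open Finset

noncomputable def Haux (n : ℕ) (a b : ℝ) : ℕ → ℝ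
  | 0 => 0
  | (k+1) => (n.choose k : ℝ)^2 *
      ( ((n:ℝ) - k)^2 * a^(k+2) * b^(n-k-1)
        + (-((k:ℝ)+1)^2 + (4*n+2)*((k:ℝ)+1) - (4*n+1)*((n:ℝ)+1)) * a^(k+1) * b^(n-k) )

lemma per_k (n k : ℕ) (hn : 1 ≤ n) (hk : k < n + 2) (a b : ℝ) :
    (n:ℝ) * (((n:ℝ)+1) * (((n+1).choose k : ℝ))^2 * a^k * b^(n+1-k)
      - (2*(n:ℝ)+1)*(a+b) * ((n.choose k : ℝ))^2 * a^k * b^(n-k)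
      + (n:ℝ)*(b-a)^2 * (((n-1).choose k : ℝ))^2 * a^k * b^(n-1-k))
    = Haux n a b (k+1) - Haux n a b k := by
  rcases Nat.eq_zero_or_pos k with rfl | hk1
  · -- k = 0
    obtain ⟨m, rfl⟩ : ∃ m, n = m + 1 := ⟨n - 1, by omega⟩
    simp only [Haux, Nat.choose_zero_right, Nat.cast_one, pow_zero,
      Nat.add_sub_cancel, Nat.sub_zero]
    push_cast
    ring
  · rcases eq_or_lt_of_le (by omega : k ≤ n + 1) with rfl | hk2
    · -- k = n + 1
      simp only [Haux]
      have c1 : (n+1).choose (n+1) = 1 := Nat.choose_self _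
      have c2 : n.choose (n+1) = 0 := Nat.choose_succ_self n
      have c3 : (n-1).choose (n+1) = 0 := Nat.choose_eq_zero_of_lt (by omega)
      have c4 : n.choose n = 1 := Nat.choose_self n
      rw [c1, c2, c3, c4]
      have e1 : n + 1 - (n + 1) = 0 := by omega
      have e2 : n - (n + 1) = 0 := by omega
      have e3 : n - 1 - (n + 1) = 0 := by omega
      have e4 : n - n - 1 = 0 := by omega
      have e5 : n - n = 0 := by omega
      rw [e1, e2, e3, e4, e5]
      push_cast
      ring
    · rcases eq_or_lt_of_le (by omega : k ≤ n) with rfl | hk3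
      · -- k = n ≥ 1
        obtain ⟨j, rfl⟩ : ∃ j, k = j + 1 := ⟨k - 1, by omega⟩
        simp only [Haux]
        have c1 : (j+1+1).choose (j+1) = j+2 := Nat.choose_succ_self_right _
        have c2 : (j+1).choose (j+1) = 1 := Nat.choose_self _
        have c3 : (j+1-1).choose (j+1) = 0 := Nat.choose_eq_zero_of_lt (by omega)
        have c4 : (j+1).choose j = j+1 := Nat.choose_succ_self_right _
        rw [c1, c2, c3, c4]
        simp only [show j+1+1-(j+1) = 1 from by omega, show j+1-(j+1) = 0 from by omega,
          show j+1-1-(j+1) = 0 from by omega, show (0:ℕ)-1 = 0 from rfl,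
          show j+1-j-1 = 0 from by omega, show j+1-j = 1 from by omega]
        push_cast
        ring
      · -- 1 ≤ k ≤ n - 1
        obtain ⟨j, rfl⟩ : ∃ j, k = j + 1 := ⟨k - 1, by omega⟩
        obtain ⟨m, rfl⟩ : ∃ m, n = j + m + 2 := ⟨n - j - 2, by omega⟩
        simp only [Haux]
        set U := ((j+m+2).choose (j+1) : ℝ) with hU
        set V := ((j+m+2).choose j : ℝ) with hV
        set W := ((j+m+2-1).choose (j+1) : ℝ) with hW
        have hP : ((j+m+2+1).choose (j+1) : ℝ) = V + U := by
          rw [hU, hV]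
          push_cast [Nat.choose_succ_succ (j+m+2) j]
          ring
        have hUV : U * ((j:ℝ)+1) = V * ((m:ℝ)+2) := by
          have h := Nat.choose_succ_right_eq (j+m+2) j
          rw [show j + m + 2 - j = m + 2 from by omega] at h
          rw [hU, hV]
          exact_mod_cast h
        have hWU : ((j:ℝ)+(m:ℝ)+2) * W = ((m:ℝ)+1) * U := by
          have h1 := Nat.add_one_mul_choose_eq (j+m+1) (j+1)
          have h2 := Nat.choose_succ_right_eq (j+m+2) (j+1)
          have e0 : j + m + 2 - 1 = j + m + 1 := by omega
          have e : j + m + 2 - (j+1) = m + 1 := by omega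
          rw [e] at h2
          rw [hW, e0]
          have h1' : (j+m+2) * (j+m+1).choose (j+1) = (j+m+2).choose (j+2) * (j+2) := h1
          have h3 : (j+m+2) * (j+m+1).choose (j+1) = (m+1) * ((j+m+2).choose (j+1)) := by
            rw [h1', h2, Nat.mul_comm]
          rw [hU]
          exact_mod_cast h3
        have hm2 : ((m:ℝ)+2) ≠ 0 := by positivity
        have hjm : ((j:ℝ)+(m:ℝ)+2) ≠ 0 := by positivity
        have hVe : V = U * ((j:ℝ)+1) / ((m:ℝ)+2) := by
          field_simp
          linarith [hUV]
        have hWe : W = ((m:ℝ)+1) * U / ((j:ℝ)+(m:ℝ)+2) := by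
          field_simp
          linarith [hWU]
        rw [hP]
        simp only [show j+m+2+1-(j+1) = m+2 from by omega, show j+m+2-(j+1) = m+1 from by omega,
          show j+m+2-1-(j+1) = m from by omega, show (m+1:ℕ)-1 = m from by omega,
          show j+m+2-j-1 = m+1 from by omega, show j+m+2-j = m+2 from by omega]
        rw [hVe, hWe]
        field_simp
        rw [show m+2-1 = m+1 from by omega]
        push_cast
        ring

lemma sumsq_rec (n : ℕ) (hn : 1 ≤ n) (a b : ℝ) :
    ((n:ℝ)+1) * ∑ k ∈ range (n+2), (((n+1).choose k : ℝ))^2 * a^k * b^(n+1-k)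
    = (2*(n:ℝ)+1)*(a+b) * (∑ k ∈ range (n+1), ((n.choose k : ℝ))^2 * a^k * b^(n-k))
      - (n:ℝ)*(b-a)^2 * (∑ k ∈ range n, (((n-1).choose k : ℝ))^2 * a^k * b^(n-1-k)) := by
  have e_per : ∀ k ∈ range (n+2),
      (((n+1).choose k : ℝ))^2 * a^k * b^(n+1-k) * ((n:ℝ)*((n:ℝ)+1))
      - ((n.choose k : ℝ))^2 * a^k * b^(n-k) * ((n:ℝ)*(2*(n:ℝ)+1)*(a+b))
      + (((n-1).choose k : ℝ))^2 * a^k * b^(n-1-k) * ((n:ℝ)^2*(b-a)^2)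
      = Haux n a b (k+1) - Haux n a b k := by
    intro k hk
    rw [← per_k n k hn (mem_range.mp hk) a b]
    ring
  have hzero : ∑ k ∈ range (n+2),
      ((((n+1).choose k : ℝ))^2 * a^k * b^(n+1-k) * ((n:ℝ)*((n:ℝ)+1))
      - ((n.choose k : ℝ))^2 * a^k * b^(n-k) * ((n:ℝ)*(2*(n:ℝ)+1)*(a+b))
      + (((n-1).choose k : ℝ))^2 * a^k * b^(n-1-k) * ((n:ℝ)^2*(b-a)^2)) = 0 := by
    rw [Finset.sum_congr rfl e_per, Finset.sum_range_sub (Haux n a b) (n+2)]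
    simp [Haux, Nat.choose_succ_self]
  rw [Finset.sum_add_distrib, Finset.sum_sub_distrib, ← Finset.sum_mul, ← Finset.sum_mul,
    ← Finset.sum_mul] at hzero
  have hA : ∑ k ∈ range (n+2), ((n.choose k : ℝ))^2 * a^k * b^(n-k)
      = ∑ k ∈ range (n+1), ((n.choose k : ℝ))^2 * a^k * b^(n-k) := by
    rw [Finset.sum_range_succ]
    simp [Nat.choose_succ_self]
  have hB : ∑ k ∈ range (n+2), (((n-1).choose k : ℝ))^2 * a^k * b^(n-1-k)
      = ∑ k ∈ range n, (((n-1).choose k : ℝ))^2 * a^k * b^(n-1-k) := by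
    rw [Finset.sum_range_succ, Finset.sum_range_succ]
    rw [Nat.choose_eq_zero_of_lt (by omega : n - 1 < n + 1),
      Nat.choose_eq_zero_of_lt (by omega : n - 1 < n)]
    push_cast
    ring
  rw [hA, hB] at hzero
  have hne : (n:ℝ) ≠ 0 := by
    have : (0:ℝ) < n := by exact_mod_cast hn
    linarith
  refine mul_left_cancel₀ hne ?_
  linear_combination hzero

noncomputable def Pfun (n : ℕ) (x : ℝ) : ℝ :=
  ((4:ℝ)^n)⁻¹ * ∑ j ∈ range (n+1),
    (4:ℝ)^j * (Nat.centralBinom j : ℝ) * (Nat.centralBinom (n-j) : ℝ) * (x - 1/2)^(2*j)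

lemma key_binom (i m : ℕ) :
    ((i:ℝ)+(m:ℝ)+2) * 4^(i+1) * (Nat.centralBinom (i+1) : ℝ) * (Nat.centralBinom (m+1) : ℝ)
    = 2*(2*((i:ℝ)+(m:ℝ))+3) * 4^(i+1) * (Nat.centralBinom (i+1) : ℝ) * (Nat.centralBinom m : ℝ)
      + 8*(2*((i:ℝ)+(m:ℝ))+3) * 4^i * (Nat.centralBinom i : ℝ) * (Nat.centralBinom (m+1) : ℝ)
      - 64*((i:ℝ)+(m:ℝ)+1) * 4^i * (Nat.centralBinom i : ℝ) * (Nat.centralBinom m : ℝ) := by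
  have h1 : ((i:ℝ)+1) * (Nat.centralBinom (i+1) : ℝ) = 2*(2*(i:ℝ)+1) * (Nat.centralBinom i : ℝ) := by
    exact_mod_cast Nat.succ_mul_centralBinom_succ i
  have h2 : ((m:ℝ)+1) * (Nat.centralBinom (m+1) : ℝ) = 2*(2*(m:ℝ)+1) * (Nat.centralBinom m : ℝ) := by
    exact_mod_cast Nat.succ_mul_centralBinom_succ m
  have hi : ((i:ℝ)+1) ≠ 0 := by positivity
  have hm : ((m:ℝ)+1) ≠ 0 := by positivity
  have e1 : (Nat.centralBinom (i+1) : ℝ) = 2*(2*(i:ℝ)+1) * (Nat.centralBinom i : ℝ) / ((i:ℝ)+1) := by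
    field_simp
    linarith [h1]
  have e2 : (Nat.centralBinom (m+1) : ℝ) = 2*(2*(m:ℝ)+1) * (Nat.centralBinom m : ℝ) / ((m:ℝ)+1) := by
    field_simp
    linarith [h2]
  rw [e1, e2]
  field_simp
  ring

lemma P_rec_core (m : ℕ) (t : ℝ) :
    ((m:ℝ)+2) * ∑ j ∈ range (m+3),
      (4:ℝ)^j * (Nat.centralBinom j : ℝ) * (Nat.centralBinom (m+2-j) : ℝ) * t^(2*j)
    = (2*(m:ℝ)+3)*(8*t^2+2) * (∑ j ∈ range (m+2),
        (4:ℝ)^j * (Nat.centralBinom j : ℝ) * (Nat.centralBinom (m+1-j) : ℝ) * t^(2*j))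
      - ((m:ℝ)+1)*64*t^2 * (∑ j ∈ range (m+1),
        (4:ℝ)^j * (Nat.centralBinom j : ℝ) * (Nat.centralBinom (m-j) : ℝ) * t^(2*j)) := by
  have ha : ∑ j ∈ range (m+3),
      (4:ℝ)^j * (Nat.centralBinom j : ℝ) * (Nat.centralBinom (m+2-j) : ℝ) * t^(2*j)
    = (∑ j ∈ range (m+2),
        (4:ℝ)^(j+1) * (Nat.centralBinom (j+1) : ℝ) * (Nat.centralBinom (m+2-(j+1)) : ℝ) * t^(2*(j+1)))
      + (4:ℝ)^0 * (Nat.centralBinom 0 : ℝ) * (Nat.centralBinom (m+2-0) : ℝ) * t^(2*0) :=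
    Finset.sum_range_succ' _ (m+2)
  have hb : ∑ j ∈ range (m+2),
      (4:ℝ)^(j+1) * (Nat.centralBinom (j+1) : ℝ) * (Nat.centralBinom (m+2-(j+1)) : ℝ) * t^(2*(j+1))
    = (∑ j ∈ range (m+1),
        (4:ℝ)^(j+1) * (Nat.centralBinom (j+1) : ℝ) * (Nat.centralBinom (m+2-(j+1)) : ℝ) * t^(2*(j+1)))
      + (4:ℝ)^(m+1+1) * (Nat.centralBinom (m+1+1) : ℝ) * (Nat.centralBinom (m+2-(m+1+1)) : ℝ) * t^(2*(m+1+1)) :=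
    Finset.sum_range_succ _ (m+1)
  have hc : ∑ j ∈ range (m+2),
      (4:ℝ)^j * (Nat.centralBinom j : ℝ) * (Nat.centralBinom (m+1-j) : ℝ) * t^(2*j)
    = (∑ j ∈ range (m+1),
        (4:ℝ)^(j+1) * (Nat.centralBinom (j+1) : ℝ) * (Nat.centralBinom (m+1-(j+1)) : ℝ) * t^(2*(j+1)))
      + (4:ℝ)^0 * (Nat.centralBinom 0 : ℝ) * (Nat.centralBinom (m+1-0) : ℝ) * t^(2*0) :=
    Finset.sum_range_succ' _ (m+1)
  have hd : ∑ j ∈ range (m+2),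
      (4:ℝ)^j * (Nat.centralBinom j : ℝ) * (Nat.centralBinom (m+1-j) : ℝ) * t^(2*j)
    = (∑ j ∈ range (m+1),
        (4:ℝ)^j * (Nat.centralBinom j : ℝ) * (Nat.centralBinom (m+1-j) : ℝ) * t^(2*j))
      + (4:ℝ)^(m+1) * (Nat.centralBinom (m+1) : ℝ) * (Nat.centralBinom (m+1-(m+1)) : ℝ) * t^(2*(m+1)) :=
    Finset.sum_range_succ _ (m+1)
  have e_per : ∀ j ∈ range (m+1),
      ((m:ℝ)+2) * ((4:ℝ)^(j+1) * (Nat.centralBinom (j+1) : ℝ) * (Nat.centralBinom (m+2-(j+1)) : ℝ) * t^(2*(j+1)))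
      = (2*(2*(m:ℝ)+3)) * ((4:ℝ)^(j+1) * (Nat.centralBinom (j+1) : ℝ) * (Nat.centralBinom (m+1-(j+1)) : ℝ) * t^(2*(j+1)))
        + (8*(2*(m:ℝ)+3)*t^2) * ((4:ℝ)^j * (Nat.centralBinom j : ℝ) * (Nat.centralBinom (m+1-j) : ℝ) * t^(2*j))
        - (64*((m:ℝ)+1)*t^2) * ((4:ℝ)^j * (Nat.centralBinom j : ℝ) * (Nat.centralBinom (m-j) : ℝ) * t^(2*j)) := by
    intro j hj
    have hjm : j ≤ m := by simpa using Nat.lt_succ_iff.mp (mem_range.mp hj)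
    obtain ⟨m', rfl⟩ : ∃ m', m = j + m' := ⟨m - j, by omega⟩
    simp only [show j+m'+2-(j+1) = m'+1 from by omega, show j+m'+1-(j+1) = m' from by omega,
      show j+m'+1-j = m'+1 from by omega, show j+m'-j = m' from by omega]
    push_cast
    linear_combination (key_binom j m') * t^(2*j) * t^2
  have hsum := Finset.sum_congr rfl e_per
  rw [Finset.sum_sub_distrib, Finset.sum_add_distrib, ← Finset.mul_sum, ← Finset.mul_sum,
    ← Finset.mul_sum, ← Finset.mul_sum] at hsum
  have hg' : ((m:ℝ)+2) * ((4:ℝ)^0 * (Nat.centralBinom 0 : ℝ) * (Nat.centralBinom (m+2-0) : ℝ) * t^(2*0))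
      = (2*(2*(m:ℝ)+3)) * ((4:ℝ)^0 * (Nat.centralBinom 0 : ℝ) * (Nat.centralBinom (m+1-0) : ℝ) * t^(2*0)) := by
    have hg : ((m:ℝ)+2) * (Nat.centralBinom (m+2) : ℝ) = 2*(2*(m:ℝ)+3) * (Nat.centralBinom (m+1) : ℝ) := by
      have h := Nat.succ_mul_centralBinom_succ (m+1)
      rw [show m+1+1 = m+2 from rfl] at h
      have h2 : ((m:ℝ)+2) * ((m+2).centralBinom : ℝ)
          = 2*(2*((m:ℝ)+1)+1) * ((m+1).centralBinom : ℝ) := by exact_mod_cast h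
      linear_combination h2
    simp only [show m+2-0 = m+2 from rfl, show m+1-0 = m+1 from rfl, Nat.centralBinom_zero]
    push_cast
    linear_combination hg * t^(2*0)
  have hf : ((m:ℝ)+2) * ((4:ℝ)^(m+1+1) * (Nat.centralBinom (m+1+1) : ℝ) * (Nat.centralBinom (m+2-(m+1+1)) : ℝ) * t^(2*(m+1+1)))
      = (8*(2*(m:ℝ)+3)*t^2) * ((4:ℝ)^(m+1) * (Nat.centralBinom (m+1) : ℝ) * (Nat.centralBinom (m+1-(m+1)) : ℝ) * t^(2*(m+1))) := by
    have hg : ((m:ℝ)+2) * (Nat.centralBinom (m+2) : ℝ) = 2*(2*(m:ℝ)+3) * (Nat.centralBinom (m+1) : ℝ) := by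
      have h := Nat.succ_mul_centralBinom_succ (m+1)
      rw [show m+1+1 = m+2 from rfl] at h
      have h2 : ((m:ℝ)+2) * ((m+2).centralBinom : ℝ)
          = 2*(2*((m:ℝ)+1)+1) * ((m+1).centralBinom : ℝ) := by exact_mod_cast h
      linear_combination h2
    simp only [show m+2-(m+1+1) = 0 from by omega, show m+1-(m+1) = 0 from by omega,
      show m+1+1 = m+2 from rfl]
    rw [Nat.centralBinom_zero]
    push_cast
    linear_combination hg * (4:ℝ)^(m+2) * t^(2*(m+1)) * t^2
  linear_combination ((m:ℝ)+2) * ha + ((m:ℝ)+2) * hb + hsum + hf + hg'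
    - (2*(2*(m:ℝ)+3)) * hc - (8*(2*(m:ℝ)+3)*t^2) * hd

lemma bernsteinF_eq (n : ℕ) (x : ℝ) :
    bernsteinF n x = ∑ k ∈ range (n+1), ((n.choose k : ℝ))^2 * (x^2)^k * ((1-x)^2)^(n-k) := by
  unfold bernsteinF
  refine Finset.sum_congr rfl fun k hk => ?_
  rw [mul_pow, mul_pow, ← pow_mul, ← pow_mul, mul_comm k 2, mul_comm (n-k) 2, pow_mul, pow_mul]

lemma P_rec (m : ℕ) (x : ℝ) :
    ((m:ℝ)+2) * Pfun (m+2) x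
    = (2*(m:ℝ)+3)*(x^2+(1-x)^2) * Pfun (m+1) x - ((m:ℝ)+1)*(2*x-1)^2 * Pfun m x := by
  have hcore := P_rec_core m (x - 1/2)
  simp only [Pfun]
  have h2 : ((4:ℝ)^(m+2)) ≠ 0 := by positivity
  have h1 : ((4:ℝ)^(m+1)) ≠ 0 := by positivity
  have h0 : ((4:ℝ)^m) ≠ 0 := by positivity
  have r1 : ((4:ℝ)^(m+1))⁻¹ = 4 * ((4:ℝ)^(m+2))⁻¹ := by
    rw [show ((4:ℝ)^(m+2)) = 4 * (4:ℝ)^(m+1) by ring]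
    rw [mul_inv]
    ring
  have r0 : ((4:ℝ)^m)⁻¹ = 16 * ((4:ℝ)^(m+2))⁻¹ := by
    rw [show ((4:ℝ)^(m+2)) = 16 * (4:ℝ)^m by ring]
    rw [mul_inv]
    ring
  rw [show m+2+1 = m+3 from rfl, show m+1+1 = m+2 from rfl]
  linear_combination ((4:ℝ)^(m+2))⁻¹ * hcore
    - (2*(m:ℝ)+3)*(x^2+(1-x)^2)*(∑ j ∈ range (m+2),
        (4:ℝ)^j * (Nat.centralBinom j : ℝ) * (Nat.centralBinom (m+1-j) : ℝ) * (x - 1/2)^(2*j)) * r1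
    + ((m:ℝ)+1)*(2*x-1)^2*(∑ j ∈ range (m+1),
        (4:ℝ)^j * (Nat.centralBinom j : ℝ) * (Nat.centralBinom (m-j) : ℝ) * (x - 1/2)^(2*j)) * r0

lemma F_eq_P : ∀ n : ℕ, ∀ x : ℝ, bernsteinF n x = Pfun n x := by
  intro n
  induction n using Nat.strong_induction_on with
  | _ n ih =>
    match n with
    | 0 =>
      intro x
      simp [bernsteinF, Pfun]
    | 1 =>
      intro x
      simp [bernsteinF, Pfun, Finset.sum_range_succ, show Nat.centralBinom 1 = 2 from rfl]
      ring
    | (m+2) =>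
      intro x
      have hF := sumsq_rec (m+1) (by omega) (x^2) ((1-x)^2)
      simp only [show m+1+1 = m+2 from rfl, show m+1+2 = m+3 from rfl,
        show m+1-1 = m from rfl] at hF
      rw [← bernsteinF_eq (m+2) x] at hF
      rw [show (∑ k ∈ range (m+2), (((m+1).choose k : ℝ))^2 * (x^2)^k * ((1-x)^2)^(m+1-k))
        = bernsteinF (m+1) x from (bernsteinF_eq (m+1) x).symm] at hF
      rw [show (∑ k ∈ range (m+1), ((m.choose k : ℝ))^2 * (x^2)^k * ((1-x)^2)^(m-k))
        = bernsteinF m x from (bernsteinF_eq m x).symm] at hF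
      have hP := P_rec m x
      have i1 := ih (m+1) (by omega) x
      have i0 := ih m (by omega) x
      have hne : ((m:ℝ)+2) ≠ 0 := by positivity
      refine mul_left_cancel₀ hne ?_
      push_cast at hF
      linear_combination hF - hP + (2*(m:ℝ)+3)*(x^2+(1-x)^2)*i1 - ((m:ℝ)+1)*(2*x-1)^2*i0

theorem stmt11 (n : ℕ) (hn : 1 ≤ n) (x : ℝ) :
    deriv (bernsteinF n) x =
      4 * (2 * x - 1) * ((4 : ℝ) ^ n)⁻¹ *
        ∑ j ∈ Finset.range n,
          4 ^ j * ((j : ℝ) + 1) * ((2 * j + 2).choose (j + 1) : ℝ) *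
            ((2 * n - 2 * j - 2).choose (n - j - 1) : ℝ) * (x - 1 / 2) ^ (2 * j) := by
  have hfun : bernsteinF n = fun y => Pfun n y := funext fun y => F_eq_P n y
  rw [hfun]
  have hD : HasDerivAt (fun y => Pfun n y)
      (((4:ℝ)^n)⁻¹ * ∑ j ∈ range (n+1),
        (4:ℝ)^j * (Nat.centralBinom j : ℝ) * (Nat.centralBinom (n-j) : ℝ) *
          (((2*j : ℕ) : ℝ) * (x - 1/2)^(2*j-1) * 1)) x := by
    simp only [Pfun]
    refine HasDerivAt.const_mul _ ?_
    refine HasDerivAt.fun_sum fun j hj => ?_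
    exact (((hasDerivAt_id x).sub_const (1/2)).pow (2*j)).const_mul _
  rw [hD.deriv]
  rw [Finset.sum_range_succ']
  simp only [Nat.mul_zero, Nat.cast_zero, zero_mul, mul_zero, mul_one, add_zero,
    Nat.cast_ofNat, pow_zero, one_mul, zero_add]
  rw [show 4 * (2*x-1) * ((4:ℝ)^n)⁻¹ *
      (∑ j ∈ Finset.range n, 4^j * ((j:ℝ)+1) * (((2*j+2).choose (j+1) : ℕ) : ℝ) *
        (((2*n-2*j-2).choose (n-j-1) : ℕ) : ℝ) * (x - 1/2)^(2*j))
    = ((4:ℝ)^n)⁻¹ * (∑ j ∈ Finset.range n, 4*(2*x-1) * (4^j * ((j:ℝ)+1) *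
        (((2*j+2).choose (j+1) : ℕ) : ℝ) * (((2*n-2*j-2).choose (n-j-1) : ℕ) : ℝ) *
        (x - 1/2)^(2*j))) from by rw [← Finset.mul_sum]; ring]
  congr 1
  refine Finset.sum_congr rfl fun j hj => ?_
  have hjn : j < n := mem_range.mp hj
  have hc1 : ((2*j+2).choose (j+1)) = Nat.centralBinom (j+1) := by
    rw [show 2*j+2 = 2*(j+1) by ring]
    rfl
  have hc2 : ((2*n-2*j-2).choose (n-j-1)) = Nat.centralBinom (n-j-1) := by
    rw [show 2*n-2*j-2 = 2*(n-j-1) by omega]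
    rfl
  have hnj : n - (j+1) = n - j - 1 := rfl
  rw [hc1, hc2, hnj, show 2*(j+1)-1 = 2*j+1 from by omega]
  push_cast
  ring
end
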